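/- arXiv:0709.0975 — 8 statements merged into one kernel-verified Lean document; each statement's English description precedes it below -/
import Mathlib

section
/- Let m₁,…,mₙ be positive integers with m_{i+1} dividing m_i for 1 ≤ i < n, and let 𝓜 be the right ideal of Matₙ(ℤ) generated by diag(m₁,…,mₙ). If A, B ∈ Matₙ(ℤ) satisfy AB ≡ Idₙ (mod 𝓜), then there exists P ∈ GLₙ(ℤ) such that AP ≡ diag(1,…,1,p) (mod 𝓜), where 0 ≤ p ≤ ⌊mₙ/2⌋ and gcd(p, mₙ) = 1 (with p = 0 if mₙ = 1). -/
namespace Stmt0Aux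

open Matrix

lemma mem_iff {N : Type*} [Fintype N] [DecidableEq N] (m : N → ℤ) (C : Matrix N N ℤ) :
    (∃ X : Matrix N N ℤ, C = Matrix.diagonal m * X) ↔ ∀ i j, m i ∣ C i j := by
  constructor
  · rintro ⟨X, rfl⟩ i j
    rw [Matrix.diagonal_mul]
    exact dvd_mul_right _ _
  · intro h
    refine ⟨Matrix.of fun i j => C i j / m i, ?_⟩
    ext i j
    rw [Matrix.diagonal_mul]
    exact (Int.mul_ediv_cancel' (h i j)).symm

lemma sum_mul_mul {K : ℕ} (v : Fin K → ℤ) (X Y : Matrix (Fin K) (Fin K) ℤ) (j : Fin K) :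
    ∑ i, v i * (X * Y) i j = ∑ l, (∑ i, v i * X i l) * Y l j := by
  simp only [Matrix.mul_apply, Finset.mul_sum, Finset.sum_mul, mul_assoc]
  exact Finset.sum_comm

def splitOne (k : ℕ) : Fin (k + 1) ≃ (Fin 1 ⊕ Fin k) where
  toFun := Fin.cases (Sum.inl 0) Sum.inr
  invFun := Sum.elim (fun _ => 0) Fin.succ
  left_inv i := by
    induction i using Fin.cases <;> simp
  right_inv x := by
    rcases x with a | i
    · simp [Subsingleton.elim a 0]
    · simp

def oneBlock {k : ℕ} (N : Matrix (Fin k) (Fin k) ℤ) :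
    Matrix (Fin (k + 1)) (Fin (k + 1)) ℤ :=
  (Matrix.fromBlocks 1 0 0 N).submatrix (splitOne k) (splitOne k)

@[simp] lemma oneBlock_zero_zero {k : ℕ} (N : Matrix (Fin k) (Fin k) ℤ) :
    oneBlock N 0 0 = 1 := by
  simp [oneBlock, splitOne]

@[simp] lemma oneBlock_zero_succ {k : ℕ} (N : Matrix (Fin k) (Fin k) ℤ) (j : Fin k) :
    oneBlock N 0 j.succ = 0 := by
  simp [oneBlock, splitOne]

@[simp] lemma oneBlock_succ_zero {k : ℕ} (N : Matrix (Fin k) (Fin k) ℤ) (i : Fin k) :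
    oneBlock N i.succ 0 = 0 := by
  simp [oneBlock, splitOne]

@[simp] lemma oneBlock_succ_succ {k : ℕ} (N : Matrix (Fin k) (Fin k) ℤ) (i j : Fin k) :
    oneBlock N i.succ j.succ = N i j := by
  simp [oneBlock, splitOne]

lemma det_oneBlock {k : ℕ} (N : Matrix (Fin k) (Fin k) ℤ) : (oneBlock N).det = N.det := by
  rw [oneBlock, Matrix.det_submatrix_equiv_self, Matrix.det_fromBlocks_zero₂₁,
    Matrix.det_one, one_mul]

lemma vec_oneBlock_zero {k : ℕ} (N : Matrix (Fin k) (Fin k) ℤ) (v : Fin (k + 1) → ℤ) :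
    ∑ i, v i * oneBlock N i 0 = v 0 := by
  rw [Fin.sum_univ_succ]; simp

lemma vec_oneBlock_succ {k : ℕ} (N : Matrix (Fin k) (Fin k) ℤ) (v : Fin (k + 1) → ℤ)
    (j : Fin k) : ∑ i, v i * oneBlock N i j.succ = ∑ l, v l.succ * N l j := by
  rw [Fin.sum_univ_succ]; simp




def splitTwo (k : ℕ) : Fin (k + 2) ≃ (Fin 2 ⊕ Fin k) where
  toFun := Fin.cases (Sum.inl 0) (Fin.cases (Sum.inl 1) Sum.inr)
  invFun := Sum.elim (fun a => Fin.cases 0 (fun _ => Fin.succ 0) a) (fun i => i.succ.succ)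
  left_inv i := by
    induction i using Fin.cases with
    | zero => simp
    | succ i =>
      induction i using Fin.cases with
      | zero => simp; rfl
      | succ i => simp
  right_inv x := by
    rcases x with a | i
    · induction a using Fin.cases with
      | zero => simp
      | succ a =>
        have : a = 0 := Subsingleton.elim a 0
        subst this
        simp
        rfl
    · simp

@[simp] lemma splitTwo_zero (k : ℕ) : splitTwo k 0 = Sum.inl 0 := by
  simp only [splitTwo, Equiv.coe_fn_mk, Fin.cases_zero]

@[simp] lemma splitTwo_one (k : ℕ) : splitTwo k 1 = Sum.inl 1 := by
  rw [show (1 : Fin (k + 2)) = Fin.succ 0 from (Fin.succ_zero_eq_one).symm]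
  simp only [splitTwo, Equiv.coe_fn_mk, Fin.cases_succ, Fin.cases_zero]

@[simp] lemma splitTwo_succ_succ (k : ℕ) (i : Fin k) :
    splitTwo k i.succ.succ = Sum.inr i := by
  simp only [splitTwo, Equiv.coe_fn_mk, Fin.cases_succ]

def twoBlock {k : ℕ} (M : Matrix (Fin 2) (Fin 2) ℤ) :
    Matrix (Fin (k + 2)) (Fin (k + 2)) ℤ :=
  (Matrix.fromBlocks M 0 0 1).submatrix (splitTwo k) (splitTwo k)

@[simp] lemma twoBlock_00 {k : ℕ} (M : Matrix (Fin 2) (Fin 2) ℤ) :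
    twoBlock (k := k) M 0 0 = M 0 0 := by
  simp [twoBlock]

@[simp] lemma twoBlock_01 {k : ℕ} (M : Matrix (Fin 2) (Fin 2) ℤ) :
    twoBlock (k := k) M 0 1 = M 0 1 := by
  simp [twoBlock]

@[simp] lemma twoBlock_0s {k : ℕ} (M : Matrix (Fin 2) (Fin 2) ℤ) (j : Fin k) :
    twoBlock (k := k) M 0 j.succ.succ = 0 := by simp [twoBlock]

@[simp] lemma twoBlock_10 {k : ℕ} (M : Matrix (Fin 2) (Fin 2) ℤ) :
    twoBlock (k := k) M 1 0 = M 1 0 := by simp [twoBlock]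

@[simp] lemma twoBlock_11 {k : ℕ} (M : Matrix (Fin 2) (Fin 2) ℤ) :
    twoBlock (k := k) M 1 1 = M 1 1 := by simp [twoBlock]

@[simp] lemma twoBlock_1s {k : ℕ} (M : Matrix (Fin 2) (Fin 2) ℤ) (j : Fin k) :
    twoBlock (k := k) M 1 j.succ.succ = 0 := by simp [twoBlock]

@[simp] lemma twoBlock_s0 {k : ℕ} (M : Matrix (Fin 2) (Fin 2) ℤ) (i : Fin k) :
    twoBlock (k := k) M i.succ.succ 0 = 0 := by simp [twoBlock]

@[simp] lemma twoBlock_s1 {k : ℕ} (M : Matrix (Fin 2) (Fin 2) ℤ) (i : Fin k) :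
    twoBlock (k := k) M i.succ.succ 1 = 0 := by simp [twoBlock]

@[simp] lemma twoBlock_ss {k : ℕ} (M : Matrix (Fin 2) (Fin 2) ℤ) (i j : Fin k) :
    twoBlock (k := k) M i.succ.succ j.succ.succ = if i = j then 1 else 0 := by
  simp [twoBlock, Matrix.one_apply]

lemma det_twoBlock {k : ℕ} (M : Matrix (Fin 2) (Fin 2) ℤ) :
    (twoBlock (k := k) M).det = M.det := by
  rw [twoBlock, Matrix.det_submatrix_equiv_self, Matrix.det_fromBlocks_zero₂₁,
    Matrix.det_one, mul_one]

lemma vec_twoBlock_zero {k : ℕ} (M : Matrix (Fin 2) (Fin 2) ℤ) (v : Fin (k + 2) → ℤ) :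
    ∑ i, v i * twoBlock (k := k) M i 0 = v 0 * M 0 0 + v 1 * M 1 0 := by
  rw [Fin.sum_univ_succ, Fin.sum_univ_succ]; simp [add_assoc]

lemma vec_twoBlock_one {k : ℕ} (M : Matrix (Fin 2) (Fin 2) ℤ) (v : Fin (k + 2) → ℤ) :
    ∑ i, v i * twoBlock (k := k) M i 1 = v 0 * M 0 1 + v 1 * M 1 1 := by
  rw [Fin.sum_univ_succ, Fin.sum_univ_succ]; simp [add_assoc]

lemma vec_twoBlock_succ {k : ℕ} (M : Matrix (Fin 2) (Fin 2) ℤ) (v : Fin (k + 2) → ℤ)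
    (j : Fin k) : ∑ i, v i * twoBlock (k := k) M i j.succ.succ = v j.succ.succ := by
  rw [Fin.sum_univ_succ, Fin.sum_univ_succ]
  simp [mul_ite, Finset.sum_ite_eq']



lemma lemA (k : ℕ) (v : Fin (k + 1) → ℤ) :
    ∃ (U : Matrix (Fin (k + 1)) (Fin (k + 1)) ℤ) (g : ℤ) (d : Fin (k + 1) → ℤ),
      IsUnit U.det ∧ (∀ j, ∑ i, v i * U i j = if j = 0 then g else 0) ∧ ∀ i, v i = g * d i := by
  induction k with
  | zero =>
    refine ⟨1, v 0, fun _ => 1, by simp, ?_, ?_⟩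
    · intro j
      have hj : j = 0 := Fin.fin_one_eq_zero j
      subst hj
      simp [Fin.sum_univ_one]
    · intro i
      have hi : i = 0 := Fin.fin_one_eq_zero i
      subst hi
      simp
  | succ k ih =>
    obtain ⟨U', g', d', hU'det, hU', hd'⟩ := ih (fun i => v i.succ)
    by_cases hG : (Int.gcd (v 0) g' : ℤ) = 0
    · obtain ⟨h1, h2⟩ := Int.gcd_eq_zero_iff.mp (by exact_mod_cast hG)
      refine ⟨oneBlock U', 0, fun _ => 0, by rw [det_oneBlock]; exact hU'det, ?_, ?_⟩
      · intro j
        rcases Fin.eq_zero_or_eq_succ j with rfl | ⟨j', rfl⟩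
        · rw [vec_oneBlock_zero]; simp [h1]
        · rw [vec_oneBlock_succ]
          have : ∀ l : Fin (k + 1), v l.succ = 0 := by
            intro l; rw [hd' l, h2, zero_mul]
          simp [this, Fin.succ_ne_zero]
      · intro i
        rcases Fin.eq_zero_or_eq_succ i with rfl | ⟨i', rfl⟩
        · simp [h1]
        · rw [hd' i', h2]; ring
    · set G : ℤ := (Int.gcd (v 0) g' : ℤ) with hGdef
      set a : ℤ := Int.gcdA (v 0) g' with hadef
      set b : ℤ := Int.gcdB (v 0) g' with hbdef
      have hbez : G = v 0 * a + g' * b := Int.gcd_eq_gcd_ab (v 0) g'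
      have hdvd0 : G ∣ v 0 := Int.gcd_dvd_left _ _
      have hdvdg : G ∣ g' := Int.gcd_dvd_right _ _
      set α : ℤ := v 0 / G with hαdef
      set β : ℤ := g' / G with hβdef
      have hα : G * α = v 0 := Int.mul_ediv_cancel' hdvd0
      have hβ : G * β = g' := Int.mul_ediv_cancel' hdvdg
      have hdet2 : (!![a, -β; b, α] : Matrix (Fin 2) (Fin 2) ℤ).det = 1 := by
        rw [Matrix.det_fin_two_of]
        apply mul_left_cancel₀ hG
        calc G * (a * α - -β * b) = a * (G * α) + b * (G * β) := by ring
          _ = a * v 0 + b * g' := by rw [hα, hβ]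
          _ = G * 1 := by rw [mul_one, hbez]; ring
      refine ⟨oneBlock U' * twoBlock !![a, -β; b, α], G, Fin.cons α (fun i => β * d' i),
        ?_, ?_, ?_⟩
      · rw [Matrix.det_mul, det_oneBlock, det_twoBlock, hdet2, mul_one]
        exact hU'det
      · intro j
        rw [sum_mul_mul]
        have hw : ∀ l, (∑ i, v i * oneBlock U' i l)
            = (Fin.cons (v 0) (fun l' : Fin (k + 1) => if l' = 0 then g' else 0) : Fin (k + 2) → ℤ) l := by
          intro l
          rcases Fin.eq_zero_or_eq_succ l with rfl | ⟨l', rfl⟩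
          · rw [vec_oneBlock_zero]; simp
          · rw [vec_oneBlock_succ]
            simp [hU' l']
        rw [Finset.sum_congr rfl (fun l _ => by rw [hw l])]
        rcases Fin.eq_zero_or_eq_succ j with rfl | ⟨j', rfl⟩
        · rw [vec_twoBlock_zero]
          simp only [Fin.cons_zero, Fin.cons_succ, if_pos rfl]
          rw [show (1 : Fin (k + 2)) = Fin.succ 0 from (Fin.succ_zero_eq_one).symm]
          simp only [Fin.cons_succ, if_pos rfl]
          rw [hbez]
          simp [Matrix.cons_val_zero, Matrix.cons_val_one]
        · rcases Fin.eq_zero_or_eq_succ j' with rfl | ⟨j'', rfl⟩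
          · rw [Fin.succ_zero_eq_one, vec_twoBlock_one]
            have hc1 : (Fin.cons (v 0) (fun l' : Fin (k + 1) => if l' = 0 then g' else 0) :
                Fin (k + 2) → ℤ) 1 = g' := by
              rw [← Fin.succ_zero_eq_one, Fin.cons_succ]
              simp
            have hm01 : (!![a, -β; b, α] : Matrix (Fin 2) (Fin 2) ℤ) 0 1 = -β := by simp
            have hm11 : (!![a, -β; b, α] : Matrix (Fin 2) (Fin 2) ℤ) 1 1 = α := by simp
            rw [Fin.cons_zero, hc1, hm01, hm11]
            have hne : (1 : Fin (k + 2)) ≠ 0 := by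
              rw [← Fin.succ_zero_eq_one]; exact Fin.succ_ne_zero 0
            rw [if_neg hne]
            apply mul_left_cancel₀ hG
            calc G * (v 0 * -β + g' * α) = -(v 0 * (G * β)) + g' * (G * α) := by ring
              _ = -(v 0 * g') + g' * v 0 := by rw [hα, hβ]
              _ = G * 0 := by ring
          · rw [vec_twoBlock_succ]
            simp [Fin.succ_ne_zero]
      · intro i
        rcases Fin.eq_zero_or_eq_succ i with rfl | ⟨i', rfl⟩
        · rw [Fin.cons_zero]; exact hα.symm
        · rw [Fin.cons_succ, hd' i', ← hβ]; ring

lemma L1 (k : ℕ) (m₀ : ℤ) (v : Fin (k + 2) → ℤ)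
    (h : ∃ c : Fin (k + 2) → ℤ, m₀ ∣ (∑ j, v j * c j) - 1) :
    ∃ P : Matrix (Fin (k + 2)) (Fin (k + 2)) ℤ, IsUnit P.det ∧
      ∀ j, m₀ ∣ (∑ i, v i * P i j) - (if j = 0 then 1 else 0) := by
  obtain ⟨c, hc⟩ := h
  obtain ⟨U, g, d, hUdet, hU, hd⟩ := lemA (k + 1) v
  set u : ℤ := ∑ i, d i * c i with hu
  have hgu : m₀ ∣ g * u - 1 := by
    have heq : (∑ j, v j * c j) = g * u := by
      rw [hu, Finset.mul_sum]
      exact Finset.sum_congr rfl fun i _ => by rw [hd i]; ring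
    rwa [heq] at hc
  obtain ⟨q, hq⟩ := hgu
  have hdet2 : (!![u, m₀; q, g] : Matrix (Fin 2) (Fin 2) ℤ).det = 1 := by
    rw [Matrix.det_fin_two_of]; linarith [hq]
  refine ⟨U * twoBlock !![u, m₀; q, g], ?_, ?_⟩
  · rw [Matrix.det_mul, det_twoBlock, hdet2, mul_one]
    exact hUdet
  · intro j
    rw [sum_mul_mul]
    rw [Finset.sum_congr rfl (fun l _ => by rw [hU l])]
    have hsum : ∀ j' : Fin (k + 2),
        (∑ l, (if l = 0 then g else 0) * twoBlock (k := k) !![u, m₀; q, g] l j')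
          = g * twoBlock (k := k) !![u, m₀; q, g] 0 j' := by
      intro j'
      rw [Finset.sum_congr rfl (fun l _ => by
        rw [ite_mul, zero_mul] :
          ∀ l ∈ Finset.univ, (if l = 0 then g else 0) * twoBlock (k := k) !![u, m₀; q, g] l j'
            = if l = 0 then g * twoBlock (k := k) !![u, m₀; q, g] l j' else 0)]
      rw [Finset.sum_ite_eq' Finset.univ 0
        (fun l => g * twoBlock (k := k) !![u, m₀; q, g] l j')]
      simp
    rw [hsum]
    rcases Fin.eq_zero_or_eq_succ j with rfl | ⟨j', rfl⟩
    · rw [twoBlock_00, if_pos rfl]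
      refine ⟨q, ?_⟩
      rw [← hq]
      simp [mul_comm]
    · rcases Fin.eq_zero_or_eq_succ j' with rfl | ⟨j'', rfl⟩
      · rw [Fin.succ_zero_eq_one, twoBlock_01]
        have hne : (1 : Fin (k + 2)) ≠ 0 := by
          rw [← Fin.succ_zero_eq_one]; exact Fin.succ_ne_zero 0
        rw [if_neg hne, sub_zero]
        have : (!![u, m₀; q, g] : Matrix (Fin 2) (Fin 2) ℤ) 0 1 = m₀ := by simp
        rw [this]
        exact dvd_mul_left m₀ g
      · rw [twoBlock_0s, if_neg (Fin.succ_ne_zero j''.succ), mul_zero, sub_zero]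
        exact dvd_zero _


lemma gcd_congr {x y n : ℤ} (h : n ∣ x - y) : Int.gcd x n = Int.gcd y n := by
  have key : ∀ a b : ℤ, n ∣ a - b → (Int.gcd a n : ℤ) ∣ (Int.gcd b n : ℤ) := by
    intro a b hab
    refine Int.dvd_coe_gcd ?_ (Int.gcd_dvd_right _ _)
    have h2 : (Int.gcd a n : ℤ) ∣ a - (a - b) := dvd_sub (Int.gcd_dvd_left _ _)
      ((Int.gcd_dvd_right _ _).trans hab)
    simpa using h2
  refine Nat.dvd_antisymm (Int.natCast_dvd_natCast.mp (key x y h))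
    (Int.natCast_dvd_natCast.mp (key y x ?_))
  rw [show y - x = -(x - y) by ring]
  exact dvd_neg.mpr h

lemma chain {n : ℕ} (m : Fin (n + 1) → ℤ) (hdvd : ∀ i : Fin n, m i.succ ∣ m i.castSucc) :
    ∀ i, m i ∣ m 0 := by
  intro i
  induction i using Fin.induction with
  | zero => exact dvd_rfl
  | succ i ihi => exact (hdvd i).trans ihi

end Stmt0Aux


open Stmt0Aux

/-- Lemma on integral matrices: if `A * B ≡ 1` modulo the right ideal `𝓜` generated by
`diag(m₁, …, mₙ)` (where `mᵢ₊₁ ∣ mᵢ`), then `A` can be right-multiplied by an invertible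
integral matrix `P` so that `A * P ≡ diag(1, …, 1, p)` mod `𝓜`, with
`0 ≤ p ≤ ⌊mₙ/2⌋` and `gcd(p, mₙ) = 1` (so `p = 0` if `mₙ = 1`). -/
theorem stmt0 (n : ℕ) (m : Fin (n + 1) → ℤ) (hm : ∀ i, 0 < m i)
    (hdvd : ∀ i : Fin n, m i.succ ∣ m i.castSucc)
    (A B : Matrix (Fin (n + 1)) (Fin (n + 1)) ℤ)
    (hAB : ∃ X : Matrix (Fin (n + 1)) (Fin (n + 1)) ℤ,
      A * B - 1 = Matrix.diagonal m * X) :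
    ∃ (P : Matrix (Fin (n + 1)) (Fin (n + 1)) ℤ) (p : ℤ),
      IsUnit P.det ∧ 0 ≤ p ∧ p ≤ m (Fin.last n) / 2 ∧
      Int.gcd p (m (Fin.last n)) = 1 ∧ (m (Fin.last n) = 1 → p = 0) ∧
      ∃ X : Matrix (Fin (n + 1)) (Fin (n + 1)) ℤ,
        A * P - Matrix.diagonal (fun i => if i = Fin.last n then p else 1) =
          Matrix.diagonal m * X := by
  induction n with
  | zero =>
    obtain ⟨X, hX⟩ := hAB
    have hd : ∀ i j, m i ∣ (A * B - 1) i j := (mem_iff m _).mp ⟨X, hX⟩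
    have h00 : m 0 ∣ A 0 0 * B 0 0 - 1 := by
      have := hd 0 0
      simpa [Matrix.mul_apply, Fin.sum_univ_one, Matrix.sub_apply, Matrix.one_apply] using this
    have hM : 0 < m 0 := hm 0
    have hgcdA : Int.gcd (A 0 0) (m 0) = 1 := by
      have h1 : (Int.gcd (A 0 0) (m 0) : ℤ) ∣ 1 := by
        have d1 : (Int.gcd (A 0 0) (m 0) : ℤ) ∣ A 0 0 * B 0 0 := (Int.gcd_dvd_left _ _).mul_right _
        have d2 : (Int.gcd (A 0 0) (m 0) : ℤ) ∣ A 0 0 * B 0 0 - 1 := (Int.gcd_dvd_right _ _).trans h00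
        simpa using dvd_sub d1 d2
      have h2 : Int.gcd (A 0 0) (m 0) ∣ 1 := by exact_mod_cast h1
      exact Nat.dvd_one.mp h2
    have hlast : Fin.last 0 = (0 : Fin 1) := Fin.fin_one_eq_zero _
    have h0r : 0 ≤ A 0 0 % m 0 := Int.emod_nonneg _ (ne_of_gt hM)
    have hrM : A 0 0 % m 0 < m 0 := Int.emod_lt_of_pos _ hM
    have hsub : m 0 ∣ A 0 0 - A 0 0 % m 0 := by
      rw [Int.emod_def]
      exact ⟨A 0 0 / m 0, by ring⟩
    rcases le_or_gt (A 0 0 % m 0) (m 0 / 2) with hle | hlt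
    · refine ⟨1, A 0 0 % m 0, by simp, h0r, ?_, ?_, ?_, ?_⟩
      · rw [hlast]; exact hle
      · rw [hlast]
        rw [gcd_congr (x := A 0 0 % m 0) (y := A 0 0)
          (by rw [show A 0 0 % m 0 - A 0 0 = -(A 0 0 - A 0 0 % m 0) by ring]
              exact dvd_neg.mpr hsub)]
        exact hgcdA
      · intro h1
        rw [hlast] at h1
        rw [h1, Int.emod_one]
      · apply (mem_iff m _).mpr
        intro i j
        have hi : i = 0 := Fin.fin_one_eq_zero i
        have hj : j = 0 := Fin.fin_one_eq_zero j
        subst hi; subst hj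
        rw [Matrix.sub_apply, Matrix.mul_one, Matrix.diagonal_apply_eq, if_pos hlast.symm]
        exact hsub
    · refine ⟨Matrix.of fun _ _ => (-1 : ℤ), m 0 - A 0 0 % m 0, ?_, by omega, ?_, ?_, ?_, ?_⟩
      · rw [Matrix.det_fin_one]
        exact isUnit_one.neg
      · rw [hlast]; omega
      · rw [hlast]
        have hcong : m 0 ∣ (m 0 - A 0 0 % m 0) - (-(A 0 0)) := by
          obtain ⟨t, ht⟩ := hsub
          exact ⟨1 + t, by linarith⟩
        rw [gcd_congr hcong, Int.neg_gcd]
        exact hgcdA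
      · intro h1
        rw [hlast] at h1
        omega
      · apply (mem_iff m _).mpr
        intro i j
        have hi : i = 0 := Fin.fin_one_eq_zero i
        have hj : j = 0 := Fin.fin_one_eq_zero j
        subst hi; subst hj
        rw [Matrix.sub_apply, Matrix.mul_apply, Fin.sum_univ_one, Matrix.diagonal_apply_eq,
          if_pos hlast.symm]
        obtain ⟨t, ht⟩ := hsub
        refine ⟨-t - 1, ?_⟩
        simp only [Matrix.of_apply]
        linarith
  | succ n ih =>
    obtain ⟨X0, hX0⟩ := hAB
    have hABd : ∀ i j, m i ∣ (A * B - 1) i j := (mem_iff m _).mp ⟨X0, hX0⟩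
    have hABd' : ∀ i j, m i ∣ (A * B) i j - (if i = j then 1 else 0) := by
      intro i j
      have := hABd i j
      simpa [Matrix.sub_apply, Matrix.one_apply] using this
    have hchain : ∀ i, m i ∣ m 0 := chain m hdvd
    obtain ⟨P1, hP1det, hP1⟩ := L1 n (m 0) (fun j => A 0 j)
      ⟨fun j => B j 0, by
        have := hABd' 0 0
        simpa [Matrix.mul_apply] using this⟩
    set A' := A * P1 with hA'def
    have hA'row0 : ∀ j, m 0 ∣ A' 0 j - (if j = 0 then 1 else 0) := by
      intro j
      have := hP1 j
      rw [hA'def, Matrix.mul_apply]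
      exact this
    set B' := P1⁻¹ * B with hB'def
    have hA'B' : A' * B' = A * B := by
      rw [hA'def, hB'def, Matrix.mul_assoc, ← Matrix.mul_assoc P1,
        Matrix.mul_nonsing_inv _ hP1det, Matrix.one_mul]
    have hA'B'd : ∀ i j, m i ∣ (A' * B') i j - (if i = j then 1 else 0) := by
      rw [hA'B']; exact hABd'
    have hw : ∀ i, m i ∣ (∑ j, A' i j * B' j 0) - (if i = 0 then 1 else 0) := by
      intro i
      have := hA'B'd i 0
      rwa [Matrix.mul_apply] at this
    have hw0 : m 0 ∣ B' 0 0 - 1 := by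
      have h1 := hw 0
      rw [if_pos rfl] at h1
      have h2 : m 0 ∣ (∑ j, A' 0 j * B' j 0) - B' 0 0 := by
        have heq : (∑ j, A' 0 j * B' j 0) - B' 0 0
            = ∑ j, (A' 0 j - (if j = 0 then 1 else 0)) * B' j 0 := by
          simp only [sub_mul, ite_mul, one_mul, zero_mul]
          rw [Finset.sum_sub_distrib, Finset.sum_ite_eq' Finset.univ 0 (fun j => B' j 0)]
          simp
        rw [heq]
        exact Finset.dvd_sum fun j _ => (hA'row0 j).mul_right _
      have h3 := dvd_sub h1 h2
      have heq2 : (∑ j, A' 0 j * B' j 0) - 1 - ((∑ j, A' 0 j * B' j 0) - B' 0 0)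
          = B' 0 0 - 1 := by ring
      rwa [heq2] at h3
    set P2 : Matrix (Fin (n + 2)) (Fin (n + 2)) ℤ :=
      Matrix.of (Fin.cons (Fin.cons 1 0)
        (fun i => Fin.cons (B' i.succ 0) (fun j => if i = j then 1 else 0))) with hP2def
    have hP2_00 : P2 0 0 = 1 := by simp [hP2def]
    have hP2_0s : ∀ j : Fin (n + 1), P2 0 j.succ = 0 := by
      intro j; simp [hP2def]
    have hP2_s0 : ∀ i : Fin (n + 1), P2 i.succ 0 = B' i.succ 0 := by
      intro i; simp [hP2def]
    have hP2_ss : ∀ i j : Fin (n + 1), P2 i.succ j.succ = if i = j then 1 else 0 := by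
      intro i j; simp [hP2def]
    have hP2det : IsUnit P2.det := by
      have hdet : P2.det = 1 := by
        rw [Matrix.det_of_lowerTriangular P2 ?_]
        · rw [Fin.prod_univ_succ, hP2_00, one_mul]
          apply Finset.prod_eq_one
          intro i _
          rw [hP2_ss, if_pos rfl]
        · intro i j hij
          have hij' : i < j := hij
          rcases Fin.eq_zero_or_eq_succ j with rfl | ⟨j', rfl⟩
          · exact absurd hij' (Fin.not_lt_zero i)
          · rcases Fin.eq_zero_or_eq_succ i with rfl | ⟨i', rfl⟩
            · exact hP2_0s j'
            · rw [hP2_ss]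
              have : i' ≠ j' := by
                intro hcon
                subst hcon
                exact lt_irrefl _ hij'
              rw [if_neg this]
      rw [hdet]; exact isUnit_one
    set A'' := A' * P2 with hA''def
    have hA''col0 : ∀ i, m i ∣ A'' i 0 - (if i = 0 then 1 else 0) := by
      intro i
      have hexp : A'' i 0 = A' i 0 + ∑ j : Fin (n + 1), A' i j.succ * B' j.succ 0 := by
        rw [hA''def, Matrix.mul_apply, Fin.sum_univ_succ, hP2_00, mul_one]
        congr 1
      have hsum : (∑ j, A' i j * B' j 0)
          = A' i 0 * B' 0 0 + ∑ j : Fin (n + 1), A' i j.succ * B' j.succ 0 :=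
        Fin.sum_univ_succ _
      have key : A'' i 0 - (if i = 0 then 1 else 0)
          = ((∑ j, A' i j * B' j 0) - (if i = 0 then 1 else 0)) + A' i 0 * (1 - B' 0 0) := by
        rw [hexp, hsum]; ring
      rw [key]
      refine dvd_add (hw i) (Dvd.dvd.mul_left ?_ _)
      refine (hchain i).trans ?_
      rw [show (1 : ℤ) - B' 0 0 = -(B' 0 0 - 1) by ring]
      exact dvd_neg.mpr hw0
    have hA''succ : ∀ i (j : Fin (n + 1)), A'' i j.succ = A' i j.succ := by
      intro i j
      rw [hA''def, Matrix.mul_apply, Fin.sum_univ_succ, hP2_0s, mul_zero, zero_add]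
      rw [Finset.sum_congr rfl (fun l _ => by rw [hP2_ss l j])]
      simp [mul_ite, Finset.sum_ite_eq']
    set B'' := P2⁻¹ * B' with hB''def
    have hA''B'' : A'' * B'' = A * B := by
      rw [hA''def, hB''def, Matrix.mul_assoc, ← Matrix.mul_assoc P2,
        Matrix.mul_nonsing_inv _ hP2det, Matrix.one_mul, hA'B']
    have hA''B''d : ∀ i j, m i ∣ (A'' * B'') i j - (if i = j then 1 else 0) := by
      rw [hA''B'']; exact hABd'
    set A2 : Matrix (Fin (n + 1)) (Fin (n + 1)) ℤ :=
      Matrix.of (fun i j => A'' i.succ j.succ) with hA2def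
    set B2 : Matrix (Fin (n + 1)) (Fin (n + 1)) ℤ :=
      Matrix.of (fun i j => B'' i.succ j.succ) with hB2def
    have hA2e : ∀ i j, A2 i j = A'' i.succ j.succ := fun i j => rfl
    have hB2e : ∀ i j, B2 i j = B'' i.succ j.succ := fun i j => rfl
    have hA2B2 : ∀ i j, m i.succ ∣ (A2 * B2) i j - (if i = j then 1 else 0) := by
      intro i j
      have hexp : (A'' * B'') i.succ j.succ
          = A'' i.succ 0 * B'' 0 j.succ + (A2 * B2) i j := by
        rw [Matrix.mul_apply, Fin.sum_univ_succ, Matrix.mul_apply]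
        congr 1
      have h1 := hA''B''d i.succ j.succ
      have h2 : m i.succ ∣ A'' i.succ 0 := by
        have := hA''col0 i.succ
        rwa [if_neg (Fin.succ_ne_zero i), sub_zero] at this
      have hδ : (if i.succ = j.succ then (1 : ℤ) else 0) = (if i = j then 1 else 0) := by
        simp [Fin.succ_inj]
      have key : (A2 * B2) i j - (if i = j then (1 : ℤ) else 0)
          = ((A'' * B'') i.succ j.succ - (if i.succ = j.succ then 1 else 0))
            - A'' i.succ 0 * B'' 0 j.succ := by
        rw [hexp, hδ]; ring
      rw [key]
      exact dvd_sub h1 (h2.mul_right _)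
    obtain ⟨P3, p, hP3det, hp0, hp2, hpg, hp1, X3, hX3⟩ :=
      ih (fun i => m i.succ) (fun i => hm i.succ)
        (fun i => by
          have := hdvd i.succ
          rwa [← Fin.succ_castSucc] at this)
        A2 B2 ((mem_iff _ _).mpr (by
          intro i j
          have := hA2B2 i j
          simpa [Matrix.sub_apply, Matrix.one_apply] using this))
    have hX3d : ∀ i j, m i.succ ∣ (A2 * P3) i j
        - (if i = j then (if i = Fin.last n then p else 1) else 0) := by
      have hh := (mem_iff (fun i => m i.succ) _).mp ⟨X3, hX3⟩
      intro i j
      have h := hh i j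
      simpa [Matrix.sub_apply, Matrix.diagonal_apply] using h
    refine ⟨P1 * (P2 * oneBlock P3), p, ?_, hp0, ?_, ?_, ?_, ?_⟩
    · rw [Matrix.det_mul, Matrix.det_mul, det_oneBlock]
      exact hP1det.mul (hP2det.mul hP3det)
    · rwa [Fin.succ_last] at hp2
    · rwa [Fin.succ_last] at hpg
    · rwa [Fin.succ_last] at hp1
    · apply (mem_iff m _).mpr
      intro i j
      have hAP : A * (P1 * (P2 * oneBlock P3)) = A'' * oneBlock P3 := by
        rw [hA''def, hA'def, Matrix.mul_assoc, Matrix.mul_assoc]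
      rw [Matrix.sub_apply, hAP, Matrix.diagonal_apply]
      rcases Fin.eq_zero_or_eq_succ j with rfl | ⟨j', rfl⟩
      · have hcol : (A'' * oneBlock P3) i 0 = A'' i 0 := by
          rw [Matrix.mul_apply, vec_oneBlock_zero]
        rw [hcol]
        have hlast : (0 : Fin (n + 2)) ≠ Fin.last (n + 1) := by
          intro hcon
          have := congrArg Fin.val hcon
          simp [Fin.val_last] at this
        rcases Fin.eq_zero_or_eq_succ i with rfl | ⟨i', rfl⟩
        · rw [if_pos rfl, if_neg hlast]
          have := hA''col0 0
          rwa [if_pos rfl] at this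
        · rw [if_neg (Fin.succ_ne_zero i'), sub_zero]
          have := hA''col0 i'.succ
          rwa [if_neg (Fin.succ_ne_zero i'), sub_zero] at this
      · have hcol : (A'' * oneBlock P3) i j'.succ = ∑ l, A'' i l.succ * P3 l j' := by
          rw [Matrix.mul_apply, vec_oneBlock_succ]
        rw [hcol]
        rcases Fin.eq_zero_or_eq_succ i with rfl | ⟨i', rfl⟩
        · rw [if_neg (Ne.symm (Fin.succ_ne_zero j')), sub_zero]
          apply Finset.dvd_sum
          intro l _
          have hent : m 0 ∣ A'' 0 l.succ := by
            rw [hA''succ]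
            have := hA'row0 l.succ
            rwa [if_neg (Fin.succ_ne_zero l), sub_zero] at this
          exact hent.mul_right _
        · have hsum : (∑ l, A'' i'.succ l.succ * P3 l j') = (A2 * P3) i' j' := by
            rw [Matrix.mul_apply]
            exact Finset.sum_congr rfl fun l _ => by rw [hA2e]
          rw [hsum]
          have h2 : (if i'.succ = j'.succ then (if i'.succ = Fin.last (n + 1) then p else 1)
              else 0) = (if i' = j' then (if i' = Fin.last n then p else 1) else 0) := by
            rw [← Fin.succ_last]
            simp [Fin.succ_inj]
          rw [h2]
          exact hX3d i' j'
end

section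
/- Let m₁,…,mₙ be positive integers with m_{i+1} dividing m_i, and let 𝓜 be the right ideal of Matₙ(ℤ) generated by diag(m₁,…,mₙ). If A ∈ Matₙ(ℤ), P₁, P₂ ∈ GLₙ(ℤ), and AP₁ ≡ diag(1,…,1,p₁) (mod 𝓜), AP₂ ≡ diag(1,…,1,p₂) (mod 𝓜) with 0 ≤ p₁, p₂ ≤ ⌊mₙ/2⌋, then p₁ = p₂. -/
/-- Uniqueness of `p` in the normal form `A * P ≡ diag(1, …, 1, p)` modulo the right ideal
generated by `diag(m₁, …, mₙ)`: `p` is determined by the class of `A` mod the ideal. -/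
theorem stmt1 (n : ℕ) (m : Fin (n + 1) → ℤ) (hm : ∀ i, 0 < m i)
    (hdvd : ∀ i : Fin n, m i.succ ∣ m i.castSucc)
    (A P₁ P₂ : Matrix (Fin (n + 1)) (Fin (n + 1)) ℤ)
    (hP₁ : IsUnit P₁.det) (hP₂ : IsUnit P₂.det)
    (p₁ p₂ : ℤ) (hp₁0 : 0 ≤ p₁) (hp₁ : p₁ ≤ m (Fin.last n) / 2)
    (hp₂0 : 0 ≤ p₂) (hp₂ : p₂ ≤ m (Fin.last n) / 2)
    (h₁ : ∃ X : Matrix (Fin (n + 1)) (Fin (n + 1)) ℤ,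
      A * P₁ - Matrix.diagonal (fun i => if i = Fin.last n then p₁ else 1) =
        Matrix.diagonal m * X)
    (h₂ : ∃ X : Matrix (Fin (n + 1)) (Fin (n + 1)) ℤ,
      A * P₂ - Matrix.diagonal (fun i => if i = Fin.last n then p₂ else 1) =
        Matrix.diagonal m * X) :
    p₁ = p₂ := by
  set M : ℤ := m (Fin.last n) with hMdef
  have hMpos : 0 < M := hm _
  have hdvdall : ∀ i, M ∣ m i := by
    intro i
    induction i using Fin.reverseInduction with
    | last => exact dvd_refl _
    | cast i ih => exact ih.trans (hdvd i)
  set N := M.toNat with hN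
  have hNM : (N : ℤ) = M := Int.toNat_of_nonneg hMpos.le
  let f : ℤ →+* ZMod N := Int.castRingHom (ZMod N)
  have hcast : ∀ a : ℤ, M ∣ a → f a = 0 := by
    intro a ha
    show ((a : ℤ) : ZMod N) = 0
    rw [ZMod.intCast_zmod_eq_zero_iff_dvd, hNM]
    exact ha
  have key : ∀ (P : Matrix (Fin (n + 1)) (Fin (n + 1)) ℤ) (p : ℤ),
      (∃ X, A * P - Matrix.diagonal (fun i => if i = Fin.last n then p else 1) =
        Matrix.diagonal m * X) →
      f (A.det * P.det) = f p := by
    rintro P p ⟨X, hX⟩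
    have h2 := congrArg (f.mapMatrix) hX
    rw [map_sub, map_mul, map_mul] at h2
    have hzero : f.mapMatrix (Matrix.diagonal m) = 0 := by
      ext i j
      simp only [RingHom.mapMatrix_apply, Matrix.map_apply, Matrix.diagonal_apply,
        Matrix.zero_apply]
      split
      · exact hcast _ (hdvdall _)
      · exact map_zero f
    rw [hzero, zero_mul, sub_eq_zero] at h2
    rw [map_mul, RingHom.map_det, RingHom.map_det, ← Matrix.det_mul,
      h2, ← RingHom.map_det]
    congr 1
    rw [Matrix.det_diagonal, Finset.prod_ite_eq' Finset.univ (Fin.last n) (fun _ => p)]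
    simp
  have e₁ := key P₁ p₁ h₁
  have e₂ := key P₂ p₂ h₂
  have e3 : f (p₁ * P₂.det) = f (p₂ * P₁.det) := by
    rw [map_mul, map_mul, ← e₁, ← e₂, map_mul, map_mul]
    ring
  have hmod : (N : ℤ) ∣ p₂ * P₁.det - p₁ * P₂.det :=
    ((ZMod.intCast_eq_intCast_iff _ _ _).mp e3).dvd
  rw [hNM] at hmod
  rcases Int.isUnit_iff.mp hP₁ with h1 | h1 <;>
    rcases Int.isUnit_iff.mp hP₂ with h2 | h2 <;>
      rw [h1, h2] at hmod <;>
      [skip; skip; skip; skip] <;>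
      simp only [mul_one, mul_neg_one] at hmod
  · have : p₂ - p₁ = 0 := Int.eq_zero_of_abs_lt_dvd hmod (by rw [abs_lt]; omega)
    omega
  · have h4 : M ∣ p₁ + p₂ := by
      have := hmod
      rw [(by ring : p₂ - -p₁ = p₁ + p₂)] at this
      exact this
    obtain ⟨k, hk⟩ := h4
    have hk0 : 0 ≤ k := by nlinarith
    have hsum : p₁ + p₂ ≤ M := by omega
    have hk1 : k ≤ 1 := by
      by_contra h
      push_neg at h
      have h2k : M * 2 ≤ M * k := mul_le_mul_of_nonneg_left (by omega) hMpos.le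
      linarith
    interval_cases k <;> omega
  · have h4 : M ∣ p₁ + p₂ := by
      have := hmod
      rw [(by ring : -p₂ - p₁ = -(p₁ + p₂))] at this
      exact (dvd_neg).mp this
    obtain ⟨k, hk⟩ := h4
    have hk0 : 0 ≤ k := by nlinarith
    have hsum : p₁ + p₂ ≤ M := by omega
    have hk1 : k ≤ 1 := by
      by_contra h
      push_neg at h
      have h2k : M * 2 ≤ M * k := mul_le_mul_of_nonneg_left (by omega) hMpos.le
      linarith
    interval_cases k <;> omega
  · have : p₁ - p₂ = 0 := by
      have : M ∣ p₁ - p₂ := by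
        have := hmod
        rw [(by ring : -p₂ - -p₁ = p₁ - p₂)] at this
        exact this
      exact Int.eq_zero_of_abs_lt_dvd this (by rw [abs_lt]; omega)
    omega
end

section
/- Let G be a finite abelian group with minimal number of generators r ≤ n. Choose τ₁,…,τₙ ∈ G with G the internal direct product ⟨τ₁⟩ × ⋯ × ⟨τₙ⟩, where |τ_{i+1}| divides |τ_i| for 1 ≤ i < n (so |τ_i| = 1 for r < i ≤ n). Then every orbit of the right GLₙ(ℤ)-action on the set of generating n-tuples of G contains a tuple of the form (τ₁,…,τ_{n-1},τₙ^p) with 0 ≤ p ≤ ⌊|τₙ|/2⌋ and gcd(p,|τₙ|) = 1, and distinct such p give distinct orbits. -/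
namespace Stmt4Aux
open Matrix

/-- equiv splitting `Fin (k+2)` as first two and rest -/
def e2 (k : ℕ) : Fin (k + 2) ≃ Fin 2 ⊕ Fin k :=
  (finCongr (by omega : k + 2 = 2 + k)).trans finSumFinEquiv.symm

lemma e2_lt {k : ℕ} (i : Fin (k + 2)) (h : (i : ℕ) < 2) : e2 k i = Sum.inl ⟨i, h⟩ := by
  have h1 : (finCongr (by omega : k + 2 = 2 + k)) i = Fin.castAdd k ⟨i, h⟩ := by
    ext; simp
  simp only [e2, Equiv.trans_apply]
  rw [h1, finSumFinEquiv_symm_apply_castAdd]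

lemma e2_ge {k : ℕ} (i : Fin (k + 2)) (h : ¬ (i : ℕ) < 2) :
    e2 k i = Sum.inr ⟨(i : ℕ) - 2, by omega⟩ := by
  have h1 : (finCongr (by omega : k + 2 = 2 + k)) i = Fin.natAdd 2 ⟨(i : ℕ) - 2, by omega⟩ := by
    ext; simp; omega
  simp only [e2, Equiv.trans_apply]
  rw [h1, finSumFinEquiv_symm_apply_natAdd]

lemma e2_symm_inl {k : ℕ} (a : Fin 2) : (e2 k).symm (Sum.inl a) = ⟨a, by omega⟩ := by
  rw [Equiv.symm_apply_eq, e2_lt _ (by exact a.isLt : ((⟨a, by omega⟩ : Fin (k+2)) : ℕ) < 2)]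

lemma e2_symm_inr {k : ℕ} (b : Fin k) : (e2 k).symm (Sum.inr b) = ⟨(b : ℕ) + 2, by omega⟩ := by
  rw [Equiv.symm_apply_eq, e2_ge _ (by simp : ¬ ((⟨(b:ℕ)+2, by omega⟩ : Fin (k+2)) : ℕ) < 2)]
  exact congrArg Sum.inr (by ext; simp)

/-- embed a 2×2 matrix in the top-left corner, identity elsewhere -/
def emb2 {k : ℕ} (M : Matrix (Fin 2) (Fin 2) ℤ) : Matrix (Fin (k + 2)) (Fin (k + 2)) ℤ :=
  (Matrix.fromBlocks M 0 0 (1 : Matrix (Fin k) (Fin k) ℤ)).submatrix (e2 k) (e2 k)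

lemma emb2_det {k : ℕ} (M : Matrix (Fin 2) (Fin 2) ℤ) : (emb2 (k := k) M).det = M.det := by
  rw [emb2, Matrix.det_submatrix_equiv_self, Matrix.det_fromBlocks_zero₂₁, Matrix.det_one,
    mul_one]

lemma vecMul_emb2_lt {k : ℕ} (v : Fin (k + 2) → ℤ) (M : Matrix (Fin 2) (Fin 2) ℤ)
    (j : Fin (k + 2)) (hj : (j : ℕ) < 2) :
    (v ᵥ* emb2 M) j = v 0 * M 0 ⟨j, hj⟩ + v 1 * M 1 ⟨j, hj⟩ := by
  have h0 : (v ᵥ* emb2 M) j = ∑ i, v i * emb2 M i j := rfl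
  rw [h0, ← Equiv.sum_comp (e2 k).symm (fun i => v i * emb2 M i j), Fintype.sum_sum_type]
  simp only [emb2, submatrix_apply, Equiv.apply_symm_apply, e2_lt j hj]
  rw [Fin.sum_univ_two]
  simp only [e2_symm_inl, e2_symm_inr, Matrix.fromBlocks_apply₁₁, Matrix.fromBlocks_apply₂₁,
    Matrix.zero_apply, mul_zero, Finset.sum_const_zero, add_zero]
  have : ((⟨(0 : Fin 2), by omega⟩ : Fin (k+2))) = 0 := rfl
  have h2 : ((⟨((1:Fin 2) : ℕ), by omega⟩ : Fin (k+2))) = 1 := rfl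
  rw [this, h2]

lemma vecMul_emb2_ge {k : ℕ} (v : Fin (k + 2) → ℤ) (M : Matrix (Fin 2) (Fin 2) ℤ)
    (j : Fin (k + 2)) (hj : ¬ (j : ℕ) < 2) :
    (v ᵥ* emb2 M) j = v j := by
  have h0 : (v ᵥ* emb2 M) j = ∑ i, v i * emb2 M i j := rfl
  rw [h0, ← Equiv.sum_comp (e2 k).symm (fun i => v i * emb2 M i j), Fintype.sum_sum_type]
  simp only [emb2, submatrix_apply, Equiv.apply_symm_apply, e2_ge j hj]
  simp only [Matrix.fromBlocks_apply₁₂, Matrix.fromBlocks_apply₂₂, Matrix.zero_apply, mul_zero,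
    Finset.sum_const_zero, zero_add]
  rw [Finset.sum_eq_single (⟨(j:ℕ) - 2, by omega⟩ : Fin k)]
  · simp only [e2_symm_inr, Matrix.one_apply_eq]
    have : ((⟨((j:ℕ) - 2) + 2, by omega⟩ : Fin (k+2))) = j := by ext; simp; omega
    rw [this, mul_one]
  · intro b _ hb
    rw [Matrix.one_apply_ne hb, mul_zero]
  · intro h; exact absurd (Finset.mem_univ _) h

/-- equiv splitting `Fin (k+1)` as first one and rest -/
def e1 (k : ℕ) : Fin (k + 1) ≃ Fin 1 ⊕ Fin k :=
  (finCongr (by omega : k + 1 = 1 + k)).trans finSumFinEquiv.symm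

lemma e1_zero {k : ℕ} : e1 k 0 = Sum.inl 0 := by
  have h1 : (finCongr (by omega : k + 1 = 1 + k)) 0 = Fin.castAdd k 0 := by ext; simp
  simp only [e1, Equiv.trans_apply]
  rw [h1, finSumFinEquiv_symm_apply_castAdd]

lemma e1_succ {k : ℕ} (i : Fin k) : e1 k i.succ = Sum.inr i := by
  have h1 : (finCongr (by omega : k + 1 = 1 + k)) i.succ = Fin.natAdd 1 i := by
    ext; simp [Nat.add_comm]
  simp only [e1, Equiv.trans_apply]
  rw [h1, finSumFinEquiv_symm_apply_natAdd]

/-- embed a k×k matrix in the bottom-right corner, 1 at the top-left -/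
def emb {k : ℕ} (Q : Matrix (Fin k) (Fin k) ℤ) : Matrix (Fin (k + 1)) (Fin (k + 1)) ℤ :=
  (Matrix.fromBlocks (1 : Matrix (Fin 1) (Fin 1) ℤ) 0 0 Q).submatrix (e1 k) (e1 k)

lemma emb_det {k : ℕ} (Q : Matrix (Fin k) (Fin k) ℤ) : (emb Q).det = Q.det := by
  rw [emb, Matrix.det_submatrix_equiv_self, Matrix.det_fromBlocks_zero₂₁, Matrix.det_one,
    one_mul]

lemma emb_apply_zero_zero {k : ℕ} (Q : Matrix (Fin k) (Fin k) ℤ) : emb Q 0 0 = 1 := by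
  simp [emb, e1_zero, Matrix.one_apply]

lemma emb_apply_zero_succ {k : ℕ} (Q : Matrix (Fin k) (Fin k) ℤ) (j : Fin k) :
    emb Q 0 j.succ = 0 := by
  simp [emb, e1_zero, e1_succ]

lemma emb_apply_succ_zero {k : ℕ} (Q : Matrix (Fin k) (Fin k) ℤ) (i : Fin k) :
    emb Q i.succ 0 = 0 := by
  simp [emb, e1_zero, e1_succ]

lemma emb_apply_succ_succ {k : ℕ} (Q : Matrix (Fin k) (Fin k) ℤ) (i j : Fin k) :
    emb Q i.succ j.succ = Q i j := by
  simp [emb, e1_succ]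

lemma mul_emb_zero {k : ℕ} (A : Matrix (Fin (k + 1)) (Fin (k + 1)) ℤ)
    (Q : Matrix (Fin k) (Fin k) ℤ) (i : Fin (k + 1)) : (A * emb Q) i 0 = A i 0 := by
  rw [Matrix.mul_apply, Fin.sum_univ_succ]
  simp [emb_apply_zero_zero, emb_apply_succ_zero]

lemma mul_emb_succ {k : ℕ} (A : Matrix (Fin (k + 1)) (Fin (k + 1)) ℤ)
    (Q : Matrix (Fin k) (Fin k) ℤ) (i : Fin (k + 1)) (j : Fin k) :
    (A * emb Q) i j.succ = ∑ l, A i l.succ * Q l j := by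
  rw [Matrix.mul_apply, Fin.sum_univ_succ]
  simp [emb_apply_zero_succ, emb_apply_succ_succ]

lemma vecMul_emb_zero {k : ℕ} (v : Fin (k + 1) → ℤ) (Q : Matrix (Fin k) (Fin k) ℤ) :
    (v ᵥ* emb Q) 0 = v 0 := by
  have h0 : (v ᵥ* emb Q) 0 = ∑ i, v i * emb Q i 0 := rfl
  rw [h0, Fin.sum_univ_succ]
  simp [emb_apply_zero_zero, emb_apply_succ_zero]

lemma vecMul_emb_succ {k : ℕ} (v : Fin (k + 1) → ℤ) (Q : Matrix (Fin k) (Fin k) ℤ) (j : Fin k) :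
    (v ᵥ* emb Q) j.succ = ((v ∘ Fin.succ) ᵥ* Q) j := by
  have h0 : (v ᵥ* emb Q) j.succ = ∑ i, v i * emb Q i j.succ := rfl
  rw [h0, Fin.sum_univ_succ]
  simp only [emb_apply_zero_succ, mul_zero, zero_add, emb_apply_succ_succ]
  rfl

/-- Any integer row vector can be pushed into its first coordinate by a unimodular matrix. -/
lemma lemL : ∀ (k : ℕ) (v : Fin (k + 1) → ℤ),
    ∃ P : Matrix (Fin (k + 1)) (Fin (k + 1)) ℤ,
      IsUnit P.det ∧ ∀ j, j ≠ 0 → (v ᵥ* P) j = 0 := by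
  intro k
  induction k with
  | zero =>
    intro v
    exact ⟨1, by simp, fun j hj => absurd (Fin.fin_one_eq_zero j) hj⟩
  | succ k ih =>
    intro v
    obtain ⟨Q, hQu, hQ⟩ := ih (v ∘ Fin.succ)
    set w := v ᵥ* emb Q with hw
    have hw0 : ∀ j : Fin (k + 1), j ≠ 0 → w j.succ = 0 := by
      intro j hj
      rw [hw, vecMul_emb_succ]
      exact hQ j hj
    by_cases hb : w 1 = 0
    · refine ⟨emb Q, by rw [emb_det]; exact hQu, fun j hj => ?_⟩
      rw [← hw]
      rcases Fin.eq_zero_or_eq_succ j with rfl | ⟨j', rfl⟩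
      · exact absurd rfl hj
      · by_cases hj' : j' = 0
        · subst hj'; exact hb
        · exact hw0 j' hj'
    · set a := w 0 with ha
      set b := w 1 with hbdef
      set g : ℤ := (Int.gcd a b : ℤ) with hg
      have hgb : g ∣ b := Int.gcd_dvd_right a b
      have hga : g ∣ a := Int.gcd_dvd_left a b
      have hgne : g ≠ 0 := by
        simp only [hg, ne_eq, Int.natCast_eq_zero, Int.gcd_eq_zero_iff, not_and_or]
        right; exact hb
      set M : Matrix (Fin 2) (Fin 2) ℤ := !![Int.gcdA a b, -(b / g); Int.gcdB a b, a / g] with hM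
      have hdet : M.det = 1 := by
        rw [hM, Matrix.det_fin_two_of]
        have hbez : g = a * Int.gcdA a b + b * Int.gcdB a b := Int.gcd_eq_gcd_ab a b
        have : g * (Int.gcdA a b * (a / g) - -(b / g) * Int.gcdB a b) = g * 1 := by
          have h1 : g * (a / g) = a := Int.mul_ediv_cancel' hga
          have h2 : g * (b / g) = b := Int.mul_ediv_cancel' hgb
          calc g * (Int.gcdA a b * (a / g) - -(b / g) * Int.gcdB a b)
              = Int.gcdA a b * (g * (a / g)) + Int.gcdB a b * (g * (b / g)) := by ring
            _ = a * Int.gcdA a b + b * Int.gcdB a b := by rw [h1, h2]; ring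
            _ = g * 1 := by rw [← hbez, mul_one]
        exact mul_left_cancel₀ hgne this
      refine ⟨emb Q * emb2 M, ?_, fun j hj => ?_⟩
      · rw [Matrix.det_mul, emb_det, emb2_det, hdet, mul_one]
        exact hQu
      · rw [← Matrix.vecMul_vecMul, ← hw]
        by_cases hj2 : (j : ℕ) < 2
        · have hj1 : j = 1 := by
            ext
            have := Fin.val_ne_of_ne hj
            simp only [Fin.val_zero] at this
            have : (j : ℕ) = 1 := by omega
            simp [this]
          subst hj1
          rw [vecMul_emb2_lt _ _ _ hj2]
          have h1 : (⟨((1 : Fin (k+2)) : ℕ), hj2⟩ : Fin 2) = 1 := rfl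
          rw [h1, hM]
          have e01 : (!![Int.gcdA a b, -(b / g); Int.gcdB a b, a / g]) 0 1 = -(b/g) := rfl
          have e11 : (!![Int.gcdA a b, -(b / g); Int.gcdB a b, a / g]) 1 1 = a/g := rfl
          rw [e01, e11]
          -- goal : w 0 * -(b/g) + w 1 * (a/g) = 0
          have h2 : g * (a * -(b / g) + b * (a / g)) = 0 := by
            have h1' : g * (a / g) = a := Int.mul_ediv_cancel' hga
            have h2' : g * (b / g) = b := Int.mul_ediv_cancel' hgb
            calc g * (a * -(b / g) + b * (a / g))
                = -(a * (g * (b / g))) + b * (g * (a / g)) := by ring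
              _ = -(a * b) + b * a := by rw [h1', h2']
              _ = 0 := by ring
          have := mul_left_cancel₀ hgne (h2.trans (mul_zero g).symm)
          rw [← ha, ← hbdef]
          linear_combination this
        · rw [vecMul_emb2_ge _ _ _ hj2]
          rcases Fin.eq_zero_or_eq_succ j with rfl | ⟨j', rfl⟩
          · exact absurd rfl hj
          · apply hw0
            intro h
            rw [h] at hj2
            exact hj2 (by simp)

/-- If the entries of `v` generate `1` modulo `c`, a unimodular `P` makes
`v ᵥ* P ≡ (1,0,…,0) mod c`. -/
lemma vlem (k : ℕ) (v : Fin (k + 2) → ℤ) (c : ℕ) (hc : 0 < c)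
    (hx : ∃ x : Fin (k + 2) → ℤ, (c : ℤ) ∣ (∑ j, v j * x j) - 1) :
    ∃ P : Matrix (Fin (k + 2)) (Fin (k + 2)) ℤ,
      IsUnit P.det ∧ ((c : ℤ) ∣ (v ᵥ* P) 0 - 1) ∧ ∀ j, j ≠ 0 → (c : ℤ) ∣ (v ᵥ* P) j := by
  obtain ⟨PL, hPLu, hPL⟩ := lemL (k + 1) v
  set u := v ᵥ* PL with hu
  set g := u 0 with hgdef
  obtain ⟨x, hxd⟩ := hx
  -- rewrite ∑ v j * x j through PL
  have hPL1 : PL * PL⁻¹ = 1 := Matrix.mul_nonsing_inv PL hPLu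
  set y := PL⁻¹.mulVec x with hy
  have hdot : (∑ j, v j * x j) = g * y 0 := by
    have h1 : (∑ j, v j * x j) = dotProduct v x := rfl
    have h2 : dotProduct v x = dotProduct u y := by
      rw [hu, hy, ← dotProduct_mulVec, Matrix.mulVec_mulVec, hPL1, Matrix.one_mulVec]
    rw [h1, h2, dotProduct]
    rw [Fin.sum_univ_succ]
    have hz : ∀ j : Fin (k + 1), u j.succ * y j.succ = 0 := by
      intro j
      rw [hPL j.succ (Fin.succ_ne_zero j), zero_mul]
    simp only [hz, Finset.sum_const_zero, add_zero]
    rfl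
  have hgy : (c : ℤ) ∣ g * y 0 - 1 := hdot ▸ hxd
  set w := (1 - g * y 0) / (c : ℤ) with hwdef
  have hcw : (c : ℤ) * w = 1 - g * y 0 := by
    rw [hwdef]
    exact Int.mul_ediv_cancel' (by simpa using (dvd_neg.2 hgy))
  set M : Matrix (Fin 2) (Fin 2) ℤ := !![y 0, (c : ℤ); -w, g] with hM
  have hMdet : M.det = 1 := by
    rw [hM, Matrix.det_fin_two_of]
    linear_combination hcw
  refine ⟨PL * emb2 M, ?_, ?_, ?_⟩
  · rw [Matrix.det_mul, emb2_det, hMdet, mul_one]; exact hPLu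
  · rw [← Matrix.vecMul_vecMul, ← hu, vecMul_emb2_lt _ _ _ (by simp : ((0 : Fin (k+2)) : ℕ) < 2)]
    have h00 : M 0 (⟨((0:Fin (k+2)):ℕ), by simp⟩ : Fin 2) = y 0 := rfl
    have h10 : M 1 (⟨((0:Fin (k+2)):ℕ), by simp⟩ : Fin 2) = -w := rfl
    rw [h00, h10, hPL 1 (by simp), zero_mul, add_zero, ← hgdef]
    exact hgy
  · intro j hj
    rw [← Matrix.vecMul_vecMul, ← hu]
    by_cases hj2 : (j : ℕ) < 2
    · have hj1 : j = 1 := by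
        ext
        have := Fin.val_ne_of_ne hj
        simp only [Fin.val_zero] at this
        have : (j : ℕ) = 1 := by omega
        simp [this]
      subst hj1
      rw [vecMul_emb2_lt _ _ _ hj2]
      have h01 : M 0 (⟨((1:Fin (k+2)):ℕ), hj2⟩ : Fin 2) = (c : ℤ) := rfl
      have h11 : M 1 (⟨((1:Fin (k+2)):ℕ), hj2⟩ : Fin 2) = g := rfl
      rw [h01, h11, hPL 1 (by simp), zero_mul, add_zero]
      exact dvd_mul_left _ _
    · rw [vecMul_emb2_ge _ _ _ hj2, hPL j hj]
      exact dvd_zero _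

lemma key : ∀ (m : ℕ) (d : Fin (m + 1) → ℕ), (∀ i, 0 < d i) →
    (∀ i j : Fin (m + 1), i ≤ j → d j ∣ d i) →
    ∀ A : Matrix (Fin (m + 1)) (Fin (m + 1)) ℤ,
    (∀ t : Fin (m + 1) → ℤ, ∃ x, ∀ i, (d i : ℤ) ∣ A.mulVec x i - t i) →
    ∃ (P : Matrix (Fin (m + 1)) (Fin (m + 1)) ℤ) (p : ℕ), IsUnit P.det ∧
      p ≤ d (Fin.last m) / 2 ∧ Nat.gcd p (d (Fin.last m)) = 1 ∧
      ∀ i j, (d i : ℤ) ∣ (A * P) i j -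
        (if i = j then (if i = Fin.last m then (p : ℤ) else 1) else 0) := by
  intro m
  induction m with
  | zero =>
    intro d hpos hdvd A hsurj
    obtain ⟨x, hx⟩ := hsurj (fun _ => 1)
    have hx0 : (d 0 : ℤ) ∣ A 0 0 * x 0 - 1 := by
      have h := hx 0
      rwa [show A.mulVec x 0 = A 0 0 * x 0 by
        simp [Matrix.mulVec, dotProduct, Fin.sum_univ_one]] at h
    set dd := d 0 with hdd
    have hddpos : 0 < dd := hpos 0
    set r := (A 0 0) % (dd : ℤ) with hr
    have hr0 : 0 ≤ r := Int.emod_nonneg _ (by exact_mod_cast hddpos.ne')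
    have hrlt : r < (dd : ℤ) := Int.emod_lt_of_pos _ (by exact_mod_cast hddpos)
    set q := r.toNat with hq
    have hqr : (q : ℤ) = r := Int.toNat_of_nonneg hr0
    have hqlt : q < dd := by
      have : (q : ℤ) < (dd : ℤ) := hqr ▸ hrlt
      exact_mod_cast this
    have hrdef : (A 0 0) - r = (dd : ℤ) * (A 0 0 / (dd : ℤ)) := by
      rw [hr, Int.emod_def]; ring
    have hgcd : Nat.gcd q dd = 1 := by
      set e := Nat.gcd q dd with he
      have he1 : (e : ℤ) ∣ r := hqr ▸ Int.natCast_dvd_natCast.2 (Nat.gcd_dvd_left _ _)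
      have he2 : (e : ℤ) ∣ (dd : ℤ) := Int.natCast_dvd_natCast.2 (Nat.gcd_dvd_right _ _)
      have heA : (e : ℤ) ∣ A 0 0 := by
        have : A 0 0 = ((A 0 0) - r) + r := by ring
        rw [this, hrdef]
        exact dvd_add (he2.mul_right _) he1
      have hone : (e : ℤ) ∣ 1 := by
        have h3 : (e : ℤ) ∣ A 0 0 * x 0 - 1 := he2.trans hx0
        have h4 : (e : ℤ) ∣ A 0 0 * x 0 := heA.mul_right _
        simpa using h4.sub h3
      exact Nat.dvd_one.mp (by exact_mod_cast hone)
    have hlz : (Fin.last 0 : Fin 1) = 0 := rfl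
    by_cases hhalf : q ≤ dd / 2
    · refine ⟨1, q, by simp, by rwa [hlz], by rwa [hlz], ?_⟩
      intro i j
      have hi : i = 0 := Fin.fin_one_eq_zero i
      have hj : j = 0 := Fin.fin_one_eq_zero j
      subst hi; subst hj
      rw [if_pos rfl, if_pos hlz.symm, Matrix.mul_one, hqr]
      rw [← hdd, hrdef]
      exact Dvd.intro _ rfl
    · have hgcd2 : Nat.gcd (dd - q) dd = 1 := by
        have h1 : Nat.gcd (dd - q) dd ∣ Nat.gcd q dd := by
          apply Nat.dvd_gcd
          · have h2 : Nat.gcd (dd - q) dd ∣ dd - (dd - q) :=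
              Nat.dvd_sub (Nat.gcd_dvd_right _ _) (Nat.gcd_dvd_left _ _)
            rwa [Nat.sub_sub_self hqlt.le] at h2
          · exact Nat.gcd_dvd_right _ _
        rw [hgcd] at h1
        exact Nat.dvd_one.mp h1
      refine ⟨-1, dd - q, ?_, by rw [hlz, ← hdd]; omega, by rwa [hlz, ← hdd], ?_⟩
      · rw [Matrix.det_fin_one]
        simp only [Matrix.neg_apply, Matrix.one_apply_eq]
        exact isUnit_one.neg
      · intro i j
        have hi : i = 0 := Fin.fin_one_eq_zero i
        have hj : j = 0 := Fin.fin_one_eq_zero j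
        subst hi; subst hj
        rw [if_pos rfl, if_pos hlz.symm]
        have hmul : (A * (-1)) 0 0 = -(A 0 0) := by
          rw [Matrix.mul_neg, Matrix.mul_one, Matrix.neg_apply]
        rw [hmul, ← hdd]
        have hcast : ((dd - q : ℕ) : ℤ) = (dd : ℤ) - q := by
          push_cast [Nat.cast_sub hqlt.le]; ring
        rw [hcast]
        have : -(A 0 0) - ((dd : ℤ) - q) = -((A 0 0) - r) - (dd : ℤ) + ((q : ℤ) - r) := by ring
        rw [this, hqr, sub_self, add_zero, hrdef]
        exact dvd_sub (dvd_neg.2 (dvd_mul_right _ _)) dvd_rfl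
  | succ m ih =>
    intro d hpos hdvd A hsurj
    obtain ⟨x0, hx00⟩ := hsurj (fun i => if i = 0 then 1 else 0)
    have hx0' : (d 0 : ℤ) ∣ (∑ j, A 0 j * x0 j) - 1 := by
      have h := hx00 0
      simpa [Matrix.mulVec, dotProduct] using h
    obtain ⟨P₁, hP₁u, h10, h1j⟩ := vlem m (A 0) (d 0) (hpos 0) ⟨x0, hx0'⟩
    set B := A * P₁ with hB
    have hBrow0 : ∀ j, B 0 j = (A 0 ᵥ* P₁) j := by
      intro j; rw [hB, Matrix.mul_apply]; rfl
    have hB00 : (d 0 : ℤ) ∣ B 0 0 - 1 := by rw [hBrow0]; exact h10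
    have hB0j : ∀ j, j ≠ 0 → (d 0 : ℤ) ∣ B 0 j := fun j hj => by
      rw [hBrow0]; exact h1j j hj
    have hBsurj : ∀ t : Fin (m+2) → ℤ, ∃ x, ∀ i, (d i : ℤ) ∣ B.mulVec x i - t i := by
      intro t
      obtain ⟨x, hx⟩ := hsurj t
      refine ⟨P₁⁻¹.mulVec x, fun i => ?_⟩
      rw [Matrix.mulVec_mulVec, hB, Matrix.mul_nonsing_inv_cancel_right _ _ hP₁u]
      exact hx i
    set C := B.submatrix Fin.succ Fin.succ with hC
    set d' : Fin (m + 1) → ℕ := d ∘ Fin.succ with hd'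
    have hsurjC : ∀ t : Fin (m+1) → ℤ, ∃ x, ∀ i, (d' i : ℤ) ∣ C.mulVec x i - t i := by
      intro t
      obtain ⟨x, hx⟩ := hBsurj (Fin.cons 0 t)
      have hx0d : (d 0 : ℤ) ∣ x 0 := by
        have h := hx 0
        rw [Fin.cons_zero, sub_zero] at h
        have hexp : B.mulVec x 0 = B 0 0 * x 0 + ∑ j : Fin (m+1), B 0 j.succ * x j.succ := by
          simp [Matrix.mulVec, dotProduct, Fin.sum_univ_succ]
        have h2 : (d 0 : ℤ) ∣ ∑ j : Fin (m+1), B 0 j.succ * x j.succ :=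
          Finset.dvd_sum fun j _ => (hB0j _ (Fin.succ_ne_zero j)).mul_right _
        have h3 : (d 0 : ℤ) ∣ (B 0 0 - 1) * x 0 := hB00.mul_right _
        have hxe : x 0 = B.mulVec x 0 - (B 0 0 - 1) * x 0 -
            ∑ j : Fin (m+1), B 0 j.succ * x j.succ := by
          rw [hexp]; ring
        rw [hxe]
        exact (h.sub h3).sub h2
      refine ⟨x ∘ Fin.succ, fun i => ?_⟩
      have h := hx i.succ
      rw [Fin.cons_succ] at h
      have hexp : B.mulVec x i.succ = B i.succ 0 * x 0 + C.mulVec (x ∘ Fin.succ) i := by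
        simp [Matrix.mulVec, dotProduct, Fin.sum_univ_succ, hC]
      have h2 : (d' i : ℤ) ∣ B i.succ 0 * x 0 := by
        have hd0 : (d' i : ℤ) ∣ (d 0 : ℤ) :=
          Int.natCast_dvd_natCast.2 (hdvd 0 i.succ (Fin.zero_le _))
        exact (hd0.trans hx0d).mul_left _
      have hre : C.mulVec (x ∘ Fin.succ) i - t i =
          (B.mulVec x i.succ - t i) - B i.succ 0 * x 0 := by
        rw [hexp]; ring
      rw [hre]
      exact h.sub h2
    obtain ⟨P', p, hP'u, hp2, hpgcd, hcong'⟩ := ih d' (fun i => hpos _)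
      (fun i j hij => hdvd _ _ (Fin.succ_le_succ_iff.2 hij)) C hsurjC
    have hlast : d' (Fin.last m) = d (Fin.last (m+1)) := by
      show d (Fin.last m).succ = d (Fin.last (m+1))
      rw [Fin.succ_last]
    set D := B * emb P' with hD
    have hD00 : (d 0 : ℤ) ∣ D 0 0 - 1 := by rw [hD, mul_emb_zero]; exact hB00
    have hD0succ : ∀ j : Fin (m+1), (d 0 : ℤ) ∣ D 0 j.succ := by
      intro j; rw [hD, mul_emb_succ]
      exact Finset.dvd_sum fun l _ => (hB0j _ (Fin.succ_ne_zero l)).mul_right _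
    have hDss : ∀ i j : Fin (m+1), (d i.succ : ℤ) ∣ D i.succ j.succ -
        (if i = j then (if i = Fin.last m then (p : ℤ) else 1) else 0) := by
      intro i j
      have hce : D i.succ j.succ = (C * P') i j := by
        rw [hD, mul_emb_succ, Matrix.mul_apply]; rfl
      rw [hce]
      exact hcong' i j
    -- Bezout for p and d(last)
    have hpg' : Nat.gcd p (d (Fin.last (m+1))) = 1 := by rwa [hlast] at hpgcd
    have hbez : (p : ℤ) * Int.gcdA (p : ℤ) ((d (Fin.last (m+1))) : ℤ) +
        ((d (Fin.last (m+1))) : ℤ) * Int.gcdB (p : ℤ) ((d (Fin.last (m+1))) : ℤ) = 1 := by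
      have h := (Int.gcd_eq_gcd_ab ((p : ℕ) : ℤ) (((d (Fin.last (m+1))) : ℕ) : ℤ)).symm
      rwa [Int.gcd_natCast_natCast, hpg', Nat.cast_one] at h
    set α := Int.gcdA (p : ℤ) ((d (Fin.last (m+1))) : ℤ) with hα
    set β := Int.gcdB (p : ℤ) ((d (Fin.last (m+1))) : ℤ) with hβ
    set kv : Fin (m+2) → ℤ :=
      fun i => if i = Fin.last (m+1) then -(D i 0) * α else -(D i 0) with hkv
    set P₃ : Matrix (Fin (m+2)) (Fin (m+2)) ℤ :=
      Matrix.of (fun i j => if i = j then 1 else if j = 0 then kv i else 0) with hP₃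
    have hP₃det : P₃.det = 1 := by
      have htri : P₃.BlockTriangular OrderDual.toDual := by
        intro i j hij
        have hij' : i < j := hij
        have hjne : j ≠ 0 := by
          intro h; rw [h] at hij'; exact Fin.not_lt_zero i hij'
        show (if i = j then (1:ℤ) else if j = 0 then kv i else 0) = 0
        rw [if_neg (ne_of_lt hij'), if_neg hjne]
      rw [Matrix.det_of_lowerTriangular P₃ htri]
      apply Finset.prod_eq_one
      intro i _
      show (if i = i then (1:ℤ) else if i = 0 then kv i else 0) = 1
      rw [if_pos rfl]
    have hFne0 : ∀ i j, j ≠ 0 → (D * P₃) i j = D i j := by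
      intro i j hj
      rw [Matrix.mul_apply, Finset.sum_eq_single j]
      · show D i j * (if j = j then (1:ℤ) else _) = D i j
        rw [if_pos rfl, mul_one]
      · intro k _ hk
        show D i k * (if k = j then (1:ℤ) else if j = 0 then kv k else 0) = 0
        rw [if_neg hk, if_neg hj, mul_zero]
      · intro h; exact absurd (Finset.mem_univ _) h
    have hF0 : ∀ i : Fin (m+2), (D * P₃) i 0 = D i 0 + ∑ l : Fin (m+1), D i l.succ * kv l.succ := by
      intro i
      rw [Matrix.mul_apply, Fin.sum_univ_succ]
      have e1 : D i 0 * P₃ 0 0 = D i 0 := by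
        show D i 0 * (if (0 : Fin (m+2)) = 0 then (1:ℤ) else if (0:Fin (m+2)) = 0 then kv 0 else 0) = D i 0
        rw [if_pos rfl, mul_one]
      have e2 : ∀ l : Fin (m+1), D i l.succ * P₃ l.succ 0 = D i l.succ * kv l.succ := by
        intro l
        show D i l.succ * (if l.succ = (0 : Fin (m+2)) then (1:ℤ) else if (0 : Fin (m+2)) = 0 then kv l.succ else 0)
            = D i l.succ * kv l.succ
        rw [if_neg (Fin.succ_ne_zero l), if_pos rfl]
      rw [e1]
      exact congrArg _ (Finset.sum_congr rfl (fun l _ => e2 l))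
    have hAPF : A * (P₁ * (emb P' * P₃)) = D * P₃ := by
      rw [hD, hB, Matrix.mul_assoc, Matrix.mul_assoc]
    refine ⟨P₁ * (emb P' * P₃), p, ?_, by rwa [hlast] at hp2, hpg', ?_⟩
    · rw [Matrix.det_mul, Matrix.det_mul, emb_det, hP₃det, mul_one]
      exact hP₁u.mul hP'u
    · intro i j
      rw [hAPF]
      rcases Fin.eq_zero_or_eq_succ j with rfl | ⟨j', rfl⟩
      · rw [hF0 i]
        rcases Fin.eq_zero_or_eq_succ i with rfl | ⟨i', rfl⟩
        · have h0l : (0 : Fin (m+2)) ≠ Fin.last (m+1) := by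
            intro h
            have := congrArg Fin.val h
            simp [Fin.last] at this
          rw [if_pos rfl, if_neg h0l]
          have hre : D 0 0 + (∑ l : Fin (m+1), D 0 l.succ * kv l.succ) - 1 =
              (D 0 0 - 1) + ∑ l : Fin (m+1), D 0 l.succ * kv l.succ := by ring
          rw [hre]
          exact dvd_add hD00 (Finset.dvd_sum fun l _ => (hD0succ l).mul_right _)
        · rw [if_neg (Fin.succ_ne_zero i'), sub_zero,
            ← Finset.add_sum_erase _ _ (Finset.mem_univ i')]
          have hrest : (d i'.succ : ℤ) ∣
              ∑ l ∈ Finset.univ.erase i', D i'.succ l.succ * kv l.succ := by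
            apply Finset.dvd_sum
            intro l hl
            have hne : i' ≠ l := fun h => (Finset.mem_erase.1 hl).1 h.symm
            have hDl := hDss i' l
            rw [if_neg hne, sub_zero] at hDl
            exact hDl.mul_right _
          have hmain : (d i'.succ : ℤ) ∣ D i'.succ 0 + D i'.succ i'.succ * kv i'.succ := by
            by_cases hil : i'.succ = Fin.last (m+1)
            · have hi'l : i' = Fin.last m := by
                have h2 : i'.succ = (Fin.last m).succ := by rw [hil, Fin.succ_last]
                exact Fin.succ_injective _ h2
              have hkvi : kv i'.succ = -(D i'.succ 0) * α := by
                rw [hkv]; simp only [if_pos hil]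
              have h1 : (d i'.succ : ℤ) ∣ D i'.succ i'.succ - (p : ℤ) := by
                have h := hDss i' i'
                rwa [if_pos rfl, if_pos hi'l] at h
              have hd_il : (d i'.succ : ℕ) = d (Fin.last (m+1)) := by rw [hil]
              have h2 : (d i'.succ : ℤ) ∣ 1 - α * D i'.succ i'.succ := by
                have hre : 1 - α * D i'.succ i'.succ =
                    ((d (Fin.last (m+1)) : ℤ)) * β - α * (D i'.succ i'.succ - p) := by
                  linear_combination -hbez
                rw [hre, hd_il]
                exact dvd_sub (Dvd.intro _ rfl) (hd_il ▸ (h1.mul_left α))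
              have hre2 : D i'.succ 0 + D i'.succ i'.succ * (-(D i'.succ 0) * α) =
                  D i'.succ 0 * (1 - α * D i'.succ i'.succ) := by ring
              rw [hkvi, hre2]
              exact h2.mul_left _
            · have hkvi : kv i'.succ = -(D i'.succ 0) := by rw [hkv]; simp only [if_neg hil]
              have hi'nl : i' ≠ Fin.last m := fun h => hil (by rw [h, Fin.succ_last])
              have h1 : (d i'.succ : ℤ) ∣ D i'.succ i'.succ - 1 := by
                have h := hDss i' i'
                rwa [if_pos rfl, if_neg hi'nl] at h
              have hre2 : D i'.succ 0 + D i'.succ i'.succ * -(D i'.succ 0) =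
                  -(D i'.succ 0) * (D i'.succ i'.succ - 1) := by ring
              rw [hkvi, hre2]
              exact h1.mul_left _
          rw [← add_assoc]
          exact dvd_add hmain hrest
      · rw [hFne0 i j'.succ (Fin.succ_ne_zero j')]
        rcases Fin.eq_zero_or_eq_succ i with rfl | ⟨i', rfl⟩
        · rw [if_neg (Ne.symm (Fin.succ_ne_zero j')), sub_zero]
          exact hD0succ j'
        · have h := hDss i' j'
          by_cases hij : i' = j'
          · subst hij
            rw [if_pos rfl] at h ⊢
            by_cases hil : i' = Fin.last m
            · rw [if_pos hil] at h
              rw [if_pos (by rw [hil, Fin.succ_last])]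
              exact h
            · rw [if_neg hil] at h
              rw [if_neg (fun hc => hil (Fin.succ_injective _ (by rwa [Fin.succ_last])))]
              exact h
          · rw [if_neg hij] at h
            rw [if_neg (fun hc => hij (Fin.succ_injective _ hc))]
            exact h

section GroupPart

variable {G : Type*} [CommGroup G]

lemma zpow_sum'' {ι : Type*} (a : G) (s : Finset ι) (f : ι → ℤ) :
    a ^ (∑ j ∈ s, f j) = ∏ j ∈ s, a ^ f j := by
  induction s using Finset.cons_induction with
  | empty => simp
  | cons i s hi ih => rw [Finset.sum_cons, Finset.prod_cons, _root_.zpow_add, ih]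

/-- subgroup of elements expressible as products of powers -/
def reprSub {m : ℕ} (τ : Fin m → G) : Subgroup G where
  carrier := {g | ∃ a : Fin m → ℤ, g = ∏ i, τ i ^ a i}
  one_mem' := ⟨0, by simp⟩
  mul_mem' := by
    rintro x y ⟨a, rfl⟩ ⟨b, rfl⟩
    refine ⟨a + b, ?_⟩
    rw [← Finset.prod_mul_distrib]
    exact Finset.prod_congr rfl fun i _ => by rw [Pi.add_apply, _root_.zpow_add]
  inv_mem' := by
    rintro x ⟨a, rfl⟩
    refine ⟨-a, ?_⟩
    rw [← Finset.prod_inv_distrib]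
    exact Finset.prod_congr rfl fun i _ => by rw [Pi.neg_apply, _root_.zpow_neg]

lemma self_mem_reprSub {m : ℕ} (τ : Fin m → G) (i : Fin m) : τ i ∈ reprSub τ := by
  refine ⟨fun k => if k = i then 1 else 0, ?_⟩
  rw [Finset.prod_eq_single i (fun k _ hk => by simp only []; rw [if_neg hk, zpow_zero])
    (fun h => absurd (Finset.mem_univ i) h)]
  simp

lemma indep_pow_eq_one {ι : Type*} [Fintype ι] [DecidableEq ι] (H : ι → Subgroup G)
    (hindep : iSupIndep H) (x : ι → G) (hx : ∀ i, x i ∈ H i) (hprod : ∏ i, x i = 1) :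
    ∀ i, x i = 1 := by
  intro i
  have hsplit : x i * ∏ j ∈ Finset.univ.erase i, x j = 1 := by
    rw [Finset.mul_prod_erase _ _ (Finset.mem_univ i)]; exact hprod
  have hmem : (x i)⁻¹ ∈ ⨆ j, ⨆ (_ : j ≠ i), H j := by
    rw [inv_eq_of_mul_eq_one_right hsplit]
    apply Subgroup.prod_mem
    intro j hj
    exact Subgroup.mem_iSup_of_mem j
      (Subgroup.mem_iSup_of_mem (Finset.mem_erase.1 hj).1 (hx j))
  have hd := hindep i
  have h1 : (x i)⁻¹ = 1 := (Subgroup.disjoint_def.1 hd) (inv_mem (hx i)) hmem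
  exact inv_eq_one.mp h1

lemma updE {n : ℕ} (τ : Fin (n+1) → G) (q : ℕ) (i : Fin (n+1)) :
    (Function.update τ (Fin.last n) (τ (Fin.last n) ^ q)) i =
      τ i ^ (if i = Fin.last n then (q : ℤ) else 1) := by
  rw [Function.update_apply]
  by_cases h : i = Fin.last n
  · rw [if_pos h, if_pos h, zpow_natCast, h]
  · rw [if_neg h, if_neg h, zpow_one]

lemma prodE {n : ℕ} (τ : Fin (n+1) → G) (q : ℕ) (j : Fin (n+1)) :
    (∏ k, τ k ^ (if k = j then (if k = Fin.last n then (q : ℤ) else 1) else 0)) =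
      Function.update τ (Fin.last n) (τ (Fin.last n) ^ q) j := by
  rw [Finset.prod_eq_single j (fun k _ hk => by rw [if_neg hk, zpow_zero])
    (fun h => absurd (Finset.mem_univ j) h), if_pos rfl, Function.update_apply]
  by_cases h : j = Fin.last n
  · rw [if_pos h, if_pos h, zpow_natCast, h]
  · rw [if_neg h, if_neg h, zpow_one]

end GroupPart

end Stmt4Aux

open Stmt4Aux

/-- Representatives of the orbits of `GLₙ(ℤ)` acting on generating `n`-tuples of a finite
abelian group `G`: if `G = ⟨τ₁⟩ × ⋯ × ⟨τₙ⟩` with `|τᵢ₊₁| ∣ |τᵢ|`, then every generating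
tuple is in the orbit of some `(τ₁, …, τₙ₋₁, τₙ^p)` with `0 ≤ p ≤ ⌊|τₙ|/2⌋` and
`gcd(p, |τₙ|) = 1`, and distinct such `p` give distinct orbits. -/
theorem stmt4 {G : Type*} [CommGroup G] [Finite G] (n : ℕ)
    (τ : Fin (n + 1) → G)
    (hindep : iSupIndep fun i => Subgroup.zpowers (τ i))
    (hsup : (⨆ i, Subgroup.zpowers (τ i)) = ⊤)
    (hdvd : ∀ i : Fin n, orderOf (τ i.succ) ∣ orderOf (τ i.castSucc)) :
    (∀ σ : Fin (n + 1) → G, Subgroup.closure (Set.range σ) = ⊤ →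
      ∃ (P : Matrix (Fin (n + 1)) (Fin (n + 1)) ℤ) (p : ℕ), IsUnit P.det ∧
        p ≤ orderOf (τ (Fin.last n)) / 2 ∧
        Nat.gcd p (orderOf (τ (Fin.last n))) = 1 ∧
        (fun j => ∏ i, σ i ^ P i j) =
          Function.update τ (Fin.last n) (τ (Fin.last n) ^ p)) ∧
    (∀ p₁ p₂ : ℕ,
      p₁ ≤ orderOf (τ (Fin.last n)) / 2 →
      Nat.gcd p₁ (orderOf (τ (Fin.last n))) = 1 →
      p₂ ≤ orderOf (τ (Fin.last n)) / 2 →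
      Nat.gcd p₂ (orderOf (τ (Fin.last n))) = 1 →
      (∃ P : Matrix (Fin (n + 1)) (Fin (n + 1)) ℤ, IsUnit P.det ∧
        (fun j => ∏ i,
            (Function.update τ (Fin.last n) (τ (Fin.last n) ^ p₁)) i ^ P i j) =
          Function.update τ (Fin.last n) (τ (Fin.last n) ^ p₂)) →
      p₁ = p₂) := by
  
  classical
  set d : Fin (n+1) → ℕ := fun i => orderOf (τ i) with hd
  have hdpos : ∀ i, 0 < d i := fun i => orderOf_pos _
  have hchain : ∀ i j : Fin (n+1), i ≤ j → d j ∣ d i := by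
    have hstep : ∀ (k : ℕ) (i j : Fin (n+1)), (j : ℕ) = (i : ℕ) + k → d j ∣ d i := by
      intro k
      induction k with
      | zero =>
        intro i j hij
        have he : j = i := Fin.ext (by omega)
        rw [he]
      | succ k ihk =>
        intro i j hij
        have hlt : (i : ℕ) + k < n + 1 := by omega
        set j' : Fin (n+1) := ⟨(i:ℕ) + k, hlt⟩ with hj'
        have h1 : d j ∣ d j' := by
          have hkn : (i:ℕ) + k < n := by omega
          set jj : Fin n := ⟨(i:ℕ) + k, hkn⟩ with hjj
          have e1 : jj.succ = j := Fin.ext (by simp [hjj, Fin.val_succ, hij]; omega)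
          have e2 : jj.castSucc = j' := Fin.ext (by simp [hjj, hj'])
          have h2 := hdvd jj
          rw [e1, e2] at h2
          exact h2
        exact h1.trans (ihk i j' rfl)
    intro i j hij
    exact hstep ((j:ℕ) - (i:ℕ)) i j (by omega)
  have hind : ∀ b : Fin (n+1) → ℤ, (∏ i, τ i ^ b i) = 1 → ∀ i, (d i : ℤ) ∣ b i := by
    intro b hb i
    have h1 := indep_pow_eq_one (fun i => Subgroup.zpowers (τ i)) hindep
      (fun i => τ i ^ b i) (fun i => Subgroup.zpow_mem _ (Subgroup.mem_zpowers _) _) hb i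
    exact orderOf_dvd_iff_zpow_eq_one.2 h1
  have hprod_swap : ∀ (M : Matrix (Fin (n+1)) (Fin (n+1)) ℤ) (x : Fin (n+1) → ℤ),
      (∏ j, (∏ i, τ i ^ M i j) ^ x j) = ∏ i, τ i ^ (∑ j, M i j * x j) := by
    intro M x
    have h1 : (∏ j, (∏ i, τ i ^ M i j) ^ x j) = ∏ j, ∏ i, (τ i ^ M i j) ^ x j :=
      Finset.prod_congr rfl fun j _ => (Finset.prod_zpow _ _ _).symm
    rw [h1, Finset.prod_comm]
    refine Finset.prod_congr rfl fun i _ => ?_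
    rw [zpow_sum'']
    exact Finset.prod_congr rfl fun j _ => by rw [← zpow_mul]
  have hdiff_one : ∀ (u v : Fin (n+1) → ℤ), (∏ i, τ i ^ u i) = (∏ i, τ i ^ v i) →
      (∏ i, τ i ^ (u i - v i)) = 1 := by
    intro u v huv
    have h2 : (∏ i, τ i ^ (u i - v i)) = (∏ i, τ i ^ u i) * (∏ i, τ i ^ v i)⁻¹ := by
      rw [← Finset.prod_inv_distrib, ← Finset.prod_mul_distrib]
      exact Finset.prod_congr rfl fun i _ => by
        rw [← _root_.zpow_neg, ← _root_.zpow_add, sub_eq_add_neg]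
    rw [h2, huv, mul_inv_eq_one]
  constructor
  · -- existence of representatives
    intro σ hσ
    have hrepr_τ : ∀ g : G, ∃ a : Fin (n+1) → ℤ, g = ∏ i, τ i ^ a i := by
      intro g
      have hle : (⨆ i, Subgroup.zpowers (τ i)) ≤ reprSub τ := iSup_le fun i x hx => by
        obtain ⟨kk, rfl⟩ := Subgroup.mem_zpowers_iff.1 hx
        exact Subgroup.zpow_mem _ (self_mem_reprSub τ i) kk
      exact hle (hsup.ge (Subgroup.mem_top g))
    have hrepr_σ : ∀ g : G, ∃ x : Fin (n+1) → ℤ, g = ∏ j, σ j ^ x j := by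
      intro g
      have hle : Subgroup.closure (Set.range σ) ≤ reprSub σ := by
        rw [Subgroup.closure_le]
        rintro x ⟨i, rfl⟩
        exact self_mem_reprSub σ i
      exact hle (hσ.ge (Subgroup.mem_top g))
    choose a ha using fun j => hrepr_τ (σ j)
    set A : Matrix (Fin (n+1)) (Fin (n+1)) ℤ := Matrix.of (fun i j => a j i) with hA
    have hAe : ∀ j, σ j = ∏ i, τ i ^ A i j := ha
    have hsurjA : ∀ t : Fin (n+1) → ℤ, ∃ x, ∀ i, (d i : ℤ) ∣ A.mulVec x i - t i := by
      intro t
      obtain ⟨x, hx⟩ := hrepr_σ (∏ i, τ i ^ t i)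
      refine ⟨x, fun i => ?_⟩
      apply hind
      apply hdiff_one
      have h1 : (∏ j, σ j ^ x j) = ∏ i, τ i ^ (A.mulVec x i) := by
        rw [show (∏ j, σ j ^ x j) = ∏ j, (∏ i, τ i ^ A i j) ^ x j from
          Finset.prod_congr rfl fun j _ => by rw [← hAe j]]
        exact hprod_swap A x
      rw [← h1, ← hx]
    obtain ⟨P, p, hPu, hp2, hpg, hcong⟩ := key n d hdpos hchain A hsurjA
    refine ⟨P, p, hPu, hp2, hpg, ?_⟩
    funext j
    have h1 : (∏ i, σ i ^ P i j) = ∏ k, τ k ^ ((A * P) k j) := by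
      rw [show (∏ i, σ i ^ P i j) = ∏ i, (∏ k, τ k ^ A k i) ^ P i j from
        Finset.prod_congr rfl fun i _ => by rw [← hAe i]]
      rw [hprod_swap A (fun i => P i j)]
      exact Finset.prod_congr rfl fun k _ => by rw [Matrix.mul_apply]
    rw [h1]
    have h2 : ∀ k, τ k ^ ((A * P) k j) =
        τ k ^ (if k = j then (if k = Fin.last n then (p : ℤ) else 1) else 0) := by
      intro k
      obtain ⟨c, hc⟩ := hcong k j
      have he : (A * P) k j =
          (if k = j then (if k = Fin.last n then (p : ℤ) else 1) else 0) + (d k : ℤ) * c := by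
        linarith [hc]
      rw [he, _root_.zpow_add]
      have hone : τ k ^ ((d k : ℤ) * c) = 1 := by
        rw [zpow_mul, zpow_natCast, pow_orderOf_eq_one, one_zpow]
      rw [hone, mul_one]
    rw [Finset.prod_congr rfl (fun k _ => h2 k), prodE]
  · -- distinctness
    rintro p₁ p₂ hp1le hp1g hp2le hp2g ⟨P, hPu, heq⟩
    set N := d (Fin.last n) with hN
    have hNpos : 0 < N := hdpos _
    haveI : NeZero N := ⟨hNpos.ne'⟩
    have hNe : N = orderOf (τ (Fin.last n)) := rfl
    rw [← hNe] at hp1le hp2le hp1g hp2g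
    have hcg : ∀ i j : Fin (n+1), (d i : ℤ) ∣
        (if i = Fin.last n then (p₁ : ℤ) else 1) * P i j -
        (if i = j then (if i = Fin.last n then (p₂ : ℤ) else 1) else 0) := by
      intro i j
      have hj := congrFun heq j
      have hL : (∏ i, (Function.update τ (Fin.last n) (τ (Fin.last n) ^ p₁)) i ^ P i j) =
          ∏ i, τ i ^ ((if i = Fin.last n then (p₁ : ℤ) else 1) * P i j) :=
        Finset.prod_congr rfl fun i _ => by rw [updE, ← zpow_mul]
      have hcomb : (∏ i, τ i ^ (((if i = Fin.last n then (p₁ : ℤ) else 1) * P i j) -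
          (if i = j then (if i = Fin.last n then (p₂ : ℤ) else 1) else 0))) = 1 := by
        apply hdiff_one
        rw [← hL, prodE τ p₂ j]
        exact hj
      exact hind _ hcomb i
    have hcgN : ∀ i j : Fin (n+1), ((N : ℤ) ∣
        (if i = Fin.last n then (p₁ : ℤ) else 1) * P i j -
        (if i = j then (if i = Fin.last n then (p₂ : ℤ) else 1) else 0)) :=
      fun i j => (Int.natCast_dvd_natCast.2 (hchain i (Fin.last n) (Fin.le_last i))).trans
        (hcg i j)
    -- work in ZMod N
    have hzA : ∀ i j : Fin (n+1), i ≠ Fin.last n →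
        ((P i j : ℤ) : ZMod N) = if i = j then 1 else 0 := by
      intro i j hi
      have h := hcgN i j
      rw [if_neg hi, one_mul] at h
      by_cases hij : i = j
      · rw [if_pos hij, if_neg (hij ▸ hi)] at h
        rw [if_pos hij]
        have h2 := (ZMod.intCast_zmod_eq_zero_iff_dvd _ N).2 h
        push_cast at h2
        rwa [sub_eq_zero] at h2
      · rw [if_neg hij] at h
        rw [if_neg hij]
        have h2 := (ZMod.intCast_zmod_eq_zero_iff_dvd _ N).2 h
        push_cast at h2
        rwa [sub_zero] at h2
    have hzB : ∀ j : Fin (n+1), j ≠ Fin.last n →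
        (p₁ : ZMod N) * ((P (Fin.last n) j : ℤ) : ZMod N) = 0 := by
      intro j hj
      have h := hcgN (Fin.last n) j
      rw [if_pos rfl, if_neg (fun hc => hj (hc.symm))] at h
      have h2 := (ZMod.intCast_zmod_eq_zero_iff_dvd _ N).2 h
      push_cast at h2
      rwa [sub_zero] at h2
    have hzC : (p₁ : ZMod N) * ((P (Fin.last n) (Fin.last n) : ℤ) : ZMod N) = (p₂ : ZMod N) := by
      have h := hcgN (Fin.last n) (Fin.last n)
      rw [if_pos rfl, if_pos rfl, if_pos rfl] at h
      have h2 := (ZMod.intCast_zmod_eq_zero_iff_dvd _ N).2 h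
      push_cast at h2
      rwa [sub_eq_zero] at h2
    -- p₁ is invertible mod N
    have hbez : (p₁ : ℤ) * Int.gcdA (p₁ : ℤ) (N : ℤ) + (N : ℤ) * Int.gcdB (p₁ : ℤ) (N : ℤ) = 1 := by
      have h := (Int.gcd_eq_gcd_ab ((p₁ : ℕ) : ℤ) ((N : ℕ) : ℤ)).symm
      rwa [Int.gcd_natCast_natCast, hp1g, Nat.cast_one] at h
    obtain ⟨u, hu⟩ : ∃ u : ZMod N, (p₁ : ZMod N) * u = 1 := by
      refine ⟨((Int.gcdA (p₁ : ℤ) (N : ℤ) : ℤ) : ZMod N), ?_⟩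
      have h := congrArg (fun z : ℤ => (z : ZMod N)) hbez
      push_cast at h
      rwa [ZMod.natCast_self, zero_mul, add_zero] at h
    set vdiag : Fin (n+1) → ZMod N :=
      fun i => if i = Fin.last n then ((P (Fin.last n) (Fin.last n) : ℤ) : ZMod N) else 1
      with hvdiag
    set Q : Matrix (Fin (n+1)) (Fin (n+1)) (ZMod N) :=
      (Int.castRingHom (ZMod N)).mapMatrix P with hQ
    have hQd : Q = Matrix.diagonal vdiag := by
      ext i j
      rw [Matrix.diagonal_apply]
      have hQij : Q i j = ((P i j : ℤ) : ZMod N) := rfl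
      by_cases hi : i = Fin.last n
      · subst hi
        by_cases hij : (Fin.last n : Fin (n+1)) = j
        · rw [if_pos hij, hQij, ← hij]
          simp [hvdiag]
        · rw [if_neg hij, hQij]
          have hjl : j ≠ Fin.last n := fun h => hij h.symm
          calc ((P (Fin.last n) j : ℤ) : ZMod N)
              = 1 * ((P (Fin.last n) j : ℤ) : ZMod N) := (one_mul _).symm
            _ = (u * (p₁ : ZMod N)) * ((P (Fin.last n) j : ℤ) : ZMod N) := by
                rw [mul_comm u, hu]
            _ = u * ((p₁ : ZMod N) * ((P (Fin.last n) j : ℤ) : ZMod N)) := by ring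
            _ = 0 := by rw [hzB j hjl, mul_zero]
      · rw [hQij, hzA i j hi]
        simp only [hvdiag]
        by_cases hij : i = j
        · rw [if_pos hij, if_pos hij, if_neg hi]
        · rw [if_neg hij, if_neg hij]
    have hdetQ : Q.det = ((P (Fin.last n) (Fin.last n) : ℤ) : ZMod N) := by
      rw [hQd, Matrix.det_diagonal,
        Finset.prod_eq_single (Fin.last n)
          (fun k _ hk => by simp [hvdiag, hk])
          (fun h => absurd (Finset.mem_univ _) h)]
      simp [hvdiag]
    have hdetQ2 : Q.det = ((P.det : ℤ) : ZMod N) := by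
      rw [hQ, ← RingHom.map_det]
      rfl
    have hPll : ((P (Fin.last n) (Fin.last n) : ℤ) : ZMod N) = ((P.det : ℤ) : ZMod N) := by
      rw [← hdetQ, hdetQ2]
    have hlt1 : p₁ < N := by omega
    have hlt2 : p₂ < N := by omega
    rcases Int.isUnit_iff.1 hPu with h1 | h1
    · have hpp : (p₁ : ZMod N) = (p₂ : ZMod N) := by
        rw [← hzC, hPll, h1]
        push_cast
        rw [mul_one]
      exact Nat.ModEq.eq_of_lt_of_lt ((ZMod.natCast_eq_natCast_iff _ _ _).1 hpp) hlt1 hlt2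
    · have hsum : (((p₁ + p₂ : ℕ)) : ZMod N) = 0 := by
        push_cast
        have : (p₂ : ZMod N) = -(p₁ : ZMod N) := by
          rw [← hzC, hPll, h1]
          push_cast
          ring
        rw [this]
        ring
      have hdvd2 : N ∣ p₁ + p₂ := (ZMod.natCast_eq_zero_iff _ _).1 hsum
      by_cases hzero : p₁ + p₂ = 0
      · omega
      · have hge := Nat.le_of_dvd (Nat.pos_of_ne_zero hzero) hdvd2
        have heqN : p₁ + p₂ = N := by omega
        have hp1N : p₁ ∣ N := ⟨2, by omega⟩
        have hgl := Nat.gcd_eq_left hp1N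
        rw [hp1g] at hgl
        omega
end

section
/- Let G be a finite abelian group with minimal number of generators r ≤ n. Then every orbit of the right GLₙ(ℤ)-action on the set of generating n-tuples of G contains a tuple (σ₁,…,σₙ) with |G| = |σ₁| ⋯ |σₙ| (product of the orders of the entries). -/
/-- If a finite abelian group `G` can be generated by `n` elements, then every orbit of the
right `GLₙ(ℤ)`-action on generating `n`-tuples contains a tuple `(σ₁, …, σₙ)` with
`|G| = |σ₁| ⋯ |σₙ|`. -/
theorem stmt5 {G : Type*} [CommGroup G] [Finite G] (n : ℕ)
    (hmg : ∃ τ : Fin n → G, Subgroup.closure (Set.range τ) = ⊤) :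
    ∀ σ : Fin n → G, Subgroup.closure (Set.range σ) = ⊤ →
      ∃ P : Matrix (Fin n) (Fin n) ℤ, IsUnit P.det ∧
        ∏ j, orderOf (∏ i, σ i ^ P i j) = Nat.card G := by
  intro σ hσ
  classical
  set v : Fin n → Additive G := fun i => Additive.ofMul (σ i) with hv
  set f : (Fin n → ℤ) →ₗ[ℤ] Additive G := Fintype.linearCombination ℤ v with hfdef
  have hfapp : ∀ x : Fin n → ℤ, f x = ∑ i, x i • v i := fun x => rfl
  -- f is surjective
  have hf : Function.Surjective f := by
    have hmem : ∀ i, v i ∈ LinearMap.range f := by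
      intro i
      refine ⟨Pi.single i 1, ?_⟩
      rw [hfapp]
      rw [Finset.sum_eq_single i]
      · simp
      · intro j _ hj; simp [Pi.single_eq_of_ne hj]
      · simp
    intro g
    have hg : Additive.toMul g ∈ Subgroup.closure (Set.range σ) := hσ ▸ Subgroup.mem_top _
    have key : ∀ x : G, x ∈ Subgroup.closure (Set.range σ) →
        Additive.ofMul x ∈ LinearMap.range f := by
      intro x hx
      induction hx using Subgroup.closure_induction with
      | mem y hy => obtain ⟨i, rfl⟩ := hy; exact hmem i
      | one => rw [ofMul_one]; exact zero_mem _
      | mul y z _ _ hy hz => rw [ofMul_mul]; exact add_mem hy hz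
      | inv y _ hy => rw [ofMul_inv]; exact neg_mem hy
    exact key (Additive.toMul g) hg
  set K := LinearMap.ker f with hK
  obtain ⟨m, ⟨bM, bN, emb, a, snf⟩⟩ := Submodule.smithNormalForm (Pi.basisFun ℤ (Fin n)) K
  -- the quotient is equivalent to G, hence finite
  set fbar : ((Fin n → ℤ) ⧸ K) →ₗ[ℤ] Additive G := K.liftQ f le_rfl with hfbar
  have hfbar_mk : ∀ x, fbar (Submodule.Quotient.mk x) = f x := fun x => rfl
  have hinj : Function.Injective fbar := by
    rw [← LinearMap.ker_eq_bot]
    exact Submodule.ker_liftQ_eq_bot _ _ _ le_rfl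
  have hsurj : Function.Surjective fbar := fun g => by
    obtain ⟨x, hx⟩ := hf g; exact ⟨Submodule.Quotient.mk x, hx⟩
  set e₀ : ((Fin n → ℤ) ⧸ K) ≃ₗ[ℤ] Additive G := LinearEquiv.ofBijective fbar ⟨hinj, hsurj⟩
    with he₀
  have hfin : Finite ((Fin n → ℤ) ⧸ K) := Finite.of_equiv _ e₀.toEquiv.symm
  -- the embedding is surjective
  have hembsurj : Function.Surjective emb := by
    intro j
    by_contra hj
    have hj' : j ∉ Set.range emb := by simpa using hj
    have hle : K ≤ LinearMap.ker (bM.coord j) :=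
      Module.Basis.SmithNormalForm.le_ker_coord_of_notMem_range ⟨bM, bN, emb, a, snf⟩ hj'
    set g : ((Fin n → ℤ) ⧸ K) →ₗ[ℤ] ℤ := K.liftQ (bM.coord j) hle with hg
    have hgsurj : Function.Surjective g := by
      intro z
      refine ⟨z • Submodule.Quotient.mk (bM j), ?_⟩
      rw [map_smul]
      have h1 : g (Submodule.Quotient.mk (bM j)) = bM.coord j (bM j) := rfl
      rw [h1, Module.Basis.coord_apply, Module.Basis.repr_self]
      simp
    exact Int.infinite.not_finite (Finite.of_surjective g hgsurj)
  set eqv : Fin m ≃ Fin n := Equiv.ofBijective emb ⟨emb.injective, hembsurj⟩ with heqv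
  set c : Fin n → ℤ := fun j => a (eqv.symm j) with hc
  -- K is the span of the c j • bM j
  have hKspan : K = Submodule.span ℤ (Set.range fun j => c j • bM j) := by
    have h1 : K = Submodule.map K.subtype ⊤ := by
      rw [Submodule.map_top, Submodule.range_subtype]
    rw [h1, ← bN.span_eq, Submodule.map_span]
    congr 1
    rw [← Set.range_comp]
    have : (K.subtype ∘ bN) = (fun j => c j • bM j) ∘ eqv := by
      funext i
      show (bN i : Fin n → ℤ) = c (eqv i) • bM (eqv i)
      have h2 : c (eqv i) = a i := by
        show a (eqv.symm (eqv i)) = a i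
        rw [Equiv.symm_apply_apply]
      have h3 : eqv i = emb i := rfl
      rw [h2, h3]
      exact snf i
    rw [this, Set.range_comp, Equiv.range_eq_univ, Set.image_univ]
  -- image of K under coordinates
  have hKmap : K.map (bM.equivFun : (Fin n → ℤ) →ₗ[ℤ] (Fin n → ℤ))
      = Submodule.pi Set.univ (fun j => Ideal.span {c j}) := by
    rw [hKspan, Submodule.map_span]
    have himg : (bM.equivFun : (Fin n → ℤ) →ₗ[ℤ] (Fin n → ℤ)) ''
        (Set.range fun j => c j • bM j) = Set.range fun j => c j • Pi.single j (1 : ℤ) := by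
      rw [← Set.range_comp]
      have hcomp : ((bM.equivFun : (Fin n → ℤ) →ₗ[ℤ] (Fin n → ℤ)) : (Fin n → ℤ) → (Fin n → ℤ))
          ∘ (fun j => c j • bM j) = fun j => c j • Pi.single j (1 : ℤ) := by
        funext j
        show bM.equivFun (c j • bM j) = c j • Pi.single j (1 : ℤ)
        rw [map_smul]
        congr 1
        funext i
        rw [Module.Basis.equivFun_apply, Module.Basis.repr_self]
        by_cases h : i = j
        · subst h; simp
        · simp [Finsupp.single_apply, Pi.single_apply, h, Ne.symm h]
      rw [hcomp]
    rw [himg]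
    apply le_antisymm
    · rw [Submodule.span_le]
      rintro x ⟨j, rfl⟩
      intro j' _
      by_cases h : j' = j
      · subst h
        simp only [Pi.smul_apply, Pi.single_eq_same, smul_eq_mul, mul_one]
        exact Ideal.subset_span rfl
      · simp only [Pi.smul_apply, Pi.single_eq_of_ne h, smul_eq_mul, mul_zero]
        exact Submodule.zero_mem _
    · intro x hx
      have hx' : ∀ j, c j ∣ x j := fun j =>
        Ideal.mem_span_singleton.mp (hx j (Set.mem_univ j))
      choose e he using hx'
      have hxe : x = ∑ j, e j • (c j • Pi.single j (1 : ℤ)) := by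
        funext i
        simp only [Finset.sum_apply, Pi.smul_apply, smul_eq_mul]
        rw [Finset.sum_eq_single i]
        · simp only [Pi.smul_apply, smul_eq_mul, Pi.single_eq_same, mul_one]
          rw [he i, mul_comm]
        · intro j _ hj; simp [Pi.single_eq_of_ne (Ne.symm hj)]
        · simp
      rw [hxe]
      exact Submodule.sum_mem _ fun j _ =>
        Submodule.smul_mem _ _ (Submodule.subset_span ⟨j, rfl⟩)
  -- chain of equivalences
  set e₁ : ((Fin n → ℤ) ⧸ K) ≃ₗ[ℤ]
      ((Fin n → ℤ) ⧸ Submodule.pi Set.univ (fun j => Ideal.span {c j})) :=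
    Submodule.Quotient.equiv K _ bM.equivFun hKmap with he₁
  set e₂ := Submodule.quotientPi (Ms := fun _ : Fin n => ℤ) (fun j => Ideal.span {c j}) with he₂
  set e₃ : (∀ j, ℤ ⧸ Ideal.span ({c j} : Set ℤ)) ≃+ ∀ j, ZMod (c j).natAbs :=
    AddEquiv.piCongrRight (fun j => (Int.quotientSpanEquivZMod (c j)).toAddEquiv) with he₃
  set E : Additive G ≃+ ∀ j, ZMod (c j).natAbs :=
    (e₀.symm.toAddEquiv.trans e₁.toAddEquiv).trans (e₂.toAddEquiv.trans e₃) with hE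
  -- key computation : E (f (bM j)) = Pi.single j 1
  have hEf : ∀ j, E (f (bM j)) = Pi.single j (1 : ZMod (c j).natAbs) := by
    intro j
    have h0 : e₀.symm (f (bM j)) = Submodule.Quotient.mk (bM j) := by
      rw [LinearEquiv.symm_apply_eq]
      exact (hfbar_mk (bM j)).symm
    have h1 : e₁ (Submodule.Quotient.mk (bM j)) = Submodule.Quotient.mk (bM.equivFun (bM j)) := by
      simp [he₁, Submodule.Quotient.equiv_apply, Submodule.mapQ_apply]
    have hsingle : bM.equivFun (bM j) = Pi.single j (1 : ℤ) := by
      funext i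
      rw [Module.Basis.equivFun_apply, Module.Basis.repr_self]
      by_cases h : i = j
      · subst h; simp
      · simp [Finsupp.single_apply, Pi.single_apply, h, Ne.symm h]
    have h2 : ∀ y : Fin n → ℤ, e₂ (Submodule.Quotient.mk y)
        = fun j' => (Submodule.Quotient.mk (y j') : ℤ ⧸ Ideal.span ({c j'} : Set ℤ)) := by
      intro y
      funext j'
      simp [he₂, Submodule.quotientPi_apply]
    have hEdef : E (f (bM j)) = e₃ (e₂ (e₁ (e₀.symm (f (bM j))))) := rfl
    rw [hEdef, h0, h1, hsingle, h2]
    funext j'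
    simp only [he₃, AddEquiv.piCongrRight_apply, RingEquiv.toAddEquiv_eq_coe,
      RingEquiv.coe_toAddEquiv]
    by_cases h : j' = j
    · subst h
      simp only [Pi.single_eq_same]
      rw [show ((Submodule.Quotient.mk (1:ℤ)) : ℤ ⧸ Ideal.span ({c j'} : Set ℤ))
        = Ideal.Quotient.mk (Ideal.span ({c j'} : Set ℤ)) 1 from rfl]
      rw [map_one, map_one]
    · simp only [Pi.single_eq_of_ne h]
      rw [show ((Submodule.Quotient.mk (0:ℤ)) : ℤ ⧸ Ideal.span ({c j'} : Set ℤ))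
        = Ideal.Quotient.mk (Ideal.span ({c j'} : Set ℤ)) 0 from rfl]
      rw [map_zero, map_zero]
  -- the matrix
  refine ⟨Matrix.of (fun i j => bM j i), ?_, ?_⟩
  · have hPeq : Matrix.of (fun i j => bM j i) = (Pi.basisFun ℤ (Fin n)).toMatrix bM := by
      funext i j
      simp [Module.Basis.toMatrix_apply]
    rw [hPeq]
    have hmul := Module.Basis.toMatrix_mul_toMatrix_flip (Pi.basisFun ℤ (Fin n)) bM
    have := congrArg Matrix.det hmul
    rw [Matrix.det_mul, Matrix.det_one] at this
    exact IsUnit.of_mul_eq_one _ this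
  · have horder : ∀ j, orderOf (∏ i, σ i ^ (Matrix.of (fun i j => bM j i)) i j)
        = (c j).natAbs := by
      intro j
      have hofMul : Additive.ofMul (∏ i, σ i ^ (Matrix.of (fun i j => bM j i)) i j)
          = f (bM j) := by
        rw [ofMul_prod, hfapp]
        refine Finset.sum_congr rfl fun i _ => ?_
        rw [ofMul_zpow]
        rfl
      rw [← addOrderOf_ofMul_eq_orderOf, hofMul]
      have hE' : addOrderOf (f (bM j)) = addOrderOf (E (f (bM j))) :=
        (addOrderOf_injective E.toAddMonoidHom E.injective _).symm
      rw [hE', hEf j]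
      have hsinj : Function.Injective (AddMonoidHom.single (fun j' => ZMod (c j').natAbs) j) := by
        intro x y hxy
        have := congrFun hxy j
        simpa using this
      have : Pi.single j (1 : ZMod (c j).natAbs)
          = AddMonoidHom.single (fun j' => ZMod (c j').natAbs) j 1 := rfl
      rw [this, addOrderOf_injective _ hsinj 1]
      exact ZMod.addOrderOf_one _
    rw [Finset.prod_congr rfl (fun j _ => horder j)]
    have hcard : Nat.card G = Nat.card (∀ j, ZMod (c j).natAbs) :=
      Nat.card_congr ((Additive.ofMul (α := G)).trans E.toEquiv)
    rw [hcard, Nat.card_pi]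
    exact Finset.prod_congr rfl fun j _ => (Nat.card_zmod _).symm
end

section
/- Let σ₁,…,σₙ be commuting finite-order automorphisms of an algebra 𝒜 with σ_i^{m_i} = 1 over an algebraically closed field of characteristic 0. The ℤⁿ-support of the multiloop algebra M_m(𝒜,σ) generates ℤⁿ as a group if and only if |⟨σ₁,…,σₙ⟩| = m₁⋯mₙ. -/
section Aux

variable {k 𝒜 : Type*} [Field k] [AddCommGroup 𝒜] [Module k 𝒜]

private lemma aux_mul_apply (f g : 𝒜 ≃ₗ[k] 𝒜) (x : 𝒜) : (f * g) x = f (g x) := rfl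

private lemma aux_zpow_eigen (g : 𝒜 ≃ₗ[k] 𝒜) {c : k} (hc : c ≠ 0) {v : 𝒜} (h : g v = c • v) :
    ∀ a : ℤ, (g ^ a) v = (c ^ a) • v := by
  have hnat : ∀ a : ℕ, (g ^ a) v = (c ^ a) • v := by
    intro a
    induction a with
    | zero => simp
    | succ a ih =>
      have : (g ^ (a + 1)) v = (g ^ a) (g v) := by rw [pow_succ]; rfl
      rw [this, h, map_smul, ih, smul_smul, pow_succ, mul_comm]
  intro a
  cases a with
  | ofNat a => simpa using hnat a
  | negSucc a =>
    have h1 := hnat (a + 1)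
    have hc1 : c ^ (a + 1) ≠ 0 := pow_ne_zero _ hc
    rw [zpow_negSucc, zpow_negSucc]
    have key : (g ^ (a + 1)) ((c ^ (a + 1))⁻¹ • v) = v := by
      rw [map_smul, h1, smul_smul, inv_mul_cancel₀ hc1, one_smul]
    have := congrArg (⇑(g ^ (a + 1))⁻¹) key
    rw [← aux_mul_apply, inv_mul_cancel] at this
    simpa [LinearEquiv.coe_one] using this.symm

private lemma aux_smul_cancel {c : k} {u : 𝒜} (hu : u ≠ 0) (h : c • u = u) : c = 1 := by
  by_contra hc
  have h1 : (c - 1) • u = 0 := by rw [sub_smul, one_smul, h, sub_self]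
  have h3 := congrArg (fun z => (c - 1)⁻¹ • z) h1
  simp only [smul_smul, inv_mul_cancel₀ (sub_ne_zero.mpr hc), one_smul, smul_zero] at h3
  exact hu h3

private lemma aux_span_eigen [CharZero k] {n : ℕ} (m : Fin n → ℕ) (hm : ∀ i, 0 < m i)
    (σ : Fin n → (𝒜 ≃ₗ[k] 𝒜))
    (hcomm : ∀ i j x, σ i (σ j x) = σ j (σ i x))
    (hord : ∀ i x, (⇑(σ i))^[m i] x = x)
    (ζ : Fin n → k) (hζ : ∀ i, IsPrimitiveRoot (ζ i) (m i)) :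
    Submodule.span k {v : 𝒜 | ∃ lam : Fin n → ℤ, ∀ j, σ j v = (ζ j ^ lam j) • v} = ⊤ := by
  classical
  have hpow1 : ∀ i, (σ i) ^ (m i) = 1 :=
    fun i => LinearEquiv.ext fun x => by simpa [LinearEquiv.pow_apply] using hord i x
  have hζ0 : ∀ i, ζ i ≠ 0 := fun i => (hζ i).ne_zero (hm i).ne'
  set E : ℕ → Set 𝒜 := fun t =>
    {v | ∃ lam : Fin n → ℤ, ∀ j : Fin n, (j : ℕ) < t → σ j v = (ζ j ^ lam j) • v} with hE
  have hstep : ∀ t, E t ⊆ ↑(Submodule.span k (E (t + 1))) := by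
    intro t v hv
    obtain ⟨lam, hlam⟩ := hv
    by_cases ht : t < n
    · set i₀ : Fin n := ⟨t, ht⟩ with hi₀
      set g := σ i₀ with hg
      set M₀ := m i₀ with hM₀
      set ξ : k := (ζ i₀)⁻¹ with hξ
      have hξprim : IsPrimitiveRoot ξ M₀ := (hζ i₀).inv
      have hξM : ξ ^ M₀ = 1 := hξprim.pow_eq_one
      have hM0k : (M₀ : k) ≠ 0 := Nat.cast_ne_zero.mpr (hm i₀).ne'
      have hgsucc : ∀ (a : ℕ) (y : 𝒜), (g ^ (a + 1)) y = g ((g ^ a) y) :=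
        fun a y => by rw [pow_succ']; rfl
      have hgM : ∀ y : 𝒜, (g ^ M₀) y = y := fun y => by rw [hpow1 i₀]; rfl
      set w : ℕ → 𝒜 := fun r =>
        (M₀ : k)⁻¹ • ∑ a ∈ Finset.range M₀, ξ ^ (r * a) • (g ^ a) v with hw
      have hsum : ∑ r ∈ Finset.range M₀, w r = v := by
        calc ∑ r ∈ Finset.range M₀, w r
            = (M₀ : k)⁻¹ • ∑ r ∈ Finset.range M₀, ∑ a ∈ Finset.range M₀,
                ξ ^ (r * a) • (g ^ a) v := by rw [Finset.smul_sum]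
          _ = (M₀ : k)⁻¹ • ∑ a ∈ Finset.range M₀,
                (∑ r ∈ Finset.range M₀, (ξ ^ a) ^ r) • (g ^ a) v := by
                rw [Finset.sum_comm]
                congr 1
                refine Finset.sum_congr rfl fun a _ => ?_
                rw [Finset.sum_smul]
                exact Finset.sum_congr rfl fun r _ => by rw [← pow_mul']
          _ = (M₀ : k)⁻¹ • ((M₀ : k) • v) := by
                congr 1
                rw [Finset.sum_eq_single 0]
                · simp
                · intro a ha ha0
                  have h1 : 0 < a := Nat.pos_of_ne_zero ha0
                  have h2 : a < M₀ := Finset.mem_range.mp ha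
                  have hne : ξ ^ a ≠ 1 := hξprim.pow_ne_one_of_pos_of_lt h1.ne' h2
                  have hzero : ∑ r ∈ Finset.range M₀, (ξ ^ a) ^ r = 0 := by
                    rw [geom_sum_eq hne]
                    rw [← pow_mul, mul_comm, pow_mul, hξM, one_pow, sub_self, zero_div]
                  rw [hzero, zero_smul]
                · intro h
                  exact absurd (Finset.mem_range.mpr (hm i₀)) h
          _ = v := by rw [smul_smul, inv_mul_cancel₀ hM0k, one_smul]
      have hwE : ∀ r, w r ∈ E (t + 1) := by
        intro r
        refine ⟨Function.update lam i₀ (r : ℤ), fun j hj => ?_⟩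
        rcases eq_or_ne j i₀ with rfl | hne
        · rw [Function.update_self, zpow_natCast]
          set G : ℕ → 𝒜 := fun a => ξ ^ (r * a) • (g ^ a) v with hG
          have hGM : G M₀ = G 0 := by
            simp only [hG]
            rw [pow_mul', hξM, one_pow, hgM]
            simp
          have hshift : ∑ a ∈ Finset.range M₀, G (a + 1) = ∑ a ∈ Finset.range M₀, G a := by
            have e1 := Finset.sum_range_succ G M₀
            have e2 := Finset.sum_range_succ' G M₀
            rw [hGM] at e1
            exact add_right_cancel (e2.symm.trans e1)
          have hterm : ∀ a : ℕ, ξ ^ (r * a) • (g ^ (a + 1)) v = ζ i₀ ^ r • G (a + 1) := by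
            intro a
            simp only [hG, smul_smul]
            congr 1
            have h1 : r * (a + 1) = r * a + r := by ring
            have h2 : ζ i₀ ^ r * ξ ^ r = 1 := by
              rw [hξ, ← mul_pow, mul_inv_cancel₀ (hζ0 i₀), one_pow]
            rw [h1, pow_add, mul_comm (ξ ^ (r * a)) (ξ ^ r), ← mul_assoc, h2, one_mul]
          calc σ i₀ (w r)
              = (M₀ : k)⁻¹ • ∑ a ∈ Finset.range M₀, ξ ^ (r * a) • (g ^ (a + 1)) v := by
                simp only [hw, map_smul, map_sum]
                congr 1
                exact Finset.sum_congr rfl fun a _ => by rw [hgsucc]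
            _ = (M₀ : k)⁻¹ • (ζ i₀ ^ r • ∑ a ∈ Finset.range M₀, G (a + 1)) := by
                congr 1
                rw [Finset.smul_sum]
                exact Finset.sum_congr rfl fun a _ => hterm a
            _ = ζ i₀ ^ r • w r := by
                rw [hshift, smul_comm, hw]
        · have hjt : (j : ℕ) < t := by
            have hj' : (j : ℕ) ≠ t := fun h => hne (Fin.ext h)
            omega
          rw [Function.update_of_ne hne]
          have hcj : ∀ (a : ℕ) (x : 𝒜), σ j ((g ^ a) x) = (g ^ a) (σ j x) := by
            intro a
            induction a with
            | zero => intro x; simp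
            | succ a ih =>
              intro x
              rw [hgsucc, hgsucc, hg, hcomm j i₀, ih]
          calc σ j (w r)
              = (M₀ : k)⁻¹ • ∑ a ∈ Finset.range M₀, ξ ^ (r * a) •
                  ((ζ j ^ lam j) • (g ^ a) v) := by
                simp only [hw, map_smul, map_sum, hcj, hlam j hjt]
            _ = ζ j ^ lam j • w r := by
                rw [hw, smul_comm]
                congr 1
                rw [Finset.smul_sum]
                exact Finset.sum_congr rfl fun a _ => smul_comm _ _ _
      rw [SetLike.mem_coe, ← hsum]
      exact Submodule.sum_mem _ fun r _ => Submodule.subset_span (hwE r)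
    · exact Submodule.subset_span
        ⟨lam, fun j hj => hlam j (lt_of_lt_of_le j.isLt (not_lt.mp ht))⟩
  have hspan : ∀ t, Submodule.span k (E t) = ⊤ := by
    intro t
    induction t with
    | zero =>
      have h0 : E 0 = Set.univ :=
        Set.eq_univ_of_forall fun v => ⟨0, fun j hj => absurd hj (Nat.not_lt_zero _)⟩
      rw [h0, Submodule.span_univ]
    | succ t ih =>
      exact top_unique (ih ▸ Submodule.span_le.mpr (hstep t))
  have hEn : E n ⊆ {v : 𝒜 | ∃ lam : Fin n → ℤ, ∀ j, σ j v = (ζ j ^ lam j) • v} :=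
    fun v hv => by obtain ⟨lam, h⟩ := hv; exact ⟨lam, fun j => h j j.isLt⟩
  exact top_unique ((hspan n) ▸ Submodule.span_mono hEn)


end Aux

/-- The `ℤⁿ`-support of the multiloop algebra `M_m(𝒜, σ)` generates `ℤⁿ` as a group if and
only if `|⟨σ₁, …, σₙ⟩| = m₁ ⋯ mₙ`.  The support is the set of `λ ∈ ℤⁿ` for which the
simultaneous eigenspace `𝒜^{λ̄} = {u : σⱼ u = ζⱼ^{λⱼ} u}` is nonzero. -/
theorem stmt9 {k 𝒜 : Type*} [Field k] [CharZero k] [IsAlgClosed k]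
    [NonUnitalNonAssocRing 𝒜] [Module k 𝒜] [SMulCommClass k 𝒜 𝒜] [IsScalarTower k 𝒜 𝒜]
    [Nontrivial 𝒜]
    {n : ℕ} (m : Fin n → ℕ) (hm : ∀ i, 0 < m i)
    (σ : Fin n → (𝒜 ≃ₗ[k] 𝒜))
    (hmul : ∀ i (x y : 𝒜), σ i (x * y) = σ i x * σ i y)
    (hcomm : ∀ i j x, σ i (σ j x) = σ j (σ i x))
    (hord : ∀ i x, (⇑(σ i))^[m i] x = x)
    (ζ : Fin n → k) (hζ : ∀ i, IsPrimitiveRoot (ζ i) (m i)) :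
    AddSubgroup.closure
        {lam : Fin n → ℤ | ∃ u : 𝒜, u ≠ 0 ∧ ∀ j, σ j u = (ζ j ^ lam j) • u} = ⊤ ↔
      Nat.card (Subgroup.closure (Set.range σ)) = ∏ i, m i := by
  classical
  haveI : ∀ i, NeZero (m i) := fun i => ⟨(hm i).ne'⟩
  set S : Set (Fin n → ℤ) :=
    {lam : Fin n → ℤ | ∃ u : 𝒜, u ≠ 0 ∧ ∀ j, σ j u = (ζ j ^ lam j) • u} with hSdef
  set Eset : Set 𝒜 := {v : 𝒜 | ∃ lam : Fin n → ℤ, ∀ j, σ j v = (ζ j ^ lam j) • v} with hEdef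
  have hspan : Submodule.span k Eset = ⊤ := aux_span_eigen m hm σ hcomm hord ζ hζ
  have hζ0 : ∀ i, ζ i ≠ 0 := fun i => (hζ i).ne_zero (hm i).ne'
  have hpow1 : ∀ i, (σ i) ^ (m i) = 1 :=
    fun i => LinearEquiv.ext fun x => by simpa [LinearEquiv.pow_apply] using hord i x
  -- the group H
  set H := Subgroup.closure (Set.range σ) with hHdef
  have hcomm2 : ∀ x ∈ Set.range σ, ∀ y ∈ Set.range σ, x * y = y * x := by
    rintro x ⟨i, rfl⟩ y ⟨j, rfl⟩
    exact LinearEquiv.ext fun v => hcomm i j v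
  letI : CommGroup ↥H := Subgroup.closureCommGroupOfComm hcomm2
  set s : ∀ _ : Fin n, ↥H := fun i => ⟨σ i, Subgroup.subset_closure ⟨i, rfl⟩⟩ with hsdef
  set P : (Fin n → ℤ) → ↥H := fun μ => ∏ i, s i ^ μ i with hPdef
  have hPadd : ∀ μ ν, P (μ + ν) = P μ * P ν := by
    intro μ ν
    simp only [hPdef, Pi.add_apply, zpow_add]
    rw [Finset.prod_mul_distrib]
  have hcoe_mul : ∀ a b : ↥H, ((a * b : ↥H) : 𝒜 ≃ₗ[k] 𝒜) = (a : 𝒜 ≃ₗ[k] 𝒜) * b :=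
    fun _ _ => rfl
  have hcoe_zpow : ∀ (a : ↥H) (c : ℤ), ((a ^ c : ↥H) : 𝒜 ≃ₗ[k] 𝒜) = (a : 𝒜 ≃ₗ[k] 𝒜) ^ c :=
    fun a c => SubgroupClass.coe_zpow a c
  -- evaluation of P on simultaneous eigenvectors
  have heval : ∀ (μ lam : Fin n → ℤ) (v : 𝒜), (∀ j, σ j v = (ζ j ^ lam j) • v) →
      ((P μ : 𝒜 ≃ₗ[k] 𝒜)) v = (∏ i, ζ i ^ (lam i * μ i)) • v := by
    intro μ lam v hv
    have key : ∀ T : Finset (Fin n),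
        ((∏ i ∈ T, s i ^ μ i : ↥H) : 𝒜 ≃ₗ[k] 𝒜) v = (∏ i ∈ T, ζ i ^ (lam i * μ i)) • v := by
      intro T
      induction T using Finset.induction_on with
      | empty => simp
      | insert i T hiT ih =>
        rw [Finset.prod_insert hiT, Finset.prod_insert hiT, hcoe_mul, aux_mul_apply, ih,
          map_smul, hcoe_zpow]
        rw [aux_zpow_eigen (σ i) (zpow_ne_zero _ (hζ0 i)) (hv i) (μ i), smul_smul]
        congr 1
        rw [← zpow_mul, mul_comm]
    exact key Finset.univ
  -- m i ∣ μ i implies P μ = 1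
  have hs_pow : ∀ i, s i ^ (m i : ℤ) = 1 := by
    intro i
    apply Subtype.ext
    rw [hcoe_zpow, zpow_natCast]
    exact hpow1 i
  have hMker : ∀ μ : Fin n → ℤ, (∀ i, (m i : ℤ) ∣ μ i) → P μ = 1 := by
    intro μ hdvd
    simp only [hPdef]
    refine Finset.prod_eq_one fun i _ => ?_
    obtain ⟨c, hc⟩ := hdvd i
    rw [hc, zpow_mul, hs_pow, one_zpow]
  -- the pairing lemma
  have hpair : ∀ μ : Fin n → ℤ, (∀ lam ∈ S, ∏ i, ζ i ^ (lam i * μ i) = 1) → P μ = 1 := by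
    intro μ hchar
    have hfix : ∀ v ∈ Eset, ((P μ : 𝒜 ≃ₗ[k] 𝒜)) v = v := by
      intro v hv
      obtain ⟨lam, hlam⟩ := hv
      by_cases hv0 : v = 0
      · rw [hv0]; exact map_zero _
      · rw [heval μ lam v hlam, hchar lam ⟨v, hv0, hlam⟩, one_smul]
    have h2 : (P μ : 𝒜 ≃ₗ[k] 𝒜) = (1 : 𝒜 ≃ₗ[k] 𝒜) :=
      LinearEquiv.toLinearMap_injective (LinearMap.ext_on hspan fun x hx => hfix x hx)
    exact Subtype.ext h2
  -- surjectivity of P onto H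
  have hPsurj : ∀ g : ↥H, ∃ μ, P μ = g := by
    rintro ⟨gv, hgv⟩
    have main : ∃ μ, ((P μ : ↥H) : 𝒜 ≃ₗ[k] 𝒜) = gv := by
      refine Subgroup.closure_induction ?_ ?_ ?_ ?_ hgv
      · rintro x ⟨i, rfl⟩
        refine ⟨Pi.single i 1, ?_⟩
        have : P (Pi.single i 1) = s i := by
          simp only [hPdef]
          rw [Fintype.prod_eq_single i fun j hj => by rw [Pi.single_eq_of_ne hj, zpow_zero]]
          rw [Pi.single_eq_same, zpow_one]
        rw [this]
      · exact ⟨0, by simp [hPdef]⟩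
      · rintro x y hx hy ⟨μ, hμ⟩ ⟨ν, hν⟩
        exact ⟨μ + ν, by rw [hPadd, hcoe_mul, hμ, hν]⟩
      · rintro x hx ⟨μ, hμ⟩
        refine ⟨-μ, ?_⟩
        have h1 : P μ * P (-μ) = 1 := by
          rw [← hPadd, add_neg_cancel]
          exact hMker 0 fun i => dvd_zero _
        have h2 : P (-μ) = (P μ)⁻¹ := eq_inv_of_mul_eq_one_left (by rw [mul_comm]; exact h1)
        rw [h2]
        rw [show (((P μ)⁻¹ : ↥H) : 𝒜 ≃ₗ[k] 𝒜) = ((P μ : ↥H) : 𝒜 ≃ₗ[k] 𝒜)⁻¹ from rfl, hμ]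
    obtain ⟨μ, hμ⟩ := main
    exact ⟨μ, Subtype.ext hμ⟩
  -- ψ and its kernel
  set ψ : (Fin n → ℤ) →+ (∀ i, ZMod (m i)) :=
    AddMonoidHom.mk' (fun μ i => ((μ i : ℤ) : ZMod (m i)))
      (by intro a b; funext i; simp [Int.cast_add]) with hψdef
  have hψsurj : Function.Surjective ψ := by
    intro x
    choose y hy using fun i => ZMod.intCast_surjective (n := m i) (x i)
    exact ⟨y, funext hy⟩
  have hψmem : ∀ μ, μ ∈ ψ.ker ↔ ∀ i, (m i : ℤ) ∣ μ i := by
    intro μ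
    rw [AddMonoidHom.mem_ker]
    constructor
    · intro h i
      have h2 : ((μ i : ℤ) : ZMod (m i)) = 0 := congrFun h i
      rwa [ZMod.intCast_zmod_eq_zero_iff_dvd] at h2
    · intro h
      funext i
      show ((μ i : ℤ) : ZMod (m i)) = 0
      exact (ZMod.intCast_zmod_eq_zero_iff_dvd _ _).mpr (h i)
  have e1 : ((Fin n → ℤ) ⧸ ψ.ker) ≃+ (∀ i, ZMod (m i)) :=
    QuotientAddGroup.quotientKerEquivOfSurjective ψ hψsurj
  haveI : Finite ((Fin n → ℤ) ⧸ ψ.ker) := Finite.of_equiv _ e1.toEquiv.symm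
  have hcard1 : Nat.card ((Fin n → ℤ) ⧸ ψ.ker) = ∏ i, m i := by
    rw [Nat.card_congr e1.toEquiv, Nat.card_pi]
    exact Finset.prod_congr rfl fun i _ => Nat.card_zmod (m i)
  -- φ
  set φ : (Fin n → ℤ) →+ Additive ↥H :=
    AddMonoidHom.mk' (fun μ => Additive.ofMul (P μ))
      (fun a b => congrArg Additive.ofMul (hPadd a b)) with hφdef
  have hφsurj : Function.Surjective φ := fun g =>
    (hPsurj g.toMul).imp fun μ h => congrArg Additive.ofMul h
  have hφmem : ∀ μ, μ ∈ φ.ker ↔ P μ = 1 := by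
    intro μ
    rw [AddMonoidHom.mem_ker]
    exact ⟨fun h => by exact congrArg Additive.toMul h, fun h => by
      show Additive.ofMul (P μ) = 0
      rw [h]; rfl⟩
  have e2 : ((Fin n → ℤ) ⧸ φ.ker) ≃+ Additive ↥H :=
    QuotientAddGroup.quotientKerEquivOfSurjective φ hφsurj
  have hcardH : Nat.card ↥H = Nat.card ((Fin n → ℤ) ⧸ φ.ker) :=
    (Nat.card_congr (Additive.ofMul (α := ↥H))).trans (Nat.card_congr e2.toEquiv).symm
  have hker_ψ_le : ψ.ker ≤ φ.ker := fun μ hμ => (hφmem μ).mpr (hMker μ ((hψmem μ).mp hμ))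
  -- bridge 1 : the cardinality condition is equivalent to `ker φ = ker ψ`
  have bridge1 : φ.ker = ψ.ker ↔ Nat.card ↥H = ∏ i, m i := by
    constructor
    · intro h
      rw [hcardH, h, hcard1]
    · intro hc
      refine le_antisymm ?_ hker_ψ_le
      set q := QuotientAddGroup.map ψ.ker φ.ker (AddMonoidHom.id _)
        (fun x hx => hker_ψ_le hx) with hqdef
      have hqsurj : Function.Surjective q := by
        intro x
        obtain ⟨μ, rfl⟩ := QuotientAddGroup.mk_surjective x
        exact ⟨QuotientAddGroup.mk μ, rfl⟩
      have hbij : Function.Bijective q :=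
        (Nat.bijective_iff_surjective_and_card q).mpr
          ⟨hqsurj, by rw [hcard1, ← hc]; exact hcardH⟩
      intro μ hμ
      have h0 : q (QuotientAddGroup.mk μ) = 0 := by
        have h1 : q (QuotientAddGroup.mk μ) = QuotientAddGroup.mk μ := rfl
        rw [h1]
        exact (QuotientAddGroup.eq_zero_iff μ).mpr hμ
      have h2 := hbij.1 (h0.trans (map_zero q).symm)
      exact (QuotientAddGroup.eq_zero_iff μ).mp h2
  -- forward direction : closure S = ⊤ → ker φ = ker ψ
  have forward : AddSubgroup.closure S = ⊤ → φ.ker = ψ.ker := by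
    intro hLtop
    refine le_antisymm ?_ hker_ψ_le
    intro μ hμ
    have hP1 : P μ = 1 := (hφmem μ).mp hμ
    -- the character subgroup
    set K : AddSubgroup (Fin n → ℤ) :=
      { carrier := {lam | ∏ i, ζ i ^ (lam i * μ i) = 1}
        zero_mem' := by simp
        add_mem' := by
          intro a b ha hb
          simp only [Set.mem_setOf_eq, Pi.add_apply] at *
          have : ∀ i, ζ i ^ ((a i + b i) * μ i) = ζ i ^ (a i * μ i) * ζ i ^ (b i * μ i) := by
            intro i
            rw [add_mul, zpow_add₀ (hζ0 i)]
          rw [Finset.prod_congr rfl fun i _ => this i, Finset.prod_mul_distrib, ha, hb, mul_one]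
        neg_mem' := by
          intro a ha
          simp only [Set.mem_setOf_eq, Pi.neg_apply] at *
          have : ∀ i, ζ i ^ (-a i * μ i) = (ζ i ^ (a i * μ i))⁻¹ := by
            intro i
            rw [neg_mul, zpow_neg]
          rw [Finset.prod_congr rfl fun i _ => this i, Finset.prod_inv_distrib, ha, inv_one] }
      with hKdef
    have hSK : S ⊆ ↑K := by
      rintro lam ⟨u, hu0, hu⟩
      have h1 : ((P μ : 𝒜 ≃ₗ[k] 𝒜)) u = (∏ i, ζ i ^ (lam i * μ i)) • u := heval μ lam u hu
      rw [hP1] at h1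
      have h2 : (∏ i, ζ i ^ (lam i * μ i)) • u = u := by
        rw [← h1]; rfl
      exact aux_smul_cancel hu0 h2
    have hLK : AddSubgroup.closure S ≤ K := (AddSubgroup.closure_le K).mpr hSK
    rw [hψmem]
    intro i
    have hsingle : Pi.single i (1 : ℤ) ∈ K := hLK (hLtop ▸ AddSubgroup.mem_top _)
    have h3 : ∏ j, ζ j ^ ((Pi.single i (1 : ℤ) : Fin n → ℤ) j * μ j) = ζ i ^ μ i := by
      have hz : ∀ j : Fin n, j ≠ i → ζ j ^ ((Pi.single i (1 : ℤ) : Fin n → ℤ) j * μ j) = 1 := by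
        intro j hj
        rw [Pi.single_eq_of_ne hj, zero_mul, zpow_zero]
      rw [Fintype.prod_eq_single i hz, Pi.single_eq_same, one_mul]
    have h4 : ζ i ^ μ i = 1 := by rw [← h3]; exact hsingle
    exact ((hζ i).zpow_eq_one_iff_dvd (μ i)).mp h4
  -- S is nonempty, and contains translates by m i
  have hSne : ∃ lam, lam ∈ S := by
    obtain ⟨u₀, hu₀⟩ := exists_ne (0 : 𝒜)
    by_contra hno
    push_neg at hno
    have hE0 : Eset ⊆ ↑(⊥ : Submodule k 𝒜) := by
      rintro v ⟨lam, hv⟩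
      by_contra hv0
      rw [SetLike.mem_coe, Submodule.mem_bot] at hv0
      exact hno lam ⟨v, hv0, hv⟩
    have h1 : Submodule.span k Eset ≤ ⊥ := Submodule.span_le.mpr hE0
    rw [hspan] at h1
    exact hu₀ ((Submodule.mem_bot k).mp (h1 Submodule.mem_top))
  obtain ⟨lam₀, hlam₀S⟩ := hSne
  have hsingleL : ∀ i, Pi.single i ((m i : ℤ)) ∈ AddSubgroup.closure S := by
    intro i
    obtain ⟨u, hu0, hu⟩ := id hlam₀S
    have h1 : lam₀ + Pi.single i ((m i : ℤ)) ∈ S := by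
      refine ⟨u, hu0, fun j => ?_⟩
      rcases eq_or_ne j i with rfl | hne
      · rw [Pi.add_apply, Pi.single_eq_same, zpow_add₀ (hζ0 j), zpow_natCast,
          (hζ j).pow_eq_one, mul_one]
        exact hu j
      · rw [Pi.add_apply, Pi.single_eq_of_ne hne, add_zero]
        exact hu j
    have h2 : Pi.single i ((m i : ℤ)) = (lam₀ + Pi.single i ((m i : ℤ))) - lam₀ := by
      rw [add_sub_cancel_left]
    rw [h2]
    exact sub_mem (AddSubgroup.subset_closure h1) (AddSubgroup.subset_closure hlam₀S)
  have hψL : ψ.ker ≤ AddSubgroup.closure S := by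
    intro μ hμ
    rw [hψmem] at hμ
    have hrep : μ = ∑ i, Pi.single i (μ i) := (Finset.univ_sum_single μ).symm
    rw [hrep]
    refine AddSubgroup.sum_mem _ fun i _ => ?_
    obtain ⟨c, hc⟩ := hμ i
    have h5 : Pi.single i (μ i) = c • (Pi.single i ((m i : ℤ)) : Fin n → ℤ) := by
      have hps := Pi.single_smul (f := fun _ : Fin n => ℤ) i c ((m i : ℤ))
      rw [smul_eq_mul] at hps
      rw [hc, mul_comm ((m i : ℤ)) c, ← hps]
    rw [h5]
    exact AddSubgroup.zsmul_mem _ (hsingleL i) c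
  -- backward direction : ker φ = ker ψ → closure S = ⊤
  have backward : φ.ker = ψ.ker → AddSubgroup.closure S = ⊤ := by
    intro hkk
    by_contra hLne
    haveI : Finite ((Fin n → ℤ) ⧸ AddSubgroup.closure S) := by
      refine Finite.of_surjective (QuotientAddGroup.map ψ.ker (AddSubgroup.closure S)
        (AddMonoidHom.id _) (by intro x hx; exact hψL hx)) ?_
      intro x
      obtain ⟨μ, rfl⟩ := QuotientAddGroup.mk_surjective x
      exact ⟨QuotientAddGroup.mk μ, rfl⟩
    obtain ⟨μ₀, hμ₀⟩ : ∃ μ₀, μ₀ ∉ AddSubgroup.closure S := by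
      by_contra hall
      push_neg at hall
      exact hLne (AddSubgroup.eq_top_iff' _ |>.mpr hall)
    set G := Multiplicative ((Fin n → ℤ) ⧸ AddSubgroup.closure S) with hGdef
    have ha : (Multiplicative.ofAdd (QuotientAddGroup.mk (s := AddSubgroup.closure S) μ₀) : G)
        ≠ 1 := by
      intro h
      exact hμ₀ ((QuotientAddGroup.eq_zero_iff μ₀).mp (ofAdd_eq_one.mp h))
    haveI : NeZero ((Monoid.exponent G : k)) :=
      ⟨Nat.cast_ne_zero.mpr Monoid.exponent_ne_zero_of_finite⟩
    obtain ⟨χ, hχ⟩ := CommGroup.exists_apply_ne_one_of_hasEnoughRootsOfUnity G k ha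
    set X : (Fin n → ℤ) → kˣ := fun lam =>
      χ (Multiplicative.ofAdd (QuotientAddGroup.mk (s := AddSubgroup.closure S) lam)) with hXdef
    have hX1 : ∀ lam ∈ AddSubgroup.closure S, X lam = 1 := by
      intro lam h
      simp only [hXdef]
      rw [show QuotientAddGroup.mk (s := AddSubgroup.closure S) lam = 0 from
        (QuotientAddGroup.eq_zero_iff lam).mpr h]
      rw [ofAdd_zero, map_one]
    have hXadd : ∀ a b, X (a + b) = X a * X b := by
      intro a b
      simp only [hXdef]
      rw [show QuotientAddGroup.mk (s := AddSubgroup.closure S) (a + b) =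
        QuotientAddGroup.mk a + QuotientAddGroup.mk b from rfl, ofAdd_add, map_mul]
    have hXzsmul : ∀ (c : ℤ) a, X (c • a) = X a ^ c := by
      intro c a
      simp only [hXdef]
      rw [show QuotientAddGroup.mk (s := AddSubgroup.closure S) (c • a) =
        c • QuotientAddGroup.mk a from rfl, ofAdd_zsmul, map_zpow]
    have hX0 : X 0 = 1 := by
      simp only [hXdef]
      rw [show QuotientAddGroup.mk (s := AddSubgroup.closure S) 0 = 0 from rfl,
        ofAdd_zero, map_one]
    have hXsum : ∀ lam : Fin n → ℤ, X lam = ∏ i, (X (Pi.single i 1)) ^ (lam i) := by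
      intro lam
      have h2 : ∀ T : Finset (Fin n), X (∑ i ∈ T, Pi.single i (lam i)) =
          ∏ i ∈ T, (X (Pi.single i 1)) ^ (lam i) := by
        intro T
        induction T using Finset.induction_on with
        | empty => simpa using hX0
        | insert i T hiT ih =>
          rw [Finset.sum_insert hiT, Finset.prod_insert hiT, hXadd, ih]
          congr 1
          have h3 : Pi.single i (lam i) = lam i • (Pi.single i (1 : ℤ) : Fin n → ℤ) := by
            have hps := Pi.single_smul (f := fun _ : Fin n => ℤ) i (lam i) (1 : ℤ)
            rwa [smul_eq_mul, mul_one] at hps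
          rw [h3, hXzsmul]
      conv_lhs => rw [(Finset.univ_sum_single lam).symm]
      exact h2 Finset.univ
    set U : Fin n → kˣ := fun i => X (Pi.single i (1 : ℤ) : Fin n → ℤ) with hUdef
    have hUpow : ∀ i, (U i : k) ^ (m i) = 1 := by
      intro i
      have h1 : ((m i : ℤ) • (Pi.single i (1 : ℤ) : Fin n → ℤ)) ∈ AddSubgroup.closure S := by
        have hps := Pi.single_smul (f := fun _ : Fin n => ℤ) i ((m i : ℤ)) (1 : ℤ)
        rw [smul_eq_mul, mul_one] at hps
        rw [← hps]
        exact hsingleL i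
      have h2 : U i ^ ((m i : ℤ)) = 1 := by
        rw [hUdef, ← hXzsmul, hX1 _ h1]
      rw [zpow_natCast] at h2
      rw [← Units.val_pow_eq_pow_val, h2, Units.val_one]
    have hc' : ∀ i, ∃ c : ℕ, c < m i ∧ ζ i ^ c = (U i : k) :=
      fun i => (hζ i).eq_pow_of_pow_eq_one (hUpow i)
    choose c hclt hceq using hc'
    have hch : ∀ lam ∈ S, ∏ i, ζ i ^ (lam i * ((c i : ℤ))) = 1 := by
      intro lam hlamS
      have h1 : X lam = 1 := hX1 lam (AddSubgroup.subset_closure hlamS)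
      rw [hXsum] at h1
      have h3 : ∏ i, ((U i : k)) ^ (lam i) = 1 := by
        have h2 := congrArg (Units.coeHom k) h1
        rw [map_prod, map_one] at h2
        simpa [Units.val_zpow_eq_zpow_val] using h2
      calc ∏ i, ζ i ^ (lam i * ((c i : ℤ)))
          = ∏ i, ((U i : k)) ^ (lam i) := by
            refine Finset.prod_congr rfl fun i _ => ?_
            rw [← hceq i, ← zpow_natCast (ζ i) (c i), ← zpow_mul, mul_comm]
        _ = 1 := h3
    have hPc : P (fun i => ((c i : ℤ))) = 1 := hpair _ hch
    have hkerc : (fun i => ((c i : ℤ))) ∈ ψ.ker := by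
      rw [← hkk]
      exact (hφmem _).mpr hPc
    have hc0 : ∀ i, c i = 0 := by
      intro i
      have h1 := (hψmem _).mp hkerc i
      have h2 : m i ∣ c i := by exact_mod_cast h1
      exact Nat.eq_zero_of_dvd_of_lt h2 (hclt i)
    have hU1 : ∀ i, U i = 1 := by
      intro i
      have h1 := hceq i
      rw [hc0 i, pow_zero] at h1
      exact Units.ext h1.symm
    have hfinal : X μ₀ = 1 := by
      rw [hXsum]
      refine Finset.prod_eq_one fun i _ => ?_
      rw [show X (Pi.single i 1) = U i from rfl, hU1 i, one_zpow]
    exact hχ hfinal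
  constructor
  · intro hLtop
    exact bridge1.mp (forward hLtop)
  · intro hc
    exact backward (bridge1.mpr hc)
end

section
/- Let ℬ = ⊕_{λ∈Λ} ℬ^λ be a graded-simple Λ-graded algebra and suppose dim ℬ^λ = 1 for some λ ∈ Λ. Then ℬ is graded-central-simple, i.e., the degree-0 component of its centroid equals k·1. -/
set_option synthInstance.maxHeartbeats 1000000
set_option maxHeartbeats 1000000


/-- A graded-simple `Λ`-graded algebra `B` with a one-dimensional homogeneous component is
graded-central-simple: every degree-`0` centroid element (a `k`-linear endomorphism
commuting with all left and right multiplications and preserving each homogeneous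
component) is a scalar multiple of the identity. -/
theorem stmt10 {k B Λ : Type*} [Field k] [NonUnitalNonAssocRing B] [Module k B]
    [SMulCommClass k B B] [IsScalarTower k B B] [AddCommGroup Λ] [DecidableEq Λ]
    (g : Λ → Submodule k B)
    (hinternal : DirectSum.IsInternal g)
    (hgradedMul : ∀ lam mu : Λ, ∀ x ∈ g lam, ∀ y ∈ g mu, x * y ∈ g (lam + mu))
    (hBB : ∃ x y : B, x * y ≠ 0)
    (hsimple : ∀ I : Submodule k B,
      (∀ x : B, ∀ y ∈ I, x * y ∈ I ∧ y * x ∈ I) →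
      (⨆ lam, I ⊓ g lam) = I → I = ⊥ ∨ I = ⊤)
    (lam₀ : Λ) (hdim : Module.finrank k (g lam₀) = 1) :
    ∀ c : B →ₗ[k] B,
      (∀ x y : B, c (x * y) = x * c y) →
      (∀ x y : B, c (x * y) = c x * y) →
      (∀ lam : Λ, ∀ x ∈ g lam, c x ∈ g lam) →
      ∃ a : k, c = a • (LinearMap.id : B →ₗ[k] B) := by
  intro c hcl hcr hcg
  classical
  haveI : DirectSum.Decomposition g := hinternal.chooseDecomposition
  -- pick a spanning vector of `g lam₀`
  obtain ⟨v, hv0, hvspan⟩ := (finrank_eq_one_iff' (K := k) (V := g lam₀)).mp hdim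
  have hvB : (v : B) ≠ 0 := fun h => hv0 (Subtype.ext h)
  have hcv : c (v : B) ∈ g lam₀ := hcg lam₀ v v.2
  obtain ⟨a, ha⟩ := hvspan ⟨c (v : B), hcv⟩
  have ha' : c (v : B) = a • (v : B) := by
    have := congrArg Subtype.val ha
    simpa using this.symm
  refine ⟨a, ?_⟩
  set d : B →ₗ[k] B := c - a • LinearMap.id with hd
  have hdapp : ∀ x : B, d x = c x - a • x := fun x => rfl
  -- `d` preserves each component
  have hdg : ∀ lam : Λ, ∀ x ∈ g lam, d x ∈ g lam := by
    intro lam x hx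
    rw [hdapp]
    exact sub_mem (hcg lam x hx) (Submodule.smul_mem _ _ hx)
  -- `d` commutes with the decomposition projections
  have hcomm : ∀ (x : B) (j : Λ),
      d ((DirectSum.decompose g x j : B)) = (DirectSum.decompose g (d x) j : B) := by
    intro x j
    induction x using DirectSum.Decomposition.inductionOn g with
    | zero => simp
    | homogeneous m =>
      rename_i i
      by_cases hij : i = j
      · subst hij
        rw [DirectSum.decompose_of_mem_same g m.2,
          DirectSum.decompose_of_mem_same g (hdg i m m.2)]
      · rw [DirectSum.decompose_of_mem_ne g m.2 hij,
          DirectSum.decompose_of_mem_ne g (hdg i m m.2) hij, map_zero]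
    | add m m' hm hm' =>
      rw [DirectSum.decompose_add, DirectSum.add_apply, Submodule.coe_add, map_add, hm, hm',
        map_add, DirectSum.decompose_add, DirectSum.add_apply, Submodule.coe_add]
  -- `d` is a two-sided "centroid" map
  have hdl : ∀ x y : B, d (x * y) = x * d y := by
    intro x y
    rw [hdapp, hdapp, hcl, mul_sub, mul_smul_comm]
  have hdr : ∀ x y : B, d (x * y) = d x * y := by
    intro x y
    rw [hdapp, hdapp, hcr, sub_mul, smul_mul_assoc]
  -- the kernel of `d` is a graded ideal
  have hker : LinearMap.ker d = ⊥ ∨ LinearMap.ker d = ⊤ := by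
    refine hsimple _ ?_ ?_
    · intro x y hy
      have hy' : d y = 0 := hy
      constructor
      · show d (x * y) = 0
        rw [hdl, hy', mul_zero]
      · show d (y * x) = 0
        rw [hdr, hy', zero_mul]
    · refine le_antisymm (iSup_le fun lam => inf_le_left) ?_
      intro x hx
      have hx' : d x = 0 := hx
      rw [← DirectSum.sum_support_decompose g x]
      refine Submodule.sum_mem _ fun j _ => Submodule.mem_iSup_of_mem j ⟨?_, ?_⟩
      · show d _ = 0
        rw [hcomm, hx']
        simp
      · exact (DirectSum.decompose g x j).2
  -- `v` is a nonzero element of the kernel, so the kernel is everything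
  have hvker : (v : B) ∈ LinearMap.ker d := by
    show d (v : B) = 0
    rw [hdapp, ha', sub_self]
  have hker_top : LinearMap.ker d = ⊤ := by
    rcases hker with h | h
    · exact absurd (by simpa [h] using hvker) hvB
    · exact h
  ext x
  have : d x = 0 := by
    have : x ∈ LinearMap.ker d := hker_top ▸ Submodule.mem_top
    exact this
  rw [hdapp] at this
  have := sub_eq_zero.mp this
  simpa using this
end

section
/- Let L be a Lie Λ-torus of type Δ. For α ∈ Q set Λ_α = {λ ∈ Λ : L_α^λ ≠ 0}. If α is a nonzero element of supp_Q(L), then Λ_α + 2Λ_α ⊆ Λ_α and −Λ_α = Λ_α. -/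
set_option linter.unusedSectionVars false
set_option maxHeartbeats 1000000
set_option linter.unusedVariables false

open Finset

section Texp
variable (k : Type*) {A : Type*} [Field k] [CharZero k] [Ring A] [Algebra k A]

/-- Truncated exponential. -/
noncomputable def texp (N : ℕ) (a : A) : A :=
  ∑ i ∈ Finset.range N, ((i.factorial : k)⁻¹) • a ^ i

variable {k}

lemma texp_add_of_pow_eq_zero {a : A} {M : ℕ} (h : a ^ M = 0) (d : ℕ) :
    texp k (M + d) a = texp k M a := by
  induction d with
  | zero => rfl
  | succ d ih =>
    rw [← ih, texp, texp, show M + (d + 1) = (M + d) + 1 from rfl, Finset.sum_range_succ,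
      pow_add, h, zero_mul, smul_zero, add_zero]

lemma texp_eq_of_pow_eq_zero {a : A} {M N : ℕ} (h : a ^ M = 0) (hMN : M ≤ N) :
    texp k N a = texp k M a := by
  obtain ⟨d, rfl⟩ := Nat.exists_eq_add_of_le hMN
  exact texp_add_of_pow_eq_zero h d

lemma texp_isUnit {a : A} {M : ℕ} (h : a ^ M = 0) : IsUnit (texp k M a) := by
  rcases M with - | m
  · have h1 : (1 : A) = 0 := by simpa using h
    have : Subsingleton A := subsingleton_of_zero_eq_one h1.symm
    exact ⟨⟨texp k 0 a, 1, Subsingleton.elim _ _, Subsingleton.elim _ _⟩, rfl⟩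
  · have hpeel : texp k (m + 1) a
        = 1 + a * ∑ j ∈ Finset.range m, ((((j+1).factorial : k))⁻¹) • a ^ j := by
      rw [texp, Finset.sum_range_succ']
      simp only [pow_zero, Nat.factorial_zero, Nat.cast_one, inv_one, one_smul]
      rw [add_comm, Finset.mul_sum]
      congr 1
      refine Finset.sum_congr rfl fun j _ => ?_
      rw [mul_smul_comm, ← _root_.pow_succ']
    rw [hpeel]
    have hcomm : Commute a (∑ j ∈ Finset.range m, ((((j+1).factorial : k))⁻¹) • a ^ j) := by
      refine Commute.sum_right _ _ _ fun j _ => ?_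
      exact (Commute.pow_right (Commute.refl a) j).smul_right _
    have hnil : IsNilpotent (a * ∑ j ∈ Finset.range m, ((((j+1).factorial : k))⁻¹) • a ^ j) := by
      refine ⟨m + 1, ?_⟩
      rw [hcomm.mul_pow, h, zero_mul]
    exact hnil.isUnit_one_add

/-- Key commutation identity: if `[a,y] = w`, `[a,w] = v`, `[a,v] = 0` and `a` is
nilpotent, then `exp(a) * y = (y + w + v/2) * exp(a)`. -/
lemma texp_mul_key {a y w v : A} {M : ℕ} (h : a ^ M = 0)
    (hw : a * y - y * a = w) (hv : a * w - w * a = v) (hcm : a * v = v * a) :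
    texp k M a * y = (y + w + (2 : k)⁻¹ • v) * texp k M a := by
  have hay : a * y = y * a + w := by rw [← hw]; noncomm_ring
  have haw : a * w = w * a + v := by rw [← hv]; noncomm_ring
  have pow_rel : ∀ i : ℕ, a ^ (i + 2) * y
      = y * a ^ (i + 2) + (((i : k) + 2)) • (w * a ^ (i + 1))
        + ((((i : k) + 2) * ((i : k) + 1) / 2)) • (v * a ^ i) := by
    intro i
    induction i with
    | zero =>
      have h2 : a ^ (0 + 2) * y = y * a ^ (0 + 2) + (w * a ^ (0 + 1) + w * a ^ (0 + 1))
          + v * a ^ 0 := by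
        have h2' : a ^ (0 + 2) * y = a * (a * y) := by
          rw [show (0 + 2 : ℕ) = 2 from rfl, pow_two, mul_assoc]
        rw [h2', hay, mul_add, ← mul_assoc, hay, haw]
        rw [show (0 + 2 : ℕ) = 2 from rfl, show (0 + 1 : ℕ) = 1 from rfl, pow_two, pow_one,
          pow_zero]
        noncomm_ring
      rw [h2]
      match_scalars <;> push_cast <;> ring
    | succ i ih =>
      have h3 : a ^ (i + 1 + 2) * y = a * (a ^ (i + 2) * y) := by
        rw [← mul_assoc, ← _root_.pow_succ']
      have e1 : a * a ^ (i + 2) = a ^ (i + 1 + 2) := by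
        rw [← _root_.pow_succ']
      have e2 : a * a ^ (i + 1) = a ^ (i + 2) := (_root_.pow_succ' a (i+1)).symm
      have e3 : a * a ^ i = a ^ (i + 1) := (_root_.pow_succ' a i).symm
      rw [h3, ih, mul_add, mul_add, mul_smul_comm, mul_smul_comm, ← mul_assoc, ← mul_assoc,
        hay, haw]
      have r1 : (y * a + w) * a ^ (i + 2) = y * a ^ (i + 1 + 2) + w * a ^ (i + 2) := by
        rw [add_mul, mul_assoc, e1]
      have r2 : (w * a + v) * a ^ (i + 1) = w * a ^ (i + 2) + v * a ^ (i + 1) := by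
        rw [add_mul, mul_assoc, e2]
      have r3 : a * (v * a ^ i) = v * a ^ (i + 1) := by
        rw [← mul_assoc, hcm, mul_assoc, e3]
      rw [r1, r2, r3, smul_add]
      simp only [show i + 1 + 2 = i + 3 from rfl, show i + 2 = i + 2 from rfl,
        show i + 1 + 1 = i + 2 from rfl]
      match_scalars <;> push_cast <;> ring
  have key : ∀ i : ℕ, ((i+2).factorial : k)⁻¹ • (a ^ (i+2) * y)
      = ((i+2).factorial : k)⁻¹ • (y * a ^ (i+2))
        + (((i+1).factorial : k))⁻¹ • (w * a ^ (i+1))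
        + ((2 : k)⁻¹ * ((i.factorial : k))⁻¹) • (v * a ^ i) := by
    intro i
    rw [pow_rel i]
    have h2 : ((i+2).factorial : k) = ((i:k)+2) * (((i:k)+1) * (i.factorial : k)) := by
      push_cast [Nat.factorial_succ]; ring
    have h1 : ((i+1).factorial : k) = ((i:k)+1) * (i.factorial : k) := by
      push_cast [Nat.factorial_succ]; ring
    have hi0 : (i.factorial : k) ≠ 0 := Nat.cast_ne_zero.2 i.factorial_ne_zero
    have hi1 : ((i:k)+1) ≠ 0 := by
      have h' : (((i+1 : ℕ)):k) ≠ 0 := Nat.cast_ne_zero.2 (Nat.succ_ne_zero i)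
      push_cast at h'; exact h'
    have hi2 : ((i:k)+2) ≠ 0 := by
      have h' : (((i+2 : ℕ)):k) ≠ 0 := Nat.cast_ne_zero.2 (by omega)
      push_cast at h'; exact h'
    match_scalars
    all_goals simp only [h2, h1]
    all_goals field_simp
    all_goals try ring
  have hM2 : texp k (M + 2) a = texp k M a := texp_add_of_pow_eq_zero h 2
  have hM1 : texp k (M + 1) a = texp k M a := texp_add_of_pow_eq_zero h 1
  have lhs_expand : texp k (M + 2) a * y
      = ∑ i ∈ Finset.range (M + 2), ((i.factorial : k))⁻¹ • (a ^ i * y) := by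
    rw [texp, Finset.sum_mul]
    exact Finset.sum_congr rfl fun i _ => smul_mul_assoc _ _ _
  have y_expand : y * texp k (M + 2) a
      = ∑ i ∈ Finset.range (M + 2), ((i.factorial : k))⁻¹ • (y * a ^ i) := by
    rw [texp, Finset.mul_sum]
    exact Finset.sum_congr rfl fun i _ => (mul_smul_comm _ _ _)
  have w_expand : w * texp k (M + 1) a
      = ∑ i ∈ Finset.range (M + 1), ((i.factorial : k))⁻¹ • (w * a ^ i) := by
    rw [texp, Finset.mul_sum]
    exact Finset.sum_congr rfl fun i _ => (mul_smul_comm _ _ _)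
  have v_expand : (2:k)⁻¹ • (v * texp k M a)
      = ∑ i ∈ Finset.range M, ((2:k)⁻¹ * ((i.factorial : k))⁻¹) • (v * a ^ i) := by
    rw [texp, Finset.mul_sum, Finset.smul_sum]
    refine Finset.sum_congr rfl fun i _ => ?_
    rw [mul_smul_comm, smul_smul]
  have peel : ∀ c : ℕ → A, ∑ i ∈ Finset.range (M + 2), c i
      = (∑ i ∈ Finset.range M, c (i + 2)) + c 1 + c 0 := by
    intro c
    rw [show M + 2 = M + 1 + 1 from rfl, Finset.sum_range_succ', Finset.sum_range_succ']
  have main : texp k (M + 2) a * y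
      = y * texp k (M + 2) a + w * texp k (M + 1) a + (2:k)⁻¹ • (v * texp k M a) := by
    rw [lhs_expand, y_expand, w_expand, v_expand, peel, peel, Finset.sum_range_succ' _ M]
    simp only [pow_zero, pow_one, Nat.factorial_zero, Nat.factorial_one, Nat.cast_one,
      inv_one, one_smul, mul_one, one_mul]
    rw [Finset.sum_congr rfl (fun i _ => key i)]
    rw [Finset.sum_add_distrib, Finset.sum_add_distrib]
    rw [hay]
    abel
  calc texp k M a * y = texp k (M + 2) a * y := by rw [hM2]
    _ = y * texp k (M + 2) a + w * texp k (M + 1) a + (2:k)⁻¹ • (v * texp k M a) := main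
    _ = (y + w + (2 : k)⁻¹ • v) * texp k M a := by
        rw [hM2, hM1, add_mul, add_mul, smul_mul_assoc]
end Texp


/-- `f` is a coroot functional for `α` with respect to the set `Δ`. -/
def IsCoroot {k 𝒳 : Type*} [Field k] [AddCommGroup 𝒳] [Module k 𝒳]
    (Δ : Set 𝒳) (α : 𝒳) (f : Module.Dual k 𝒳) : Prop :=
  f α = 2 ∧ ∀ β ∈ Δ, β - f β • α ∈ Δ

/-- A finite irreducible root system (containing `0`) in `𝒳`, together with a choice of
coroot functional for each nonzero root. -/
structure RootSystemIn (k 𝒳 : Type*) [Field k] [AddCommGroup 𝒳] [Module k 𝒳] where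
  Δ : Set 𝒳
  coroot : 𝒳 → Module.Dual k 𝒳
  finite : Δ.Finite
  zero_mem : (0 : 𝒳) ∈ Δ
  span_eq : Submodule.span k Δ = ⊤
  isCoroot : ∀ α ∈ Δ, α ≠ 0 → IsCoroot Δ α (coroot α)
  pairing_int : ∀ α ∈ Δ, α ≠ 0 → ∀ β ∈ Δ, ∃ z : ℤ, coroot α β = (z : k)
  irreducible : ∀ A B : Set 𝒳, A ∪ B = Δ \ {0} → A ∩ B = ∅ →
    (∀ α ∈ A, ∀ β ∈ B, coroot β α = 0) → A = ∅ ∨ B = ∅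

/-- A Lie `Λ`-torus of type `Δ`: a `Q × Λ`-graded Lie algebra (the grading being recorded
by the family `g` of subspaces indexed by `𝒳 × Λ`, supported on `Δ`) satisfying the axioms
(LT1)–(LT4). -/
structure IsLieTorus {k 𝒳 Λ L : Type*} [Field k] [AddCommGroup 𝒳] [Module k 𝒳]
    [DecidableEq 𝒳] [AddCommGroup Λ] [DecidableEq Λ] [LieRing L] [LieAlgebra k L]
    (R : RootSystemIn k 𝒳) (g : 𝒳 → Λ → Submodule k L) : Prop where
  isInternal : DirectSum.IsInternal fun p : 𝒳 × Λ => g p.1 p.2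
  bracket_mem : ∀ (α β : 𝒳) (lam mu : Λ), ∀ x ∈ g α lam, ∀ y ∈ g β mu,
    ⁅x, y⁆ ∈ g (α + β) (lam + mu)
  supp_subset : ∀ (α : 𝒳) (lam : Λ), g α lam ≠ ⊥ → α ∈ R.Δ
  lt2i : ∀ α ∈ R.Δ, α ≠ 0 → (¬ ∃ γ ∈ R.Δ, α = (2 : k) • γ) → g α 0 ≠ ⊥
  lt2ii : ∀ (α : 𝒳) (lam : Λ), α ≠ 0 → g α lam ≠ ⊥ →
    ∃ e f : L, e ∈ g α lam ∧ f ∈ g (-α) (-lam) ∧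
      g α lam = Submodule.span k {e} ∧ g (-α) (-lam) = Submodule.span k {f} ∧
      ∀ (β : 𝒳) (mu : Λ), ∀ x ∈ g β mu, ⁅⁅e, f⁆, x⁆ = R.coroot α β • x
  lt3 : LieSubalgebra.lieSpan k L
    (⋃ α ∈ R.Δ \ {0}, ⋃ lam : Λ, (g α lam : Set L)) = ⊤
  lt4 : AddSubgroup.closure {lam : Λ | ∃ α : 𝒳, g α lam ≠ ⊥} = ⊤

/-- Nonzero vectors with pairwise distinct eigenvalues are independent. -/
lemma eig_sum_zero {K V : Type*} [Field K] [AddCommGroup V] [Module K V]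
    (H : Module.End K V) (c : ℤ → K) (hc : Function.Injective c)
    (S : Finset ℤ) (w : ℤ → V)
    (he : ∀ m, H (w m) = c m • w m)
    (hsum : ∑ m ∈ S, w m = 0) : ∀ m ∈ S, w m = 0 := by
  classical
  induction S using Finset.induction generalizing w with
  | empty => simp
  | @insert a S' ha ih =>
    rw [Finset.sum_insert ha] at hsum
    have hwa : w a = -∑ m ∈ S', w m := eq_neg_of_add_eq_zero_left hsum
    have hsum' : ∑ m ∈ S', (c m - c a) • w m = 0 := by
      have h1 : ∑ m ∈ S', (c m) • w m = H (∑ m ∈ S', w m) := by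
        rw [map_sum]
        exact (Finset.sum_congr rfl fun m _ => (he m).symm)
      have h2 : H (∑ m ∈ S', w m) = (c a) • (∑ m ∈ S', w m) := by
        have : ∑ m ∈ S', w m = - w a := by rw [hwa, neg_neg]
        rw [this, map_neg, he a, smul_neg]
      simp only [sub_smul, Finset.sum_sub_distrib, h1, h2, ← Finset.smul_sum]
      abel
    have hS' : ∀ m ∈ S', w m = 0 := by
      intro m hm
      have := ih (fun m => (c m - c a) • w m)
        (fun m => by rw [map_smul, he m, smul_comm]) hsum' m hm
      have hne : c m - c a ≠ 0 := sub_ne_zero.2 (fun hEq => ha (hc hEq ▸ hm))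
      exact (smul_eq_zero.1 this).resolve_left hne
    intro m hm
    rcases Finset.mem_insert.1 hm with rfl | hm'
    · rw [hwa, Finset.sum_congr rfl hS']
      simp
    · exact hS' m hm'

lemma nsmul_inj {k 𝒳 : Type*} [Field k] [CharZero k] [AddCommGroup 𝒳] [Module k 𝒳]
    {δ : 𝒳} (hδ : δ ≠ 0) : Function.Injective fun n : ℕ => n • δ := by
  intro n m h
  simp only at h
  rw [← Nat.cast_smul_eq_nsmul k, ← Nat.cast_smul_eq_nsmul k] at h
  have h0 : ((n : k) - (m : k)) • δ = 0 := by rw [sub_smul, h, sub_self]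
  rcases smul_eq_zero.1 h0 with h' | h'
  · exact Nat.cast_injective (sub_eq_zero.1 h')
  · exact absurd h' hδ

lemma zsmul_inj {k 𝒳 : Type*} [Field k] [CharZero k] [AddCommGroup 𝒳] [Module k 𝒳]
    {δ : 𝒳} (hδ : δ ≠ 0) : Function.Injective fun n : ℤ => n • δ := by
  intro n m h
  simp only at h
  rw [← Int.cast_smul_eq_zsmul k, ← Int.cast_smul_eq_zsmul k] at h
  have h0 : ((n : k) - (m : k)) • δ = 0 := by rw [sub_smul, h, sub_self]
  rcases smul_eq_zero.1 h0 with h' | h'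
  · exact Int.cast_injective (sub_eq_zero.1 h')
  · exact absurd h' hδ

section LieTorus

variable {k 𝒳 Λ L : Type*} [Field k] [CharZero k] [AddCommGroup 𝒳] [Module k 𝒳]
    [DecidableEq 𝒳] [AddCommGroup Λ] [DecidableEq Λ] [LieRing L] [LieAlgebra k L]
    {R : RootSystemIn k 𝒳} {g : 𝒳 → Λ → Submodule k L}

lemma ad_pow_mem (hLT : IsLieTorus R g) {δ : 𝒳} {μ : Λ} {e : L} (he : e ∈ g δ μ)
    (n : ℕ) {β : 𝒳} {ν : Λ} {x : L} (hx : x ∈ g β ν) :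
    ((LieAlgebra.ad k L e) ^ n) x ∈ g (β + n • δ) (ν + n • μ) := by
  induction n with
  | zero => simpa using hx
  | succ n ih =>
    have : ((LieAlgebra.ad k L e) ^ (n + 1)) x
        = (LieAlgebra.ad k L e) (((LieAlgebra.ad k L e) ^ n) x) := by
      rw [← Module.End.mul_apply, ← pow_succ']
    rw [this, LieAlgebra.ad_apply]
    have := hLT.bracket_mem δ (β + n • δ) μ (ν + n • μ) e he _ ih
    have hX : δ + (β + n • δ) = β + (n + 1) • δ := by
      rw [succ_nsmul]; abel
    have hL : μ + (ν + n • μ) = ν + (n + 1) • μ := by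
      rw [succ_nsmul]; abel
    rwa [hX, hL] at this

lemma ad_nilpotent (hLT : IsLieTorus R g) {δ : 𝒳} (hδ : δ ≠ 0) {μ : Λ} {e : L}
    (he : e ∈ g δ μ) : ∃ M : ℕ, (LieAlgebra.ad k L e) ^ M = 0 := by
  classical
  set Nset : Set ℕ := {n | ∃ β ∈ R.Δ, β + n • δ ∈ R.Δ} with hNset
  have hfin : Nset.Finite := by
    have : Nset ⊆ ⋃ β ∈ R.Δ, {n : ℕ | β + n • δ ∈ R.Δ} := by
      intro n hn
      obtain ⟨β, hβ, hβ'⟩ := hn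
      exact Set.mem_biUnion hβ hβ'
    refine Set.Finite.subset (Set.Finite.biUnion R.finite fun β _ => ?_) this
    have : {n : ℕ | β + n • δ ∈ R.Δ} = (fun n : ℕ => β + n • δ) ⁻¹' R.Δ := rfl
    rw [this]
    exact Set.Finite.preimage
      (Set.injOn_of_injective (fun a b hab => nsmul_inj (k := k) hδ (by
        have : β + a • δ = β + b • δ := hab
        simpa using this))) R.finite
  obtain ⟨b, hb⟩ := hfin.bddAbove
  refine ⟨b + 1, ?_⟩
  apply LinearMap.ext
  intro x
  have hx : x ∈ (⊤ : Submodule k L) := trivial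
  rw [← hLT.isInternal.submodule_iSup_eq_top] at hx
  rw [LinearMap.zero_apply]
  refine Submodule.iSup_induction (motive := fun y => ((LieAlgebra.ad k L e) ^ (b+1)) y = 0)
    _ hx ?_ (by simp) ?_
  · rintro ⟨β, ν⟩ y hy
    by_cases hne : g β ν = ⊥
    · rw [hne] at hy
      simp only [Submodule.mem_bot] at hy
      rw [hy, map_zero]
    have hmem := ad_pow_mem hLT he (b + 1) hy
    by_cases h2 : g (β + (b+1) • δ) (ν + (b+1) • μ) = ⊥
    · rw [h2] at hmem
      simpa using hmem
    · exfalso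
      have hβΔ : β ∈ R.Δ := hLT.supp_subset _ _ hne
      have hΔ2 : β + (b+1) • δ ∈ R.Δ := hLT.supp_subset _ _ h2
      have : (b + 1) ∈ Nset := ⟨β, hβΔ, hΔ2⟩
      have := hb this
      omega
  · intro y z hy hz
    rw [map_add, hy, hz, add_zero]

end LieTorus

section Refl

attribute [local instance] LieRing.ofAssociativeRing

variable {k 𝒳 Λ L : Type*} [Field k] [CharZero k] [AddCommGroup 𝒳] [Module k 𝒳]
    [DecidableEq 𝒳] [AddCommGroup Λ] [DecidableEq Λ] [LieRing L] [LieAlgebra k L]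
    {R : RootSystemIn k 𝒳} {g : 𝒳 → Λ → Submodule k L}

lemma refl_main (hLT : IsLieTorus R g) {δ : 𝒳} (hδ : δ ≠ 0) {μ : Λ} {e f : L}
    (he : e ∈ g δ μ) (hf : f ∈ g (-δ) (-μ))
    (hH : ∀ (β : 𝒳) (ν : Λ), ∀ x ∈ g β ν, ⁅⁅e, f⁆, x⁆ = R.coroot δ β • x)
    (hδδ : R.coroot δ δ = 2)
    {β : 𝒳} {ν : Λ} (hne : g β ν ≠ ⊥) {n : ℤ} (hn : R.coroot δ β = (n : k)) :
    g (β - n • δ) (ν - n • μ) ≠ ⊥ := by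
  classical
  obtain ⟨x, hx, hx0⟩ := (Submodule.ne_bot_iff _).1 hne
  set E : Module.End k L := LieAlgebra.ad k L e with hE
  set F : Module.End k L := LieAlgebra.ad k L f with hF
  set H : Module.End k L := LieAlgebra.ad k L ⁅e, f⁆ with hHdef
  -- structure constants
  have hEF : H = E * F - F * E := by
    rw [hHdef, LieHom.map_lie, Ring.lie_def]
  have hbe : ⁅⁅e, f⁆, e⁆ = (2 : k) • e := by rw [hH δ μ e he, hδδ]
  have hbf : ⁅⁅e, f⁆, f⁆ = (-2 : k) • f := by
    rw [hH _ _ f hf, map_neg, hδδ]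
  have hHE : H * E - E * H = (2 : k) • E := by
    have h1 : LieAlgebra.ad k L ⁅⁅e, f⁆, e⁆ = ⁅H, E⁆ := LieHom.map_lie _ _ _
    rw [hbe, map_smul, Ring.lie_def] at h1
    exact h1.symm
  have hHF : H * F - F * H = (-2 : k) • F := by
    have h1 : LieAlgebra.ad k L ⁅⁅e, f⁆, f⁆ = ⁅H, F⁆ := LieHom.map_lie _ _ _
    rw [hbf, map_smul, Ring.lie_def] at h1
    exact h1.symm
  -- rearranged versions
  have hFH : F * H = H * F + (2 : k) • F := by
    have := hHF; rw [sub_eq_iff_eq_add] at this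
    rw [this]; match_scalars <;> ring
  have hEH : E * H = H * E - (2 : k) • E := by
    have := hHE; rw [sub_eq_iff_eq_add] at this
    rw [this]; match_scalars <;> ring
  have hFE : F * E = E * F - H := by rw [hEF]; noncomm_ring
  -- nilpotency
  obtain ⟨Me, hMe⟩ := ad_nilpotent hLT hδ he
  obtain ⟨Mf, hMf⟩ := ad_nilpotent hLT (neg_ne_zero.2 hδ) hf
  set M : ℕ := max Me Mf with hM
  have hEM : E ^ M = 0 := pow_eq_zero_of_le (le_max_left _ _) hMe
  have hFM : F ^ M = 0 := pow_eq_zero_of_le (le_max_right _ _) hMf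
  have hFM' : (-F) ^ M = 0 := by
    rw [neg_pow, hFM, mul_zero]
  -- the three conjugation identities
  have T1 : texp k M E * H = (H - (2 : k) • E) * texp k M E := by
    have := texp_mul_key (k := k) hEM (y := H) (w := (-2 : k) • E) (v := 0)
      (by rw [sub_eq_iff_eq_add] at hHE; rw [hHE]; match_scalars <;> ring)
      (by rw [smul_mul_assoc, mul_smul_comm, sub_self])
      (by rw [mul_zero, zero_mul])
    rw [this]
    congr 1
    match_scalars <;> ring
  have T2 : texp k M (-F) * (H - (2 : k) • E)
      = (-H - (2 : k) • E) * texp k M (-F) := by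
    have := texp_mul_key (k := k) hFM'
      (y := H - (2 : k) • E) (w := (-2 : k) • F + (-2 : k) • H) (v := (4 : k) • F)
      (by
        simp only [mul_sub, sub_mul, mul_add, add_mul, neg_mul, mul_neg,
          smul_mul_assoc, mul_smul_comm, neg_neg, smul_neg, neg_smul, sub_neg_eq_add]
        rw [hFH, hFE]
        match_scalars <;> ring)
      (by
        simp only [mul_sub, sub_mul, mul_add, add_mul, neg_mul, mul_neg,
          smul_mul_assoc, mul_smul_comm, neg_neg, smul_neg, neg_smul, sub_neg_eq_add]
        rw [hFH]
        match_scalars <;> ring)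
      (by
        rw [mul_smul_comm, smul_mul_assoc, neg_mul, mul_neg])
    rw [this]
    congr 1
    match_scalars <;> ring
  have T3 : texp k M E * (-H - (2 : k) • E) = (-H) * texp k M E := by
    have := texp_mul_key (k := k) hEM
      (y := -H - (2 : k) • E) (w := (2 : k) • E) (v := 0)
      (by
        simp only [mul_sub, sub_mul, mul_add, add_mul, neg_mul, mul_neg,
          smul_mul_assoc, mul_smul_comm, neg_neg, smul_neg, neg_smul, sub_neg_eq_add]
        rw [hEH]
        match_scalars <;> ring)
      (by rw [smul_mul_assoc, mul_smul_comm, sub_self])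
      (by rw [mul_zero, zero_mul])
    rw [this]
    congr 1
    match_scalars <;> ring
  set θ : Module.End k L := texp k M E * (texp k M (-F) * texp k M E) with hθ
  have hθu : IsUnit θ :=
    (texp_isUnit hEM).mul ((texp_isUnit hFM').mul (texp_isUnit hEM))
  have hθH : θ * H = (-H) * θ := by
    calc θ * H = texp k M E * (texp k M (-F) * (texp k M E * H)) := by
          rw [hθ, mul_assoc, mul_assoc]
      _ = texp k M E * (texp k M (-F) * ((H - (2:k) • E) * texp k M E)) := by rw [T1]
      _ = texp k M E * ((texp k M (-F) * (H - (2:k) • E)) * texp k M E) := by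
          rw [mul_assoc]
      _ = texp k M E * (((-H - (2:k) • E) * texp k M (-F)) * texp k M E) := by rw [T2]
      _ = (texp k M E * (-H - (2:k) • E)) * (texp k M (-F) * texp k M E) := by
          rw [mul_assoc, mul_assoc]
      _ = ((-H) * texp k M E) * (texp k M (-F) * texp k M E) := by rw [T3]
      _ = (-H) * θ := by rw [hθ, mul_assoc]
  set v : L := θ x with hv
  have hv0 : v ≠ 0 := by
    obtain ⟨u, hu⟩ := hθu
    intro h0
    apply hx0
    have h1 : ((↑u⁻¹ * ↑u : Module.End k L)) x = x := by
      rw [u.inv_mul]; rfl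
    rw [hu] at h1
    rw [← h1]
    change (↑u⁻¹ : Module.End k L) (θ x) = 0
    rw [← hv, h0, map_zero]
  have hHx : H x = (n : k) • x := by
    rw [hHdef, LieAlgebra.ad_apply, hH β ν x hx, hn]
  have hθHx : (n : k) • v = -(H v) := by
    have h0 := congrArg (fun A : Module.End k L => A x) hθH
    simp only [Module.End.mul_apply, LinearMap.neg_apply] at h0
    rw [hHx, map_smul] at h0
    exact h0
  have hHv : H v = (-(n : k)) • v := by
    rw [neg_smul, ← neg_neg (H v), ← hθHx]
  -- membership in the graded strip
  set T : Submodule k L := ⨆ m : ℤ, g (β + m • δ) (ν + m • μ) with hT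
  have hTle : ∀ m : ℤ, g (β + m • δ) (ν + m • μ) ≤ T := fun m => by
    rw [hT]; exact le_iSup (fun m : ℤ => g (β + m • δ) (ν + m • μ)) m
  have hT_E : ∀ y ∈ T, E y ∈ T := by
    intro y hy
    refine Submodule.iSup_induction _ (motive := fun y => E y ∈ T) hy ?_ (by simp) ?_
    · intro m z hz
      have hb := hLT.bracket_mem δ (β + m • δ) μ (ν + m • μ) e he z hz
      have hX : δ + (β + m • δ) = β + (m + 1) • δ := by
        rw [add_smul, one_smul]; abel
      have hL : μ + (ν + m • μ) = ν + (m + 1) • μ := by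
        rw [add_smul, one_smul]; abel
      rw [hX, hL] at hb
      have : E z = ⁅e, z⁆ := LieAlgebra.ad_apply k L e z
      rw [this]
      exact hTle (m + 1) hb
    · intro a b ha hb
      rw [map_add]; exact T.add_mem ha hb
  have hT_F : ∀ y ∈ T, (-F) y ∈ T := by
    intro y hy
    refine Submodule.iSup_induction _ (motive := fun y => (-F) y ∈ T) hy ?_ (by simp) ?_
    · intro m z hz
      have hb := hLT.bracket_mem (-δ) (β + m • δ) (-μ) (ν + m • μ) f hf z hz
      have hX : -δ + (β + m • δ) = β + (m - 1) • δ := by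
        rw [sub_smul, one_smul]; abel
      have hL : -μ + (ν + m • μ) = ν + (m - 1) • μ := by
        rw [sub_smul, one_smul]; abel
      rw [hX, hL] at hb
      have hFz : (-F) z = -⁅f, z⁆ := by
        rw [LinearMap.neg_apply, LieAlgebra.ad_apply]
      rw [hFz]
      exact T.neg_mem (hTle (m - 1) hb)
    · intro a b ha hb
      rw [map_add]; exact T.add_mem ha hb
  have hT_pow : ∀ (A : Module.End k L), (∀ y ∈ T, A y ∈ T) →
      ∀ (i : ℕ), ∀ y ∈ T, (A ^ i) y ∈ T := by
    intro A hA i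
    induction i with
    | zero => intro y hy; simpa using hy
    | succ i ih =>
      intro y hy
      have : (A ^ (i + 1)) y = (A ^ i) (A y) := by
        rw [← Module.End.mul_apply, ← pow_succ]
      rw [this]
      exact ih _ (hA y hy)
  have hT_texp : ∀ (A : Module.End k L), (∀ y ∈ T, A y ∈ T) →
      ∀ (N : ℕ), ∀ y ∈ T, (texp k N A) y ∈ T := by
    intro A hA N y hy
    rw [texp]
    rw [LinearMap.sum_apply]
    refine T.sum_mem fun i _ => ?_
    rw [LinearMap.smul_apply]
    exact T.smul_mem _ (hT_pow A hA i y hy)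
  have hxT : x ∈ T := by
    have h0 : g β ν ≤ T := by
      have := hTle 0
      simpa using this
    exact h0 hx
  have hvT : v ∈ T := by
    have h1 : v = (texp k M E) ((texp k M (-F)) ((texp k M E) x)) := by
      rw [hv, hθ, Module.End.mul_apply, Module.End.mul_apply]
    rw [h1]
    exact hT_texp _ hT_E _ _ (hT_texp _ hT_F _ _ (hT_texp _ hT_E _ _ hxT))
  -- decompose and use eigenvalues
  rw [hT, Submodule.mem_iSup_iff_exists_finsupp] at hvT
  obtain ⟨c, hcmem, hcsum⟩ := hvT
  have hveq : v = ∑ m ∈ c.support, c m := by rw [← hcsum]; rfl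
  have hHc : ∀ m : ℤ, H (c m) = ((n : k) + 2 * (m : k)) • c m := by
    intro m
    have h1 : H (c m) = R.coroot δ (β + m • δ) • c m := by
      rw [hHdef, LieAlgebra.ad_apply]
      exact hH _ _ (c m) (hcmem m)
    rw [h1, map_add, hn, map_zsmul, hδδ]
    congr 1
    rw [zsmul_eq_mul]
    ring
  set u : ℤ → L := fun m => (2 * (n : k) + 2 * (m : k)) • c m with hu
  have hueig : ∀ m : ℤ, H (u m) = ((n : k) + 2 * (m : k)) • u m := by
    intro m
    rw [hu]
    simp only
    rw [map_smul, hHc m, smul_smul, smul_smul, mul_comm]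
  have husum : ∑ m ∈ c.support, u m = 0 := by
    have h1 : ∀ m : ℤ, u m = H (c m) + (n : k) • c m := by
      intro m
      rw [hu, hHc m]
      simp only
      rw [← add_smul]
      congr 1
      ring
    calc ∑ m ∈ c.support, u m = ∑ m ∈ c.support, (H (c m) + (n : k) • c m) :=
          Finset.sum_congr rfl fun m _ => h1 m
      _ = H (∑ m ∈ c.support, c m) + (n : k) • (∑ m ∈ c.support, c m) := by
          rw [Finset.sum_add_distrib, map_sum, Finset.smul_sum]
      _ = H v + (n : k) • v := by rw [← hveq]
      _ = 0 := by rw [hHv, neg_smul, neg_add_cancel]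
  have hcinj : Function.Injective (fun m : ℤ => (n : k) + 2 * (m : k)) := by
    intro a b hab
    simp only at hab
    have h3 : (a : k) = (b : k) := mul_left_cancel₀ (two_ne_zero) (add_left_cancel hab)
    exact_mod_cast h3
  have huzero := eig_sum_zero H _ hcinj c.support u hueig husum
  have hczero : ∀ m : ℤ, m ≠ -n → c m = 0 := by
    intro m hm
    by_cases hms : m ∈ c.support
    · have h1 := huzero m hms
      rw [hu] at h1
      simp only at h1
      rcases smul_eq_zero.1 h1 with h2 | h2
      · exfalso
        have h5 : (m : k) = ((-n : ℤ) : k) := by push_cast; linear_combination h2 / 2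
        exact hm (Int.cast_injective h5)
      · exact h2
    · exact Finsupp.notMem_support_iff.1 hms
  have hvq : v = c (-n) := by
    rw [hveq]
    exact Finset.sum_eq_single (-n) (fun b _ hb => hczero b hb)
      (fun h => Finsupp.notMem_support_iff.1 h)
  have hmem : c (-n) ∈ g (β - n • δ) (ν - n • μ) := by
    have := hcmem (-n)
    rwa [neg_smul, neg_smul, ← sub_eq_add_neg, ← sub_eq_add_neg] at this
  rw [Submodule.ne_bot_iff]
  exact ⟨c (-n), hmem, by rw [← hvq]; exact hv0⟩

lemma neg_supp (hLT : IsLieTorus R g) {α : 𝒳} (hα : α ≠ 0) {lam : Λ}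
    (h : g α lam ≠ ⊥) : g (-α) (-lam) ≠ ⊥ := by
  obtain ⟨e, f, he, hf, hspe, hspf, hbr⟩ := hLT.lt2ii α lam hα h
  have hαΔ : α ∈ R.Δ := hLT.supp_subset α lam h
  have hcor : R.coroot α α = 2 := (R.isCoroot α hαΔ hα).1
  have he0 : e ≠ 0 := by
    intro h0; rw [h0, Submodule.span_zero_singleton] at hspe; exact h hspe
  intro hbot
  have hf0 : f = 0 := by
    have hmem := hf; rw [hbot, Submodule.mem_bot] at hmem; exact hmem
  have h2 : ⁅⁅e, f⁆, e⁆ = (2 : k) • e := by rw [hbr α lam e he, hcor]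
  rw [hf0] at h2
  simp only [lie_zero, zero_lie] at h2
  rcases smul_eq_zero.1 h2.symm with h' | h'
  · exact two_ne_zero h'
  · exact he0 h'

lemma moveC (hLT : IsLieTorus R g) {α : 𝒳} (hα : α ≠ 0) {lam mu : Λ}
    (hl : g α lam ≠ ⊥) (hm : g α mu ≠ ⊥) : g α (mu + mu - lam) ≠ ⊥ := by
  have hαΔ : α ∈ R.Δ := hLT.supp_subset α mu hm
  have hcor : R.coroot α α = 2 := (R.isCoroot α hαΔ hα).1
  obtain ⟨e, f, he, hf, -, -, hbr⟩ := hLT.lt2ii α mu hα hm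
  have h1 := refl_main hLT hα he hf hbr hcor hl (n := 2) (by rw [hcor]; norm_num)
  have hX : α - (2:ℤ) • α = -α := by rw [two_zsmul]; abel
  have hL : lam - (2:ℤ) • mu = lam - (mu + mu) := by rw [two_zsmul]
  rw [hX, hL] at h1
  have h2 := neg_supp hLT (neg_ne_zero.2 hα) h1
  rw [neg_neg] at h2
  have h3 : -(lam - (mu + mu)) = mu + mu - lam := by abel
  rwa [h3] at h2

lemma neg_lam (hLT : IsLieTorus R g) {α : 𝒳} (hα : α ≠ 0) {lam : Λ}
    (hl : g α lam ≠ ⊥) : g α (-lam) ≠ ⊥ := by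
  have hαΔ : α ∈ R.Δ := hLT.supp_subset α lam hl
  by_cases hdiv : ∃ γ ∈ R.Δ, α = (2:k) • γ
  · obtain ⟨γ, hγΔ, hγ⟩ := hdiv
    have hγ0 : γ ≠ 0 := by
      rintro rfl; rw [smul_zero] at hγ; exact hα hγ
    have hγnd : ¬ ∃ δ' ∈ R.Δ, γ = (2:k) • δ' := by
      rintro ⟨δ', hδ'Δ, hδ'⟩
      have hcorαα : R.coroot α α = 2 := (R.isCoroot α hαΔ hα).1
      obtain ⟨z, hz⟩ := R.pairing_int α hαΔ hα δ' hδ'Δ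
      have hα4 : α = (4:k) • δ' := by rw [hγ, hδ', smul_smul]; norm_num
      have h4z : (4:k) * (z:k) = 2 := by
        rw [← hz, ← hcorαα]
        nth_rewrite 3 [hα4]
        rw [map_smul, smul_eq_mul]
      have hcast : ((4 * z : ℤ) : k) = ((2 : ℤ) : k) := by push_cast; linear_combination h4z
      have : (4 * z : ℤ) = 2 := Int.cast_injective hcast
      omega
    have h0 : g γ 0 ≠ ⊥ := hLT.lt2i γ hγΔ hγ0 hγnd
    obtain ⟨e, f, he, hf, -, -, hbr⟩ := hLT.lt2ii γ 0 hγ0 h0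
    have hcorγγ : R.coroot γ γ = 2 := (R.isCoroot γ hγΔ hγ0).1
    have hn4 : R.coroot γ α = ((4:ℤ):k) := by
      rw [hγ, map_smul, hcorγγ, smul_eq_mul]; norm_num
    have h1 := refl_main hLT hγ0 he hf hbr hcorγγ hl hn4
    have hX : α - (4:ℤ) • γ = -α := by
      rw [← Int.cast_smul_eq_zsmul k, hγ]
      push_cast
      module
    have hL : lam - (4:ℤ) • (0:Λ) = lam := by rw [smul_zero, sub_zero]
    rw [hX, hL] at h1
    have h2 := neg_supp hLT (neg_ne_zero.2 hα) h1
    rwa [neg_neg] at h2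
  · have h0 : g α 0 ≠ ⊥ := hLT.lt2i α hαΔ hα hdiv
    have h1 := moveC hLT hα hl h0
    have h2 : (0:Λ) + 0 - lam = -lam := by abel
    rwa [h2] at h1

end Refl

/-- For a Lie `Λ`-torus `L` and a nonzero `α` in the `Q`-support, the set
`Λ_α = {λ : L_α^λ ≠ 0}` satisfies `Λ_α + 2Λ_α ⊆ Λ_α` and `-Λ_α = Λ_α`. -/
theorem stmt13 {k 𝒳 Λ L : Type*} [Field k] [CharZero k] [AddCommGroup 𝒳] [Module k 𝒳]
    [DecidableEq 𝒳] [AddCommGroup Λ] [DecidableEq Λ] [LieRing L] [LieAlgebra k L]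
    (R : RootSystemIn k 𝒳) (g : 𝒳 → Λ → Submodule k L) (hLT : IsLieTorus R g)
    (α : 𝒳) (hα : α ≠ 0) (hαsupp : ∃ lam : Λ, g α lam ≠ ⊥) :
    (∀ lam mu : Λ, g α lam ≠ ⊥ → g α mu ≠ ⊥ → g α (lam + (mu + mu)) ≠ ⊥) ∧
    (∀ lam : Λ, g α lam ≠ ⊥ ↔ g α (-lam) ≠ ⊥) := by
  constructor
  · intro lam mu hl hm
    have h1 : g α (-lam) ≠ ⊥ := neg_lam hLT hα hl
    have h2 := moveC hLT hα h1 hm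
    have h3 : mu + mu - -lam = lam + (mu + mu) := by abel
    rwa [h3] at h2
  · intro lam
    constructor
    · exact fun h => neg_lam hLT hα h
    · intro h
      have := neg_lam hLT hα h
      rwa [neg_neg] at this
end

section
/- Let L be a Lie Λ-torus and s ∈ Hom(Q,Λ) admissible for L. Then for t ∈ Hom(Q,Λ): t is admissible for the isotope L^(s) if and only if s + t is admissible for L; and in that case (L^(s))^(t) = L^(s+t). In particular, −s is admissible for L^(s) and (L^(s))^(−s) = L, so isotopy is an equivalence relation. -/
section
variable {k 𝒳 Λ L : Type*} [Field k] [CharZero k] [AddCommGroup 𝒳] [Module k 𝒳]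
  [DecidableEq 𝒳] [AddCommGroup Λ] [DecidableEq Λ] [LieRing L] [LieAlgebra k L]

open Classical in
/-- The grading of the isotope `L^(s)`: `(L^(s))_α^λ = L_α^{λ + s(α)}`, for
`s ∈ Hom(Q, Λ)` where `Q = ⟨Δ⟩` is the root lattice. -/
noncomputable def isoGrading (R : RootSystemIn k 𝒳) (g : 𝒳 → Λ → Submodule k L)
    (s : ↥(AddSubgroup.closure R.Δ) →+ Λ) : 𝒳 → Λ → Submodule k L :=
  fun α lam =>
    if h : α ∈ AddSubgroup.closure R.Δ then g α (lam + s ⟨α, h⟩) else ⊥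

/-- `s ∈ Hom(Q, Λ)` is admissible for the Lie torus `L`:
`s(α) ∈ Λ_α` for every indivisible nonzero root `α`. -/
def Admissible (R : RootSystemIn k 𝒳) (g : 𝒳 → Λ → Submodule k L)
    (s : ↥(AddSubgroup.closure R.Δ) →+ Λ) : Prop :=
  ∀ α, ∀ hα : α ∈ R.Δ, α ≠ 0 → (¬ ∃ γ ∈ R.Δ, α = (2 : k) • γ) →
    g α (s ⟨α, AddSubgroup.subset_closure hα⟩) ≠ ⊥

lemma isoGrading_pos {k 𝒳 Λ L : Type*} [Field k] [CharZero k] [AddCommGroup 𝒳]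
    [Module k 𝒳] [DecidableEq 𝒳] [AddCommGroup Λ] [DecidableEq Λ] [LieRing L]
    [LieAlgebra k L] (R : RootSystemIn k 𝒳) (g : 𝒳 → Λ → Submodule k L)
    (s : ↥(AddSubgroup.closure R.Δ) →+ Λ) {α : 𝒳} (h : α ∈ AddSubgroup.closure R.Δ)
    (lam : Λ) : isoGrading R g s α lam = g α (lam + s ⟨α, h⟩) := by
  simp only [isoGrading, dif_pos h]

/-- For `s` admissible for the Lie torus `L`: `t` is admissible for the isotope `L^(s)` iff
`s + t` is admissible for `L`, in which case `(L^(s))^(t) = L^(s+t)`; in particular `-s` is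
admissible for `L^(s)` and `(L^(s))^(-s) = L`. -/
theorem stmt16 (R : RootSystemIn k 𝒳) (g : 𝒳 → Λ → Submodule k L)
    (hLT : IsLieTorus R g) (s : ↥(AddSubgroup.closure R.Δ) →+ Λ)
    (hs : Admissible R g s) :
    (∀ t : ↥(AddSubgroup.closure R.Δ) →+ Λ,
      Admissible R (isoGrading R g s) t ↔ Admissible R g (s + t)) ∧
    (∀ t : ↥(AddSubgroup.closure R.Δ) →+ Λ,
      Admissible R (isoGrading R g s) t →
        isoGrading R (isoGrading R g s) t = isoGrading R g (s + t)) ∧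
    Admissible R (isoGrading R g s) (-s) ∧
    isoGrading R (isoGrading R g s) (-s) = g := by
  refine ⟨?_, ?_, ?_, ?_⟩
  · intro t
    constructor <;> intro h α hα h1 h2 <;> have H := h α hα h1 h2 <;>
      rw [isoGrading_pos R g s (AddSubgroup.subset_closure hα)] at * <;>
      simp only [AddMonoidHom.add_apply] at * <;>
      rwa [add_comm] at H
  · intro t _
    funext α lam
    by_cases h : α ∈ AddSubgroup.closure R.Δ
    · rw [isoGrading_pos _ _ _ h, isoGrading_pos _ _ _ h, isoGrading_pos _ _ _ h,
        AddMonoidHom.add_apply, add_assoc, add_comm (t ⟨α, h⟩)]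
    · simp [isoGrading, h]
  · intro α hα h1 h2
    rw [isoGrading_pos R g s (AddSubgroup.subset_closure hα)]
    simp only [AddMonoidHom.neg_apply, neg_add_cancel]
    exact hLT.lt2i α hα h1 h2
  · funext α lam
    by_cases h : α ∈ AddSubgroup.closure R.Δ
    · rw [isoGrading_pos _ _ _ h, isoGrading_pos _ _ _ h]
      simp
    · simp only [isoGrading, dif_neg h]
      by_contra hne
      exact h (AddSubgroup.subset_closure (hLT.supp_subset α lam (Ne.symm hne)))

end
end
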